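/- arXiv:0710.3877 — 8 statements merged into one kernel-verified Lean document; each statement's English description precedes it below -/
import Mathlib

section
/- Let G be a bipartite graph with vertex sets X and Y which is regular with density p, meaning that every vertex of X has degree p|Y| and every vertex of Y has degree p|X| (so G has p|X||Y| edges), and let α : ℂ^X → ℂ^Y be defined by αf(y) = ∑_{x∈X, xy∈E(G)} f(x). Then: (a) if c₂ ≥ 0 is such that every f : X → ℂ with ∑_{x∈X} f(x) = 0 satisfies ‖αf‖ ≤ c₂·|X|^{1/2}|Y|^{1/2}·‖f‖, then the number of labelled 4-cycles of G starting in X is at most (p⁴ + p·c₂²)·|X|²|Y|²; and (b) if c₁ ≥ 0 is such that the number of labelled 4-cycles of G starting in X is at most (p⁴ + c₁)·|X|²|Y|², then every f : X → ℂ with ∑_{x∈X} f(x) = 0 satisfies ‖αf‖ ≤ c₁^{1/4}·|X|^{1/2}|Y|^{1/2}·‖f‖. -/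
open Finset

set_option linter.unusedSectionVars false
set_option maxHeartbeats 1000000

section GowersAux

variable {X Y : Type} [Fintype X] [Fintype Y] [DecidableEq X] [DecidableEq Y]
  (E : Finset (X × Y))

/-- adjacency indicator of the bipartite graph `E` -/
def gowersAA (x : X) (y : Y) : ℝ := if (x, y) ∈ E then 1 else 0

lemma gowersAA_sq (x : X) (y : Y) : gowersAA E x y ^ 2 = gowersAA E x y := by
  unfold gowersAA; split <;> norm_num

/-- codegree of two X-vertices -/
noncomputable def gowersDD (x x' : X) : ℝ := ∑ y : Y, gowersAA E x y * gowersAA E x' y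

lemma sum_filter_eq_sum_gowersAA (y : Y) (f : X → ℂ) :
    ∑ x ∈ Finset.univ.filter (fun x : X => (x, y) ∈ E), f x
      = ∑ x : X, (gowersAA E x y : ℂ) * f x := by
  rw [Finset.sum_filter]
  refine Finset.sum_congr rfl fun x _ => ?_
  unfold gowersAA; split <;> simp

variable (p : ℝ)

lemma sum_gowersAA_right (hdX : ∀ x : X,
      ((Finset.univ.filter (fun y : Y => (x, y) ∈ E)).card : ℝ) = p * Fintype.card Y)
    (x : X) : ∑ y : Y, gowersAA E x y = p * Fintype.card Y := by
  rw [← hdX x, Finset.card_filter]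
  push_cast
  exact Finset.sum_congr rfl fun y _ => by unfold gowersAA; split <;> simp

lemma sum_gowersAA_left (hdY : ∀ y : Y,
      ((Finset.univ.filter (fun x : X => (x, y) ∈ E)).card : ℝ) = p * Fintype.card X)
    (y : Y) : ∑ x : X, gowersAA E x y = p * Fintype.card X := by
  rw [← hdY y, Finset.card_filter]
  push_cast
  exact Finset.sum_congr rfl fun x _ => by unfold gowersAA; split <;> simp

lemma gowers_expand_sq (v : Y → ℝ) (c : ℝ) :
    ∑ y : Y, (v y)^2
      = (∑ y : Y, (v y - c)^2) + 2*c*(∑ y : Y, v y) - (Fintype.card Y)*c^2 := by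
  have h : ∀ y : Y, (v y)^2 = (v y - c)^2 + 2*c*(v y) - c^2 := fun y => by ring
  rw [Finset.sum_congr rfl (fun y _ => h y), Finset.sum_sub_distrib, Finset.sum_add_distrib,
    ← Finset.mul_sum, Finset.sum_const, Finset.card_univ, nsmul_eq_mul]

/-- quadruple-sum form of the 4-cycle count -/
lemma gowers_card_cycles_eq :
    ((Finset.univ.filter (fun q : X × Y × X × Y =>
          (q.1, q.2.1) ∈ E ∧ (q.2.2.1, q.2.1) ∈ E ∧
          (q.2.2.1, q.2.2.2) ∈ E ∧ (q.1, q.2.2.2) ∈ E)).card : ℝ)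
    = ∑ x : X, ∑ y : Y, ∑ x' : X, ∑ y' : Y,
        gowersAA E x y * gowersAA E x' y * gowersAA E x' y' * gowersAA E x y' := by
  rw [Finset.card_filter]
  push_cast
  rw [Fintype.sum_prod_type]
  refine Finset.sum_congr rfl fun x _ => ?_
  rw [Fintype.sum_prod_type]
  refine Finset.sum_congr rfl fun y _ => ?_
  rw [Fintype.sum_prod_type]
  refine Finset.sum_congr rfl fun x' _ => ?_
  refine Finset.sum_congr rfl fun y' _ => ?_
  unfold gowersAA
  by_cases h1 : (x,y) ∈ E <;> by_cases h2 : (x',y) ∈ E <;>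
    by_cases h3 : (x',y') ∈ E <;> by_cases h4 : (x,y') ∈ E <;>
    simp [h1,h2,h3,h4]

lemma gowers_reorder_xy (t : X → Y → X → Y → ℝ) :
    ∑ x : X, ∑ y : Y, ∑ x' : X, ∑ y' : Y, t x y x' y'
      = ∑ y : Y, ∑ y' : Y, ∑ x : X, ∑ x' : X, t x y x' y' := by
  rw [Finset.sum_comm]
  refine Finset.sum_congr rfl fun y _ => ?_
  rw [show (∑ x : X, ∑ x' : X, ∑ y' : Y, t x y x' y')
      = ∑ x : X, ∑ y' : Y, ∑ x' : X, t x y x' y' from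
    Finset.sum_congr rfl fun x _ => Finset.sum_comm]
  rw [Finset.sum_comm]

/-- the 4-cycle count as a sum over pairs of Y-vertices of squared codegrees -/
lemma gowers_card_cycles_eq_e :
    ((Finset.univ.filter (fun q : X × Y × X × Y =>
          (q.1, q.2.1) ∈ E ∧ (q.2.2.1, q.2.1) ∈ E ∧
          (q.2.2.1, q.2.2.2) ∈ E ∧ (q.1, q.2.2.2) ∈ E)).card : ℝ)
    = ∑ y' : Y, ∑ y : Y, (∑ x : X, gowersAA E x y * gowersAA E x y') ^ 2 := by
  rw [gowers_card_cycles_eq, gowers_reorder_xy, Finset.sum_comm]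
  refine Finset.sum_congr rfl fun y' _ => Finset.sum_congr rfl fun y _ => ?_
  rw [sq, Finset.sum_mul_sum]
  refine Finset.sum_congr rfl fun x _ => Finset.sum_congr rfl fun x' _ => by ring

/-- the 4-cycle count as a sum over pairs of X-vertices of squared codegrees -/
lemma gowers_card_cycles_eq_d :
    ((Finset.univ.filter (fun q : X × Y × X × Y =>
          (q.1, q.2.1) ∈ E ∧ (q.2.2.1, q.2.1) ∈ E ∧
          (q.2.2.1, q.2.2.2) ∈ E ∧ (q.1, q.2.2.2) ∈ E)).card : ℝ)
    = ∑ x : X, ∑ x' : X, (gowersDD E x x') ^ 2 := by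
  rw [gowers_card_cycles_eq]
  rw [show (∑ x : X, ∑ y : Y, ∑ x' : X, ∑ y' : Y,
        gowersAA E x y * gowersAA E x' y * gowersAA E x' y' * gowersAA E x y')
      = ∑ x : X, ∑ x' : X, ∑ y : Y, ∑ y' : Y,
        gowersAA E x y * gowersAA E x' y * gowersAA E x' y' * gowersAA E x y' from
    Finset.sum_congr rfl fun x _ => Finset.sum_comm]
  refine Finset.sum_congr rfl fun x _ => Finset.sum_congr rfl fun x' _ => ?_
  unfold gowersDD
  rw [sq, Finset.sum_mul_sum]
  refine Finset.sum_congr rfl fun y _ => Finset.sum_congr rfl fun y' _ => by ring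

end GowersAux

/-- Theorem 2.8 (Gowers, Quasirandom Groups): for a regular bipartite graph
`G ⊆ X × Y` of density `p`, the quasirandomness (4-cycle) count and the singular
value bound for the adjacency map `α` on sum-zero functions are polynomially
equivalent, with the explicit constants `c₁ = p c₂²` and `c₂ = c₁^{1/4}`. -/
theorem regular_bipartite_quasirandom_iff_spectral
    (X Y : Type) [Fintype X] [Fintype Y] [DecidableEq X] [DecidableEq Y]
    (E : Finset (X × Y)) (p : ℝ)
    (hdX : ∀ x : X,
      ((Finset.univ.filter (fun y : Y => (x, y) ∈ E)).card : ℝ) = p * Fintype.card Y)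
    (hdY : ∀ y : Y,
      ((Finset.univ.filter (fun x : X => (x, y) ∈ E)).card : ℝ) = p * Fintype.card X) :
    (∀ c₂ : ℝ, 0 ≤ c₂ →
      (∀ f : X → ℂ, (∑ x : X, f x) = 0 →
        Real.sqrt (∑ y : Y, ‖∑ x ∈ Finset.univ.filter (fun x : X => (x, y) ∈ E), f x‖ ^ 2)
          ≤ c₂ * Real.sqrt (Fintype.card X) * Real.sqrt (Fintype.card Y) *
              Real.sqrt (∑ x : X, ‖f x‖ ^ 2)) →
      ((Finset.univ.filter (fun q : X × Y × X × Y =>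
          (q.1, q.2.1) ∈ E ∧ (q.2.2.1, q.2.1) ∈ E ∧
          (q.2.2.1, q.2.2.2) ∈ E ∧ (q.1, q.2.2.2) ∈ E)).card : ℝ)
        ≤ (p ^ 4 + p * c₂ ^ 2) * (Fintype.card X : ℝ) ^ 2 * (Fintype.card Y : ℝ) ^ 2)
    ∧
    (∀ c₁ : ℝ, 0 ≤ c₁ →
      ((Finset.univ.filter (fun q : X × Y × X × Y =>
          (q.1, q.2.1) ∈ E ∧ (q.2.2.1, q.2.1) ∈ E ∧
          (q.2.2.1, q.2.2.2) ∈ E ∧ (q.1, q.2.2.2) ∈ E)).card : ℝ)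
        ≤ (p ^ 4 + c₁) * (Fintype.card X : ℝ) ^ 2 * (Fintype.card Y : ℝ) ^ 2 →
      ∀ f : X → ℂ, (∑ x : X, f x) = 0 →
        Real.sqrt (∑ y : Y, ‖∑ x ∈ Finset.univ.filter (fun x : X => (x, y) ∈ E), f x‖ ^ 2)
          ≤ c₁ ^ ((1 : ℝ) / 4) * Real.sqrt (Fintype.card X) * Real.sqrt (Fintype.card Y) *
              Real.sqrt (∑ x : X, ‖f x‖ ^ 2)) := by
  constructor
  · -- Part (a): spectral bound implies 4-cycle bound
    intro c₂ hc₂ hα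
    set n : ℝ := (Fintype.card X : ℝ) with hn
    set m : ℝ := (Fintype.card Y : ℝ) with hm
    have hn0 : (0:ℝ) ≤ n := by positivity
    have hm0 : (0:ℝ) ≤ m := by positivity
    have main : ∀ y' : Y,
        ∑ y : Y, (∑ x : X, gowersAA E x y * gowersAA E x y')^2
          ≤ c₂^2 * n * m * (p*n - p^2*n) + p^4*n^2*m := by
      intro y'
      set g : X → ℂ := fun x => ((gowersAA E x y' - p : ℝ) : ℂ) with hg
      have hnr : ∀ r : ℝ, ‖(r:ℂ)‖^2 = r^2 := fun r => by
        rw [Complex.norm_real, Real.norm_eq_abs]; exact sq_abs r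
      have hcast : ∀ (v : X → ℝ), (((∑ x : X, v x : ℝ)) : ℂ) = ∑ x : X, ((v x : ℝ) : ℂ) :=
        fun v => by push_cast; rfl
      have hzero : (∑ x : X, (gowersAA E x y' - p)) = 0 := by
        rw [Finset.sum_sub_distrib, sum_gowersAA_left E p hdY, Finset.sum_const,
          Finset.card_univ, nsmul_eq_mul]
        ring
      have hgsum : (∑ x : X, g x) = 0 := by
        simp only [hg]
        rw [← hcast, hzero]
        simp
      have key := hα g hgsum
      have hL : ∀ y : Y, (‖∑ x ∈ Finset.univ.filter (fun x : X => (x, y) ∈ E), g x‖ ^ 2)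
          = ((∑ x : X, gowersAA E x y * gowersAA E x y') - p*(p*n))^2 := by
        intro y
        have hreal : ∑ x : X, gowersAA E x y * (gowersAA E x y' - p)
            = (∑ x : X, gowersAA E x y * gowersAA E x y') - p*(p*n) := by
          have h1 : ∀ x : X, gowersAA E x y * (gowersAA E x y' - p)
              = gowersAA E x y * gowersAA E x y' - p * gowersAA E x y := fun x => by ring
          rw [Finset.sum_congr rfl (fun x _ => h1 x), Finset.sum_sub_distrib,
            ← Finset.mul_sum, sum_gowersAA_left E p hdY y]
        rw [sum_filter_eq_sum_gowersAA]
        have h2 : ∑ x : X, (gowersAA E x y : ℂ) * g x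
            = (((∑ x : X, gowersAA E x y * (gowersAA E x y' - p)) : ℝ) : ℂ) := by
          rw [hcast]
          refine Finset.sum_congr rfl fun x _ => ?_
          simp only [hg]
          push_cast
          ring
        rw [h2, hreal, hnr]
      have hB : (∑ x : X, ‖g x‖ ^ 2) = p*n - p^2*n := by
        have h1 : ∀ x : X, ‖g x‖^2
            = gowersAA E x y' - 2*p*(gowersAA E x y') + p^2 := by
          intro x
          have h2 : ‖g x‖^2 = (gowersAA E x y' - p)^2 := by rw [hg]; exact hnr _
          rw [h2]
          have := gowersAA_sq E x y'
          nlinarith [this]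
        rw [Finset.sum_congr rfl (fun x _ => h1 x), Finset.sum_add_distrib,
          Finset.sum_sub_distrib, ← Finset.mul_sum, sum_gowersAA_left E p hdY y',
          Finset.sum_const, Finset.card_univ, nsmul_eq_mul]
        ring
      have hA0 : (0:ℝ)
          ≤ ∑ y : Y, ‖∑ x ∈ Finset.univ.filter (fun x : X => (x, y) ∈ E), g x‖ ^ 2 := by
        positivity
      have hB0 : (0:ℝ) ≤ ∑ x : X, ‖g x‖ ^ 2 := by positivity
      have hsq : (∑ y : Y, ‖∑ x ∈ Finset.univ.filter (fun x : X => (x, y) ∈ E), g x‖ ^ 2)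
          ≤ c₂^2 * n * m * (∑ x : X, ‖g x‖ ^ 2) := by
        calc (∑ y : Y, ‖∑ x ∈ Finset.univ.filter (fun x : X => (x, y) ∈ E), g x‖ ^ 2)
            = (Real.sqrt (∑ y : Y,
                ‖∑ x ∈ Finset.univ.filter (fun x : X => (x, y) ∈ E), g x‖ ^ 2))^2 :=
              (Real.sq_sqrt hA0).symm
          _ ≤ (c₂ * Real.sqrt n * Real.sqrt m * Real.sqrt (∑ x : X, ‖g x‖ ^ 2))^2 :=
              pow_le_pow_left₀ (Real.sqrt_nonneg _) key 2
          _ = c₂^2 * n * m * (∑ x : X, ‖g x‖ ^ 2) := by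
              rw [mul_pow, mul_pow, mul_pow, Real.sq_sqrt hn0, Real.sq_sqrt hm0,
                Real.sq_sqrt hB0]
      rw [Finset.sum_congr rfl (fun y _ => hL y), hB] at hsq
      have hesum : (∑ y : Y, ∑ x : X, gowersAA E x y * gowersAA E x y') = p*n * (p*m) := by
        rw [Finset.sum_comm]
        have h1 : ∀ x : X, (∑ y : Y, gowersAA E x y * gowersAA E x y')
            = gowersAA E x y' * (p*m) := by
          intro x
          rw [show (∑ y : Y, gowersAA E x y * gowersAA E x y')
              = gowersAA E x y' * ∑ y : Y, gowersAA E x y from by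
            rw [Finset.mul_sum]; exact Finset.sum_congr rfl fun y _ => by ring]
          rw [sum_gowersAA_right E p hdX x]
        rw [Finset.sum_congr rfl (fun x _ => h1 x), ← Finset.sum_mul,
          sum_gowersAA_left E p hdY y']
      have hexp := gowers_expand_sq
        (fun y : Y => ∑ x : X, gowersAA E x y * gowersAA E x y') (p*(p*n))
      rw [hesum] at hexp
      rw [hexp]
      rw [← hm]
      nlinarith [hsq]
    rw [gowers_card_cycles_eq_e]
    calc ∑ y' : Y, ∑ y : Y, (∑ x : X, gowersAA E x y * gowersAA E x y') ^ 2
        ≤ ∑ y' : Y, (c₂^2 * n * m * (p*n - p^2*n) + p^4*n^2*m) :=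
          Finset.sum_le_sum fun y' _ => main y'
      _ = m * (c₂^2 * n * m * (p*n - p^2*n) + p^4*n^2*m) := by
          rw [Finset.sum_const, Finset.card_univ, nsmul_eq_mul, ← hm]
      _ ≤ (p ^ 4 + p * c₂ ^ 2) * n ^ 2 * m ^ 2 := by
          nlinarith [sq_nonneg (c₂*p*n*m), mul_nonneg hn0 hm0, sq_nonneg (c₂*n*m)]
  · -- Part (b): 4-cycle bound implies spectral bound
    intro c₁ hc₁ hC f hf
    set n : ℝ := (Fintype.card X : ℝ) with hn
    set m : ℝ := (Fintype.card Y : ℝ) with hm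
    have hn0 : (0:ℝ) ≤ n := by positivity
    have hm0 : (0:ℝ) ≤ m := by positivity
    have hnormsq : ∀ z : ℂ, ‖z‖^2 = (z * (starRingEnd ℂ) z).re := by
      intro z
      rw [Complex.mul_conj]
      rw [Complex.ofReal_re, Complex.normSq_eq_norm_sq]
    set B : X → X → ℝ := fun x x' => gowersDD E x x' - p^2*m with hB
    have hCd := gowers_card_cycles_eq_d (E := E)
    have hddsum : ∑ x : X, ∑ x' : X, gowersDD E x x' = p^2*n^2*m := by
      unfold gowersDD
      rw [show (∑ x : X, ∑ x' : X, ∑ y : Y, gowersAA E x y * gowersAA E x' y)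
          = ∑ x : X, ∑ y : Y, ∑ x' : X, gowersAA E x y * gowersAA E x' y from
        Finset.sum_congr rfl fun x _ => Finset.sum_comm]
      rw [Finset.sum_comm]
      have h1 : ∀ y : Y, (∑ x : X, ∑ x' : X, gowersAA E x y * gowersAA E x' y)
          = (p*n)*(p*n) := by
        intro y
        rw [← Finset.sum_mul_sum, sum_gowersAA_left E p hdY y]
      rw [Finset.sum_congr rfl (fun y _ => h1 y), Finset.sum_const, Finset.card_univ,
        nsmul_eq_mul, ← hm]
      ring
    have hT : ∑ x : X, ∑ x' : X, (B x x')^2 ≤ c₁ * n^2 * m^2 := by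
      have hexp : ∀ x x' : X, (B x x')^2
          = (gowersDD E x x')^2 - 2*(p^2*m)*(gowersDD E x x') + (p^2*m)^2 := by
        intro x x'; rw [hB]; ring
      have h2 : ∑ x : X, ∑ x' : X, (B x x')^2
          = (∑ x : X, ∑ x' : X, (gowersDD E x x')^2)
            - 2*(p^2*m)*(∑ x : X, ∑ x' : X, gowersDD E x x') + n^2*(p^2*m)^2 := by
        simp_rw [hexp, Finset.sum_add_distrib, Finset.sum_sub_distrib, ← Finset.mul_sum,
          Finset.sum_const, Finset.card_univ, nsmul_eq_mul, ← hn]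
        ring
      rw [h2, hddsum, ← hCd]
      nlinarith [hC]
    have hT0 : (0:ℝ) ≤ ∑ x : X, ∑ x' : X, (B x x')^2 := by positivity
    set S : ℝ := ∑ y : Y, ‖∑ x ∈ Finset.univ.filter (fun x : X => (x, y) ∈ E), f x‖ ^ 2
      with hS
    set Sg : ℝ := ∑ x : X, ‖f x‖ ^ 2 with hSg
    have hSg0 : (0:ℝ) ≤ Sg := by positivity
    have stepA : S = (∑ x : X, ∑ x' : X,
        f x * (starRingEnd ℂ) (f x') * ((gowersDD E x x' : ℝ) : ℂ)).re := by
      rw [hS]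
      have h1 : ∀ y : Y, ‖∑ x ∈ Finset.univ.filter (fun x : X => (x, y) ∈ E), f x‖ ^ 2
          = ((∑ x : X, ∑ x' : X, f x * (starRingEnd ℂ) (f x')
              * ((gowersAA E x y : ℝ) : ℂ) * ((gowersAA E x' y : ℝ) : ℂ))).re := by
        intro y
        rw [sum_filter_eq_sum_gowersAA, hnormsq]
        congr 1
        rw [map_sum, Finset.sum_mul_sum]
        refine Finset.sum_congr rfl fun x _ => Finset.sum_congr rfl fun x' _ => ?_
        rw [map_mul, Complex.conj_ofReal]
        ring
      rw [Finset.sum_congr rfl (fun y _ => h1 y), ← Complex.re_sum]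
      congr 1
      rw [show (∑ y : Y, ∑ x : X, ∑ x' : X,
            f x * (starRingEnd ℂ) (f x') * ((gowersAA E x y : ℝ) : ℂ)
              * ((gowersAA E x' y : ℝ) : ℂ))
          = ∑ x : X, ∑ x' : X, ∑ y : Y,
            f x * (starRingEnd ℂ) (f x') * ((gowersAA E x y : ℝ) : ℂ)
              * ((gowersAA E x' y : ℝ) : ℂ) from ?_]
      · refine Finset.sum_congr rfl fun x _ => Finset.sum_congr rfl fun x' _ => ?_
        rw [show (∑ y : Y, f x * (starRingEnd ℂ) (f x') * ((gowersAA E x y : ℝ) : ℂ)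
              * ((gowersAA E x' y : ℝ) : ℂ))
            = f x * (starRingEnd ℂ) (f x')
              * ∑ y : Y, ((gowersAA E x y : ℝ) : ℂ) * ((gowersAA E x' y : ℝ) : ℂ) from by
          rw [Finset.mul_sum]; exact Finset.sum_congr rfl fun y _ => by ring]
        congr 1
        unfold gowersDD
        push_cast
        rfl
      · rw [Finset.sum_comm]
        exact Finset.sum_congr rfl fun x _ => Finset.sum_comm
    have stepB : S = (∑ x : X, ∑ x' : X,
        f x * (starRingEnd ℂ) (f x') * ((B x x' : ℝ) : ℂ)).re := by
      rw [stepA]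
      congr 1
      have hsplit : ∀ x x' : X, f x * (starRingEnd ℂ) (f x') * ((gowersDD E x x' : ℝ) : ℂ)
          = f x * (starRingEnd ℂ) (f x') * ((B x x' : ℝ) : ℂ)
            + f x * (starRingEnd ℂ) (f x') * ((p^2*m : ℝ) : ℂ) := by
        intro x x'; rw [hB]; push_cast; ring
      simp_rw [hsplit, Finset.sum_add_distrib]
      have hzero : (∑ x : X, ∑ x' : X,
          f x * (starRingEnd ℂ) (f x') * ((p^2*m : ℝ) : ℂ)) = 0 := by
        calc (∑ x : X, ∑ x' : X, f x * (starRingEnd ℂ) (f x') * ((p^2*m : ℝ) : ℂ))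
            = ∑ x : X, f x * ∑ x' : X, (starRingEnd ℂ) (f x') * ((p^2*m : ℝ) : ℂ) := by
              refine Finset.sum_congr rfl fun x _ => ?_
              rw [Finset.mul_sum]
              exact Finset.sum_congr rfl fun x' _ => by ring
          _ = (∑ x : X, f x) * (∑ x' : X, (starRingEnd ℂ) (f x') * ((p^2*m : ℝ) : ℂ)) := by
              rw [Finset.sum_mul]
          _ = 0 := by rw [hf, zero_mul]
      rw [hzero, add_zero]
    have stepC : S ≤ Sg * Real.sqrt (∑ x : X, ∑ x' : X, (B x x')^2) := by
      have h1 : S ≤ ∑ x : X, ∑ x' : X, ‖f x‖ * ‖f x'‖ * |B x x'| := by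
        rw [stepB]
        calc (∑ x : X, ∑ x' : X, f x * (starRingEnd ℂ) (f x') * ((B x x' : ℝ) : ℂ)).re
            ≤ ‖∑ x : X, ∑ x' : X, f x * (starRingEnd ℂ) (f x') * ((B x x' : ℝ) : ℂ)‖ :=
              Complex.re_le_norm _
          _ ≤ ∑ x : X, ‖∑ x' : X, f x * (starRingEnd ℂ) (f x') * ((B x x' : ℝ) : ℂ)‖ :=
              norm_sum_le _ _
          _ ≤ ∑ x : X, ∑ x' : X, ‖f x * (starRingEnd ℂ) (f x') * ((B x x' : ℝ) : ℂ)‖ :=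
              Finset.sum_le_sum fun x _ => norm_sum_le _ _
          _ = ∑ x : X, ∑ x' : X, ‖f x‖ * ‖f x'‖ * |B x x'| := by
              refine Finset.sum_congr rfl fun x _ => Finset.sum_congr rfl fun x' _ => ?_
              rw [norm_mul, norm_mul, RCLike.norm_conj, Complex.norm_real, Real.norm_eq_abs]
      refine h1.trans ?_
      have h2 : (∑ q : X × X, (‖f q.1‖ * ‖f q.2‖) * |B q.1 q.2|)^2
          ≤ (∑ q : X × X, (‖f q.1‖ * ‖f q.2‖)^2) * (∑ q : X × X, |B q.1 q.2|^2) :=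
        Finset.sum_mul_sq_le_sq_mul_sq univ _ _
      have e1 : (∑ q : X × X, (‖f q.1‖ * ‖f q.2‖)^2) = Sg^2 := by
        rw [Fintype.sum_prod_type, hSg, sq, Finset.sum_mul_sum]
        exact Finset.sum_congr rfl fun x _ => Finset.sum_congr rfl fun x' _ => by ring
      have e2 : (∑ q : X × X, |B q.1 q.2|^2) = ∑ x : X, ∑ x' : X, (B x x')^2 := by
        rw [Fintype.sum_prod_type]
        exact Finset.sum_congr rfl fun x _ => Finset.sum_congr rfl fun x' _ => sq_abs _
      have e3 : (∑ x : X, ∑ x' : X, ‖f x‖ * ‖f x'‖ * |B x x'|)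
          = ∑ q : X × X, (‖f q.1‖ * ‖f q.2‖) * |B q.1 q.2| := by
        rw [Fintype.sum_prod_type]
      rw [e3]
      rw [e1, e2] at h2
      have h4 : (0:ℝ) ≤ ∑ q : X × X, (‖f q.1‖ * ‖f q.2‖) * |B q.1 q.2| := by positivity
      calc (∑ q : X × X, (‖f q.1‖ * ‖f q.2‖) * |B q.1 q.2|)
          = Real.sqrt ((∑ q : X × X, (‖f q.1‖ * ‖f q.2‖) * |B q.1 q.2|)^2) :=
            (Real.sqrt_sq h4).symm
        _ ≤ Real.sqrt (Sg^2 * (∑ x : X, ∑ x' : X, (B x x')^2)) := Real.sqrt_le_sqrt h2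
        _ = Sg * Real.sqrt (∑ x : X, ∑ x' : X, (B x x')^2) := by
            rw [Real.sqrt_mul (by positivity), Real.sqrt_sq hSg0]
    have hsqrtT : Real.sqrt (∑ x : X, ∑ x' : X, (B x x')^2) ≤ Real.sqrt c₁ * n * m := by
      have heq : c₁ * n^2 * m^2 = (Real.sqrt c₁ * n * m)^2 := by
        rw [mul_pow, mul_pow, Real.sq_sqrt hc₁]
      calc Real.sqrt (∑ x : X, ∑ x' : X, (B x x')^2)
          ≤ Real.sqrt (c₁ * n^2 * m^2) := Real.sqrt_le_sqrt hT
        _ = Real.sqrt ((Real.sqrt c₁ * n * m)^2) := by rw [heq]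
        _ = Real.sqrt c₁ * n * m := Real.sqrt_sq (by positivity)
    have hfin : S ≤ Real.sqrt c₁ * n * m * Sg := by
      calc S ≤ Sg * Real.sqrt (∑ x : X, ∑ x' : X, (B x x')^2) := stepC
        _ ≤ Sg * (Real.sqrt c₁ * n * m) := mul_le_mul_of_nonneg_left hsqrtT hSg0
        _ = Real.sqrt c₁ * n * m * Sg := by ring
    calc Real.sqrt S ≤ Real.sqrt (Real.sqrt c₁ * n * m * Sg) := Real.sqrt_le_sqrt hfin
      _ = Real.sqrt (Real.sqrt c₁) * Real.sqrt n * Real.sqrt m * Real.sqrt Sg := by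
          rw [Real.sqrt_mul (by positivity), Real.sqrt_mul (by positivity),
            Real.sqrt_mul (Real.sqrt_nonneg c₁)]
      _ = c₁ ^ ((1:ℝ)/4) * Real.sqrt n * Real.sqrt m * Real.sqrt Sg := by
          rw [show Real.sqrt (Real.sqrt c₁) = c₁ ^ ((1:ℝ)/4) from by
            rw [Real.sqrt_eq_rpow, Real.sqrt_eq_rpow, ← Real.rpow_mul hc₁]; norm_num]
end

section
/- Let q be a prime power and let PSL₂(q) denote the quotient of the group SL₂(F_q) of 2×2 matrices over the field F_q with determinant 1 by its center. Then every nontrivial complex representation of PSL₂(q) has dimension at least (q−1)/2. -/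
open Matrix

namespace PSL2Aux

variable {F : Type} [Field F]

/-- Upper unipotent. -/
def T (b : F) : Matrix.SpecialLinearGroup (Fin 2) F :=
  ⟨!![1, b; 0, 1], by simp [Matrix.det_fin_two_of]⟩

/-- Lower unipotent. -/
def Lo (c : F) : Matrix.SpecialLinearGroup (Fin 2) F :=
  ⟨!![1, 0; c, 1], by simp [Matrix.det_fin_two_of]⟩

/-- Weyl element. -/
def W : Matrix.SpecialLinearGroup (Fin 2) F :=
  ⟨!![0, 1; -1, 0], by simp [Matrix.det_fin_two_of]⟩

/-- Diagonal torus element. -/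
def Dg (t : Fˣ) : Matrix.SpecialLinearGroup (Fin 2) F :=
  ⟨!![(t : F), 0; 0, ((t : F))⁻¹], by
    simp [Matrix.det_fin_two_of, mul_inv_cancel₀ (Units.ne_zero t)]⟩

lemma T_mul (b c : F) : T b * T c = T (b + c) := by
  apply Subtype.ext
  rw [Matrix.SpecialLinearGroup.coe_mul]
  show !![1, b; 0, 1] * !![1, c; 0, 1] = !![1, b + c; 0, 1]
  ext i j
  fin_cases i <;> fin_cases j <;>
    simp [Matrix.mul_apply, Fin.sum_univ_two, add_comm]

lemma T_zero : (T (0 : F)) = 1 := by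
  apply Subtype.ext
  show !![1, (0:F); 0, 1] = 1
  rw [Matrix.one_fin_two]

lemma Lo_W (c : F) : Lo c * W = W * T (-c) := by
  apply Subtype.ext
  rw [Matrix.SpecialLinearGroup.coe_mul, Matrix.SpecialLinearGroup.coe_mul]
  show !![1, 0; c, 1] * !![0, 1; -1, 0] = !![0, 1; -1, 0] * !![1, -c; 0, 1]
  ext i j
  fin_cases i <;> fin_cases j <;>
    simp [Matrix.mul_apply, Fin.sum_univ_two]

lemma Dg_T (t : Fˣ) (b : F) : Dg t * T b = T ((t : F) * (t : F) * b) * Dg t := by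
  apply Subtype.ext
  rw [Matrix.SpecialLinearGroup.coe_mul, Matrix.SpecialLinearGroup.coe_mul]
  show !![(t : F), 0; 0, ((t : F))⁻¹] * !![1, b; 0, 1] =
    !![1, (t : F) * (t : F) * b; 0, 1] * !![(t : F), 0; 0, ((t : F))⁻¹]
  have ht : (t : F) ≠ 0 := Units.ne_zero t
  ext i j
  fin_cases i <;> fin_cases j <;>
    simp [Matrix.mul_apply, Fin.sum_univ_two] <;> field_simp <;> ring

lemma Dg_mul (s t : Fˣ) : Dg s * Dg t = Dg (s * t) := by
  apply Subtype.ext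
  rw [Matrix.SpecialLinearGroup.coe_mul]
  show !![(s : F), 0; 0, ((s : F))⁻¹] * !![(t : F), 0; 0, ((t : F))⁻¹] =
    !![((s*t : Fˣ) : F), 0; 0, (((s*t : Fˣ) : F))⁻¹]
  ext i j
  fin_cases i <;> fin_cases j <;>
    simp [Matrix.mul_apply, Fin.sum_univ_two, Units.val_mul, _root_.mul_inv_rev, mul_comm]

lemma Dg_one : (Dg (1 : Fˣ)) = 1 := by
  apply Subtype.ext
  show !![((1:Fˣ) : F), 0; 0, (((1:Fˣ) : F))⁻¹] = 1
  rw [Matrix.one_fin_two]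
  simp

/-- If a homomorphism from `SL₂(F)` kills all upper unipotents, it is trivial. -/
lemma eq_one_of_T {G' : Type*} [Group G'] (f : Matrix.SpecialLinearGroup (Fin 2) F →* G')
    (h : ∀ b : F, f (T b) = 1) : ∀ g, f g = 1 := by
  have hLo : ∀ c : F, f (Lo c) = 1 := by
    intro c
    have := congrArg f (Lo_W c)
    rw [_root_.map_mul, _root_.map_mul, h] at this
    have h2 : f (Lo c) * f W = f W := by rw [this, mul_one]
    exact mul_right_cancel (h2.trans (one_mul (f W)).symm)
  have case1 : ∀ g : Matrix.SpecialLinearGroup (Fin 2) F,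
      (g : Matrix (Fin 2) (Fin 2) F) 1 0 ≠ 0 → f g = 1 := by
    intro g hc
    set a := (g : Matrix (Fin 2) (Fin 2) F) 0 0 with ha
    set b := (g : Matrix (Fin 2) (Fin 2) F) 0 1 with hb
    set c := (g : Matrix (Fin 2) (Fin 2) F) 1 0 with hcdef
    set dd := (g : Matrix (Fin 2) (Fin 2) F) 1 1 with hd
    have hdet : a * dd - b * c = 1 := by
      have := g.2
      rwa [Matrix.det_fin_two] at this
    have hg : g = T ((a - 1) / c) * Lo c * T ((dd - 1) / c) := by
      apply Subtype.ext
      rw [Matrix.SpecialLinearGroup.coe_mul, Matrix.SpecialLinearGroup.coe_mul]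
      have hgm : (g : Matrix (Fin 2) (Fin 2) F) = !![a, b; c, dd] := by
        rw [ha, hb, hcdef, hd]; exact Matrix.eta_fin_two _
      rw [hgm]
      show !![a, b; c, dd] =
        !![1, (a - 1) / c; 0, 1] * !![1, 0; c, 1] * !![1, (dd - 1) / c; 0, 1]
      ext i j
      fin_cases i <;> fin_cases j <;>
        simp [Matrix.mul_apply, Fin.sum_univ_two] <;> field_simp <;> ring_nf
      · linear_combination -hdet
    rw [hg, _root_.map_mul, _root_.map_mul, h, hLo, h, one_mul, one_mul]
  intro g
  by_cases hc : (g : Matrix (Fin 2) (Fin 2) F) 1 0 ≠ 0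
  · exact case1 g hc
  · push_neg at hc
    have hdet : (g : Matrix (Fin 2) (Fin 2) F) 0 0 * (g : Matrix (Fin 2) (Fin 2) F) 1 1 -
        (g : Matrix (Fin 2) (Fin 2) F) 0 1 * (g : Matrix (Fin 2) (Fin 2) F) 1 0 = 1 := by
      have := g.2; rwa [Matrix.det_fin_two] at this
    have hd : (g : Matrix (Fin 2) (Fin 2) F) 1 1 ≠ 0 := by
      intro h11
      rw [hc, h11] at hdet
      simp at hdet
    have h2 : ((g * Lo 1 : Matrix.SpecialLinearGroup (Fin 2) F) :
        Matrix (Fin 2) (Fin 2) F) 1 0 ≠ 0 := by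
      rw [Matrix.SpecialLinearGroup.coe_mul]
      have : ((g : Matrix (Fin 2) (Fin 2) F) * (Lo (1:F) : Matrix (Fin 2) (Fin 2) F)) 1 0 =
          (g : Matrix (Fin 2) (Fin 2) F) 1 1 := by
        simp [Lo, Matrix.mul_apply, Fin.sum_univ_two, hc]
      rw [this]; exact hd
    have h3 := case1 (g * Lo 1) h2
    rw [_root_.map_mul, hLo, mul_one] at h3
    exact h3

end PSL2Aux

open PSL2Aux

/-- Theorem 3.1 (Frobenius; Gowers, Quasirandom Groups): every nontrivial complex
representation of `PSL₂(q)` has dimension at least `(q - 1) / 2`. -/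
theorem psl2_min_rep_dimension
    (q : ℕ) (hq : IsPrimePow q)
    (F : Type) [Field F] [Fintype F] (hF : Fintype.card F = q)
    (d : ℕ)
    (ρ : (Matrix.SpecialLinearGroup (Fin 2) F ⧸
            Subgroup.center (Matrix.SpecialLinearGroup (Fin 2) F)) →*
          Matrix.GeneralLinearGroup (Fin d) ℂ)
    (hnt : ∃ g, ρ g ≠ 1) :
    ((q : ℝ) - 1) / 2 ≤ (d : ℝ) := by
  classical
  set Mat := Matrix (Fin d) (Fin d) ℂ with hMat
  let π := QuotientGroup.mk' (Subgroup.center (Matrix.SpecialLinearGroup (Fin 2) F))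
  let Φ : Matrix.SpecialLinearGroup (Fin 2) F →* Mat :=
    (Units.coeHom Mat).comp (ρ.comp π)
  -- a nontrivial additive character of F with values in ℂ
  have hexp : NeZero ((Monoid.exponent (Multiplicative F) : ℂ)) :=
    ⟨Nat.cast_ne_zero.mpr Monoid.exponent_ne_zero_of_finite⟩
  have h1ne : (Multiplicative.ofAdd (1 : F)) ≠ 1 := by simp
  obtain ⟨φ, hφ⟩ := CommGroup.exists_apply_ne_one_of_hasEnoughRootsOfUnity
    (Multiplicative F) ℂ h1ne
  let ψ : F → ℂ := fun x => ((φ (Multiplicative.ofAdd x) : ℂˣ) : ℂ)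
  have ψadd : ∀ x y : F, ψ (x + y) = ψ x * ψ y := by
    intro x y
    show ((φ (Multiplicative.ofAdd (x + y)) : ℂˣ) : ℂ) = _
    rw [show Multiplicative.ofAdd (x + y) =
      Multiplicative.ofAdd x * Multiplicative.ofAdd y from rfl, _root_.map_mul, Units.val_mul]
  have ψ0 : ψ (0 : F) = 1 := by
    show ((φ (Multiplicative.ofAdd (0 : F)) : ℂˣ) : ℂ) = 1
    rw [show Multiplicative.ofAdd (0 : F) = 1 from rfl, _root_.map_one, Units.val_one]
  have ψinv : ∀ x : F, ψ (-x) * ψ x = 1 := by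
    intro x; rw [← ψadd, neg_add_cancel, ψ0]
  have ψ1 : ψ (1 : F) ≠ 1 := by
    intro h; exact hφ (Units.ext h)
  have hsum0 : ∑ x : F, ψ x = 0 := by
    have key : ψ 1 * ∑ x : F, ψ x = ∑ x : F, ψ x := by
      rw [Finset.mul_sum]
      calc ∑ x : F, ψ 1 * ψ x = ∑ x : F, ψ (1 + x) :=
            Finset.sum_congr rfl fun x _ => (ψadd 1 x).symm
        _ = ∑ x : F, ψ x :=
            Fintype.sum_equiv (Equiv.addLeft (1 : F)) _ _ fun x => rfl
    have h2 : (ψ 1 - 1) * ∑ x : F, ψ x = 0 := by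
      rw [sub_mul, one_mul, key, sub_self]
    rcases mul_eq_zero.mp h2 with h | h
    · exact absurd (sub_eq_zero.mp h) ψ1
    · exact h
  have hsumc : ∀ c : F, c ≠ 0 → ∑ x : F, ψ (c * x) = 0 := by
    intro c hc
    rw [← hsum0]
    exact Fintype.sum_equiv (Equiv.mulLeft₀ c hc) _ _ fun x => rfl
  -- basic facts about q
  have hq0 : 0 < q := hF ▸ Fintype.card_pos
  have hqC : (q : ℂ) ≠ 0 := Nat.cast_ne_zero.mpr hq0.ne'
  -- the projections onto character spaces
  let P : F → Mat := fun a => (q : ℂ)⁻¹ • ∑ b : F, ψ (-(a * b)) • Φ (T b)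
  have hPdef : ∀ a : F, P a = (q : ℂ)⁻¹ • ∑ b : F, ψ (-(a * b)) • Φ (T b) :=
    fun a => rfl
  have hTmul : ∀ b c : F, Φ (T b) * Φ (T c) = Φ (T (b + c)) := by
    intro b c; rw [← _root_.map_mul, T_mul]
  have hT0 : Φ (T (0 : F)) = 1 := by rw [T_zero, _root_.map_one]
  have hUP : ∀ b a : F, Φ (T b) * P a = ψ (a * b) • P a := by
    intro b a
    have hS : ∀ x : F, Φ (T b) * (ψ (-(a * x)) • Φ (T x)) = ψ (-(a * x)) • Φ (T (b + x)) := by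
      intro x; rw [mul_smul_comm, hTmul]
    calc Φ (T b) * P a
        = (q : ℂ)⁻¹ • ∑ c : F, Φ (T b) * (ψ (-(a * c)) • Φ (T c)) := by
          rw [hPdef a, Matrix.mul_smul, Finset.mul_sum]
      _ = (q : ℂ)⁻¹ • ∑ c : F, ψ (-(a * c)) • Φ (T (b + c)) := by
          exact congrArg _ (Finset.sum_congr rfl fun c _ => hS c)
      _ = (q : ℂ)⁻¹ • ∑ s : F, (ψ (a * b) * ψ (-(a * s))) • Φ (T s) := by
          congr 1
          apply Fintype.sum_equiv (Equiv.addLeft b)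
          intro c
          show ψ (-(a * c)) • Φ (T (b + c)) = (ψ (a * b) * ψ (-(a * (b + c)))) • Φ (T (b + c))
          congr 1
          rw [← ψadd]
          congr 1
          ring
      _ = ψ (a * b) • P a := by
          rw [hPdef a]
          rw [show ∑ s : F, (ψ (a * b) * ψ (-(a * s))) • Φ (T s)
              = ψ (a * b) • ∑ s : F, ψ (-(a * s)) • Φ (T s) from by
            rw [Finset.smul_sum]
            exact Finset.sum_congr rfl fun s _ => mul_smul _ _ _]
          rw [smul_comm]
  have hPidem : ∀ a : F, P a * P a = P a := by
    intro a
    nth_rewrite 1 [hPdef a]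
    rw [Matrix.smul_mul, Finset.sum_mul]
    have hterm : ∀ b : F, (ψ (-(a * b)) • Φ (T b)) * P a = P a := by
      intro b
      rw [Matrix.smul_mul, hUP, smul_smul, ψinv, one_smul]
    rw [Finset.sum_congr rfl fun b _ => hterm b]
    rw [Finset.sum_const, Finset.card_univ, hF, ← Nat.cast_smul_eq_nsmul ℂ,
      smul_smul, inv_mul_cancel₀ hqC, one_smul]
  have hsumP : ∑ a : F, P a = 1 := by
    rw [Finset.sum_congr rfl fun (a : F) _ => hPdef a]
    rw [← Finset.smul_sum, Finset.sum_comm]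
    have hterm : ∀ b : F, ∑ a : F, ψ (-(a * b)) • Φ (T b) =
        (∑ a : F, ψ (-(a * b))) • Φ (T b) := fun b => (Finset.sum_smul).symm
    rw [Finset.sum_congr rfl fun b _ => hterm b]
    rw [Finset.sum_eq_single (0 : F)]
    · have : ∑ a : F, ψ (-(a * 0)) = (q : ℂ) := by
        simp only [mul_zero, neg_zero, ψ0]
        rw [Finset.sum_const, Finset.card_univ, hF, nsmul_eq_mul, mul_one]
      rw [this, hT0, smul_smul, inv_mul_cancel₀ hqC, one_smul]
    · intro b _ hb0
      have : ∑ a : F, ψ (-(a * b)) = 0 := by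
        rw [← hsumc (-b) (neg_ne_zero.mpr hb0)]
        exact Finset.sum_congr rfl fun a _ => by rw [show -(a * b) = -b * a by ring]
      rw [this, zero_smul]
    · intro h; exact absurd (Finset.mem_univ _) h
  have hUsum : ∀ b : F, Φ (T b) = ∑ a : F, ψ (a * b) • P a := by
    intro b
    conv_lhs => rw [← mul_one (Φ (T b)), ← hsumP]
    rw [Finset.mul_sum]
    exact Finset.sum_congr rfl fun a _ => hUP b a
  -- conjugation invariance of the traces
  have hDmulinv : ∀ t : Fˣ, Φ (Dg t) * Φ (Dg t⁻¹) = 1 ∧ Φ (Dg t⁻¹) * Φ (Dg t) = 1 := by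
    intro t
    constructor
    · rw [← _root_.map_mul, Dg_mul, mul_inv_cancel, Dg_one, _root_.map_one]
    · rw [← _root_.map_mul, Dg_mul, inv_mul_cancel, Dg_one, _root_.map_one]
  have hPconj : ∀ (t : Fˣ) (a : F),
      Matrix.trace (P (a * ((t : F) * (t : F))⁻¹)) = Matrix.trace (P a) := by
    intro t a
    have hc2 : (t : F) * (t : F) ≠ 0 := mul_ne_zero (Units.ne_zero t) (Units.ne_zero t)
    have key : Φ (Dg t) * P a = P (a * ((t : F) * (t : F))⁻¹) * Φ (Dg t) := by
      rw [hPdef a, hPdef (a * ((t : F) * (t : F))⁻¹)]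
      rw [Matrix.mul_smul, Matrix.smul_mul, Finset.mul_sum, Finset.sum_mul]
      congr 1
      apply Fintype.sum_equiv (Equiv.mulLeft₀ ((t : F) * (t : F)) hc2)
      intro b
      rw [mul_smul_comm, smul_mul_assoc, ← _root_.map_mul, Dg_T, _root_.map_mul]
      show ψ (-(a * b)) • (Φ (T ((t:F) * (t:F) * b)) * Φ (Dg t)) =
        ψ (-(a * ((t:F) * (t:F))⁻¹ * (Equiv.mulLeft₀ ((t:F) * (t:F)) hc2 b))) •
          (Φ (T (Equiv.mulLeft₀ ((t:F) * (t:F)) hc2 b)) * Φ (Dg t))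
      have hE : (Equiv.mulLeft₀ ((t:F) * (t:F)) hc2 b) = (t:F) * (t:F) * b := rfl
      rw [hE]
      congr 2
      field_simp
    calc Matrix.trace (P (a * ((t : F) * (t : F))⁻¹))
        = Matrix.trace (P (a * ((t : F) * (t : F))⁻¹) * (Φ (Dg t) * Φ (Dg t⁻¹))) := by
          rw [(hDmulinv t).1, mul_one]
      _ = Matrix.trace ((Φ (Dg t) * P a) * Φ (Dg t⁻¹)) := by rw [← mul_assoc, ← key]
      _ = Matrix.trace (Φ (Dg t⁻¹) * (Φ (Dg t) * P a)) := by
          rw [Matrix.trace_mul_comm]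
      _ = Matrix.trace (P a) := by rw [← mul_assoc, (hDmulinv t).2, one_mul]
  -- the trace of each idempotent P a is a natural number (its rank)
  have hrank : ∀ a : F, ∃ r : ℕ, Matrix.trace (P a) = r ∧ (P a ≠ 0 → 1 ≤ r) := by
    intro a
    set f := Matrix.toLin' (P a) with hf
    have hff : f ∘ₗ f = f := by
      rw [hf, ← Matrix.toLin'_mul, hPidem]
    have hproj : LinearMap.IsProj (LinearMap.range f) f := by
      refine ⟨fun x => LinearMap.mem_range_self f x, ?_⟩
      rintro x ⟨y, rfl⟩
      exact LinearMap.congr_fun hff y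
    refine ⟨Module.finrank ℂ (LinearMap.range f), ?_, ?_⟩
    · have htr := hproj.trace
      rw [LinearMap.trace_eq_matrix_trace ℂ (Pi.basisFun ℂ (Fin d)),
        LinearMap.toMatrix_eq_toMatrix', hf, LinearMap.toMatrix'_toLin'] at htr
      exact htr
    · intro hP0
      have hf0 : f ≠ 0 := by
        intro h0
        apply hP0
        exact Matrix.toLin'.injective (h0.trans (map_zero Matrix.toLin').symm)
      rw [Nat.one_le_iff_ne_zero]
      intro hfr
      apply hf0
      rw [← LinearMap.range_eq_bot]
      exact Submodule.finrank_eq_zero.mp hfr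
  choose r hr hrpos using hrank
  -- counting: d = sum of the ranks
  have hdsum : d = ∑ a : F, r a := by
    have hcast : (d : ℂ) = ∑ a : F, (r a : ℂ) := by
      calc (d : ℂ) = Matrix.trace (1 : Mat) := by
            rw [Matrix.trace_one, Fintype.card_fin]
        _ = Matrix.trace (∑ a : F, P a) := by rw [hsumP]
        _ = ∑ a : F, Matrix.trace (P a) := Matrix.trace_sum _ _
        _ = ∑ a : F, (r a : ℂ) := Finset.sum_congr rfl fun a _ => hr a
    exact_mod_cast hcast
  -- nontriviality gives a nonzero projection at some a₀ ≠ 0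
  have hb0 : ∃ b : F, Φ (T b) ≠ 1 := by
    by_contra hall
    push_neg at hall
    have hall' : ∀ b : F, (ρ.comp π) (T b) = 1 := fun b => Units.ext (hall b)
    have hgen := eq_one_of_T (ρ.comp π) hall'
    obtain ⟨g, hg⟩ := hnt
    obtain ⟨g', rfl⟩ := QuotientGroup.mk'_surjective
      (Subgroup.center (Matrix.SpecialLinearGroup (Fin 2) F)) g
    exact hg (hgen g')
  obtain ⟨b₀, hb₀⟩ := hb0
  have ha0 : ∃ a : F, a ≠ 0 ∧ P a ≠ 0 := by
    by_contra hall
    push_neg at hall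
    apply hb₀
    have hP0 : P 0 = 1 := by
      rw [← hsumP, Finset.sum_eq_single (0 : F)]
      · intro a _ ha; exact hall a ha
      · intro h; exact absurd (Finset.mem_univ _) h
    rw [hUsum b₀, Finset.sum_eq_single (0 : F)]
    · rw [zero_mul, ψ0, one_smul, hP0]
    · intro a _ ha; rw [hall a ha, smul_zero]
    · intro h; exact absurd (Finset.mem_univ _) h
  obtain ⟨a₀, ha₀ne, ha₀P⟩ := ha0
  have hra₀ : 1 ≤ r a₀ := hrpos a₀ ha₀P
  -- the orbit of a₀ under multiplication by inverse squares
  let sq : Fˣ → F := fun t => a₀ * ((t : F) * (t : F))⁻¹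
  let O : Finset F := Finset.image sq Finset.univ
  have hrO : ∀ a ∈ O, r a = r a₀ := by
    intro a ha
    obtain ⟨t, _, rfl⟩ := Finset.mem_image.mp ha
    have htr := hPconj t a₀
    rw [hr, hr] at htr
    show r (a₀ * ((t : F) * (t : F))⁻¹) = r a₀
    exact Nat.cast_inj.mp htr
  have hcard : q - 1 ≤ 2 * O.card := by
    have hfib : ∀ x ∈ Finset.image sq Finset.univ,
        (Finset.univ.filter (fun t : Fˣ => sq t = x)).card ≤ 2 := by
      intro x hx
      obtain ⟨s, _, rfl⟩ := Finset.mem_image.mp hx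
      have hsub : (Finset.univ.filter (fun t : Fˣ => sq t = sq s)) ⊆ {s, -s} := by
        intro t ht
        have ht2 := (Finset.mem_filter.mp ht).2
        have ht3 : a₀ * ((t : F) * (t : F))⁻¹ = a₀ * ((s : F) * (s : F))⁻¹ := ht2
        have h2 : ((t : F) * (t : F))⁻¹ = ((s : F) * (s : F))⁻¹ :=
          mul_left_cancel₀ ha₀ne ht3
        have h3 : (t : F) * (t : F) = (s : F) * (s : F) := inv_injective h2
        have h4 : ((t : F) - (s : F)) * ((t : F) + (s : F)) = 0 := by
          linear_combination h3
        rcases mul_eq_zero.mp h4 with h | h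
        · have : (t : F) = (s : F) := sub_eq_zero.mp h
          exact Finset.mem_insert.mpr (Or.inl (Units.ext this))
        · have : (t : F) = ((-s : Fˣ) : F) := by
            rw [Units.val_neg]; exact eq_neg_of_add_eq_zero_left h
          exact Finset.mem_insert.mpr (Or.inr (Finset.mem_singleton.mpr (Units.ext this)))
      calc (Finset.univ.filter (fun t : Fˣ => sq t = sq s)).card
          ≤ ({s, -s} : Finset Fˣ).card := Finset.card_le_card hsub
        _ ≤ 2 := by
            apply le_trans (Finset.card_insert_le _ _)
            simp
    have hmain := Finset.card_le_mul_card_image (f := sq) Finset.univ 2 hfib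
    rwa [Finset.card_univ, Fintype.card_units, hF] at hmain
  have hOd : O.card ≤ d := by
    rw [hdsum]
    calc O.card = ∑ _a ∈ O, 1 := by rw [Finset.sum_const, smul_eq_mul, mul_one]
      _ ≤ ∑ a ∈ O, r a := Finset.sum_le_sum fun a ha => (hrO a ha) ▸ hra₀
      _ ≤ ∑ a : F, r a := Finset.sum_le_sum_of_subset (Finset.subset_univ O)
  -- conclude
  have hfin : q - 1 ≤ 2 * d := le_trans hcard (Nat.mul_le_mul_left 2 hOd)
  have hcastfin : ((q - 1 : ℕ) : ℝ) ≤ ((2 * d : ℕ) : ℝ) := Nat.cast_le.mpr hfin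
  rw [Nat.cast_sub hq0, Nat.cast_mul] at hcastfin
  push_cast at hcastfin
  linarith
end

section
/- Let Γ be a finite group of order n and let k be such that every nontrivial complex representation of Γ has dimension at least k. Let A be any subset of Γ and let f : Γ → ℂ be any function with ∑_{x∈Γ} f(x) = 0. Then ‖A*f‖ ≤ (|A|·n/k)^{1/2}·‖f‖, where A*f(y) = ∑_{uv=y} 1_A(u)·f(v) and ‖·‖ is the ℓ² norm on ℂ^Γ, i.e. ‖f‖² = ∑_{x∈Γ}|f(x)|². -/
open scoped ComplexConjugate
namespace GowersAux
variable {Γ : Type} [Group Γ] [Fintype Γ] [DecidableEq Γ]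
noncomputable def opS (A : Finset Γ) : EuclideanSpace ℂ Γ →ₗ[ℂ] EuclideanSpace ℂ Γ where
  toFun f := WithLp.toLp 2 (fun y => ∑ u ∈ A, f (u⁻¹ * y))
  map_add' f g := PiLp.ext fun y => by simp [Finset.sum_add_distrib]
  map_smul' c f := PiLp.ext fun y => by simp [Finset.mul_sum]
noncomputable def opSt (A : Finset Γ) : EuclideanSpace ℂ Γ →ₗ[ℂ] EuclideanSpace ℂ Γ where
  toFun f := WithLp.toLp 2 (fun y => ∑ u ∈ A, f (u * y))
  map_add' f g := PiLp.ext fun y => by simp [Finset.sum_add_distrib]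
  map_smul' c f := PiLp.ext fun y => by simp [Finset.mul_sum]
lemma opS_apply (A : Finset Γ) (f : EuclideanSpace ℂ Γ) (y : Γ) :
    opS A f y = ∑ u ∈ A, f (u⁻¹ * y) := rfl
lemma opSt_apply (A : Finset Γ) (f : EuclideanSpace ℂ Γ) (y : Γ) :
    opSt A f y = ∑ u ∈ A, f (u * y) := rfl
lemma inner_opSt (A : Finset Γ) (u v : EuclideanSpace ℂ Γ) :
    inner ℂ (opSt A u) v = (inner ℂ u (opS A v) : ℂ) := by
  simp only [PiLp.inner_apply, RCLike.inner_apply, opS_apply, opSt_apply, map_sum,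
    Finset.sum_mul, Finset.mul_sum]
  conv_lhs => rw [Finset.sum_comm]
  conv_rhs => rw [Finset.sum_comm]
  refine Finset.sum_congr rfl fun a _ => ?_
  refine Fintype.sum_equiv (Equiv.mulLeft a) _ _ (fun y => ?_)
  simp only [Equiv.coe_mulLeft]
  rw [inv_mul_cancel_left]

/-- Summation functional. -/
noncomputable def opL : EuclideanSpace ℂ Γ →ₗ[ℂ] ℂ where
  toFun f := ∑ x, f x
  map_add' f g := by simp [Finset.sum_add_distrib]
  map_smul' c f := by simp [Finset.mul_sum]

lemma opL_apply (f : EuclideanSpace ℂ Γ) : opL f = ∑ x, f x := rfl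

/-- The operator `T = S† S`. -/
noncomputable def opT (A : Finset Γ) : EuclideanSpace ℂ Γ →ₗ[ℂ] EuclideanSpace ℂ Γ :=
  (opSt A).comp (opS A)

lemma inner_opT_left (A : Finset Γ) (u v : EuclideanSpace ℂ Γ) :
    inner ℂ (opT A u) v = (inner ℂ (opS A u) (opS A v) : ℂ) := inner_opSt A (opS A u) v

lemma inner_opT_right (A : Finset Γ) (u v : EuclideanSpace ℂ Γ) :
    inner ℂ u (opT A v) = (inner ℂ (opS A u) (opS A v) : ℂ) := by
  rw [← inner_conj_symm, inner_opT_left, inner_conj_symm]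

lemma opT_symm (A : Finset Γ) : (opT A).IsSymmetric := fun u v => by
  rw [inner_opT_left, inner_opT_right]

lemma inner_opT_self (A : Finset Γ) (v : EuclideanSpace ℂ Γ) :
    inner ℂ (opT A v) v = ((‖opS A v‖ : ℂ) ^ 2) := by
  rw [inner_opT_left, inner_self_eq_norm_sq_to_K]; rfl

lemma opL_opS (A : Finset Γ) (f : EuclideanSpace ℂ Γ) (hf : opL f = 0) : opL (opS A f) = 0 := by
  show (∑ y : Γ, ∑ u ∈ A, f (u⁻¹ * y)) = 0
  rw [Finset.sum_comm]
  refine Finset.sum_eq_zero fun u _ => ?_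
  rw [show (∑ y : Γ, f (u⁻¹ * y)) = ∑ y : Γ, f y from
    Fintype.sum_equiv (Equiv.mulLeft u⁻¹) _ _ (fun y => rfl)]
  exact hf

lemma opL_opSt (A : Finset Γ) (f : EuclideanSpace ℂ Γ) (hf : opL f = 0) : opL (opSt A f) = 0 := by
  show (∑ y : Γ, ∑ u ∈ A, f (u * y)) = 0
  rw [Finset.sum_comm]
  refine Finset.sum_eq_zero fun u _ => ?_
  rw [show (∑ y : Γ, f (u * y)) = ∑ y : Γ, f y from
    Fintype.sum_equiv (Equiv.mulLeft u) _ _ (fun y => rfl)]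
  exact hf

lemma opL_opT (A : Finset Γ) (f : EuclideanSpace ℂ Γ) (hf : opL f = 0) : opL (opT A f) = 0 :=
  opL_opSt A _ (opL_opS A f hf)

/-- Right translation operator. -/
noncomputable def opR (g : Γ) : EuclideanSpace ℂ Γ →ₗ[ℂ] EuclideanSpace ℂ Γ where
  toFun f := WithLp.toLp 2 (fun y => f (y * g))
  map_add' f g := PiLp.ext fun y => rfl
  map_smul' c f := PiLp.ext fun y => rfl

lemma opR_apply (g : Γ) (f : EuclideanSpace ℂ Γ) (y : Γ) : opR g f y = f (y * g) := rfl

lemma opL_opR (g : Γ) (f : EuclideanSpace ℂ Γ) (hf : opL f = 0) : opL (opR g f) = 0 := by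
  show (∑ y : Γ, f (y * g)) = 0
  rw [show (∑ y : Γ, f (y * g)) = ∑ y : Γ, f y from
    Fintype.sum_equiv (Equiv.mulRight g) _ _ (fun y => rfl)]
  exact hf

lemma opS_opR (A : Finset Γ) (g : Γ) (f : EuclideanSpace ℂ Γ) :
    opS A (opR g f) = opR g (opS A f) := PiLp.ext fun y => by
  simp only [opS_apply, opR_apply]
  exact Finset.sum_congr rfl fun u _ => by rw [mul_assoc]

lemma opSt_opR (A : Finset Γ) (g : Γ) (f : EuclideanSpace ℂ Γ) :
    opSt A (opR g f) = opR g (opSt A f) := PiLp.ext fun y => by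
  simp only [opSt_apply, opR_apply]
  exact Finset.sum_congr rfl fun u _ => by rw [mul_assoc]

lemma opT_opR (A : Finset Γ) (g : Γ) (f : EuclideanSpace ℂ Γ) :
    opT A (opR g f) = opR g (opT A f) := by
  show opSt A (opS A (opR g f)) = opR g (opSt A (opS A f))
  rw [opS_opR, opSt_opR]

lemma trace_onb {ι : Type} [Fintype ι] [DecidableEq ι]
    (b : OrthonormalBasis ι ℂ (EuclideanSpace ℂ Γ))
    (T : EuclideanSpace ℂ Γ →ₗ[ℂ] EuclideanSpace ℂ Γ) :
    LinearMap.trace ℂ _ T = ∑ i, (inner ℂ (b i) (T (b i)) : ℂ) := by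
  rw [LinearMap.trace_eq_matrix_trace ℂ b.toBasis, Matrix.trace]
  refine Finset.sum_congr rfl fun i _ => ?_
  rw [Matrix.diag_apply, LinearMap.toMatrix_apply, OrthonormalBasis.coe_toBasis_repr_apply,
    OrthonormalBasis.repr_apply_apply, OrthonormalBasis.coe_toBasis]

lemma trace_opT (A : Finset Γ) :
    LinearMap.trace ℂ _ (opT A) = ((Fintype.card Γ : ℂ) * A.card) := by
  rw [trace_onb (EuclideanSpace.basisFun Γ ℂ)]
  have key : ∀ x : Γ, (inner ℂ ((EuclideanSpace.basisFun Γ ℂ) x)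
      (opT A ((EuclideanSpace.basisFun Γ ℂ) x)) : ℂ) = A.card := by
    intro x
    rw [EuclideanSpace.basisFun_apply, EuclideanSpace.inner_single_left]
    have : (opT A (EuclideanSpace.single x 1)) x = (A.card : ℂ) := by
      show (∑ u ∈ A, ∑ a ∈ A, (EuclideanSpace.single x (1:ℂ)) (a⁻¹ * (u * x))) = A.card
      have h2 : ∀ u ∈ A, (∑ a ∈ A, (EuclideanSpace.single x (1:ℂ)) (a⁻¹ * (u * x))) = 1 := by
        intro u hu
        have h3 : ∀ a : Γ, (a⁻¹ * (u * x) = x) ↔ a = u := by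
          intro a
          rw [inv_mul_eq_iff_eq_mul, mul_left_inj, eq_comm]
        simp only [EuclideanSpace.single_apply, h3]
        rw [Finset.sum_ite_eq' A u (fun _ => (1:ℂ))]
        simp [hu]
      rw [Finset.sum_congr rfl h2]
      simp
    rw [this]
    simp
  simp only [key]
  simp [Finset.card_univ, mul_comm]


lemma re_inner_opT (A : Finset Γ) (v : EuclideanSpace ℂ Γ) :
    RCLike.re (inner ℂ (opT A v) v : ℂ) = ‖opS A v‖ ^ 2 := by
  rw [inner_opT_self]
  simp [← Complex.ofReal_pow]

lemma re_inner_opT' (A : Finset Γ) (v : EuclideanSpace ℂ Γ) :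
    RCLike.re (inner ℂ v (opT A v) : ℂ) = ‖opS A v‖ ^ 2 := by
  rw [← inner_conj_symm, RCLike.conj_re]
  exact re_inner_opT A v

/-- Spectral bound on an invariant subspace. -/
lemma spectral_aux {E : Type} [NormedAddCommGroup E] [InnerProductSpace ℂ E]
    [FiniteDimensional ℂ E]
    (T : E →ₗ[ℂ] E) (hT : T.IsSymmetric) (p : Submodule ℂ E) (hp : ∀ v ∈ p, T v ∈ p)
    (hnt : ∃ v ∈ p, v ≠ (0 : E)) :
    ∃ lam : ℝ, (∃ w ∈ p, w ≠ (0 : E) ∧ T w = (lam : ℂ) • w) ∧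
      ∀ v ∈ p, RCLike.re (inner ℂ (T v) v : ℂ) ≤ lam * ‖v‖ ^ 2 := by
  classical
  obtain ⟨v₀, hv₀p, hv₀⟩ := hnt
  haveI : Nontrivial p := ⟨⟨⟨v₀, hv₀p⟩, 0, fun h => hv₀ (congrArg Subtype.val h)⟩⟩
  have hT' := hT.restrict_invariant hp
  set T0 := T.restrict hp with hT0def
  set lam : ℝ := ⨆ x : { x : ↥p // x ≠ 0 },
      RCLike.re (inner ℂ (T0 ↑x) ↑x : ℂ) / ‖(x : ↥p)‖ ^ 2 with hlam
  have heig : Module.End.HasEigenvalue T0 (lam : ℂ) :=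
    hT'.hasEigenvalue_iSup_of_finiteDimensional
  have hbdd : BddAbove (Set.range fun x : { x : ↥p // x ≠ 0 } =>
      RCLike.re (inner ℂ (T0 ↑x) ↑x : ℂ) / ‖(x : ↥p)‖ ^ 2) := by
    refine ⟨‖(LinearMap.toContinuousLinearMap T0 : ↥p →L[ℂ] ↥p)‖, ?_⟩
    rintro r ⟨x, rfl⟩
    have hx : (0 : ℝ) < ‖(x : ↥p)‖ ^ 2 := pow_pos (norm_pos_iff.mpr x.2) 2
    rw [div_le_iff₀ hx]
    calc RCLike.re (inner ℂ (T0 ↑x) ↑x : ℂ) ≤ ‖(inner ℂ (T0 ↑x) ↑x : ℂ)‖ := RCLike.re_le_norm _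
      _ ≤ ‖T0 (x : ↥p)‖ * ‖(x : ↥p)‖ := norm_inner_le_norm _ _
      _ ≤ (‖(LinearMap.toContinuousLinearMap T0 : ↥p →L[ℂ] ↥p)‖ * ‖(x : ↥p)‖) * ‖(x : ↥p)‖ := by
          gcongr
          exact (LinearMap.toContinuousLinearMap T0).le_opNorm _
      _ = ‖(LinearMap.toContinuousLinearMap T0 : ↥p →L[ℂ] ↥p)‖ * ‖(x : ↥p)‖ ^ 2 := by ring
  refine ⟨lam, ?_, ?_⟩
  · obtain ⟨w, hw⟩ := heig.exists_hasEigenvector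
    refine ⟨↑w, (w : ↥p).2, ?_, ?_⟩
    · simpa [Submodule.coe_eq_zero] using hw.2
    · have h1 : T0 w = (lam : ℂ) • w := Module.End.mem_eigenspace_iff.mp hw.1
      have h2 : ((T0 w : ↥p) : E) = T ↑w := LinearMap.restrict_coe_apply _ _ _
      rw [← h2, h1]
      rfl
  · intro v hv
    rcases eq_or_ne v 0 with rfl | hvne
    · simp
    · have h := le_ciSup hbdd ⟨⟨v, hv⟩, fun h => hvne (congrArg Subtype.val h)⟩
      rw [div_le_iff₀ (pow_pos (norm_pos_iff.mpr
        (fun h => hvne (congrArg Subtype.val h) : (⟨v, hv⟩ : ↥p) ≠ 0)) 2)] at h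
      have h2 : ((T0 ⟨v, hv⟩ : ↥p) : E) = T v := LinearMap.restrict_coe_apply _ _ _
      have h3 : (inner ℂ (T0 ⟨v, hv⟩) (⟨v, hv⟩ : ↥p) : ℂ) = inner ℂ (T v) v := by
        rw [Submodule.coe_inner, h2]
      rw [h3] at h
      simpa [hlam] using h

end GowersAux

open GowersAux in
set_option maxHeartbeats 2000000 in
/-- Lemma 3.2 (Gowers, Quasirandom Groups): if every nontrivial complex
representation of a finite group `Γ` of order `n` has dimension at least `k`,
then for every `A ⊆ Γ` and every sum-zero `f : Γ → ℂ`,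
`‖A * f‖ ≤ √(|A| n / k) ‖f‖`, where `A * f (y) = ∑_{uv = y} 1_A(u) f(v)
= ∑_{u ∈ A} f (u⁻¹ y)` and `‖·‖` is the ℓ² norm. -/
theorem convolution_operator_bound
    (Γ : Type) [Group Γ] [Fintype Γ] [DecidableEq Γ] (k : ℕ) (hk0 : 0 < k)
    (hrep : ∀ (d : ℕ) (ρ : Γ →* Matrix.GeneralLinearGroup (Fin d) ℂ),
      (∃ g, ρ g ≠ 1) → k ≤ d)
    (A : Finset Γ) (f : Γ → ℂ) (hf : (∑ x : Γ, f x) = 0) :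
    Real.sqrt (∑ y : Γ, ‖∑ u ∈ A, f (u⁻¹ * y)‖ ^ 2)
      ≤ Real.sqrt ((A.card : ℝ) * (Fintype.card Γ : ℝ) / (k : ℝ)) *
          Real.sqrt (∑ x : Γ, ‖f x‖ ^ 2) := by
  classical
  set fv : EuclideanSpace ℂ Γ := WithLp.toLp 2 f with hfv
  have hgoal1 : Real.sqrt (∑ y : Γ, ‖∑ u ∈ A, f (u⁻¹ * y)‖ ^ 2) = ‖opS A fv‖ := by
    rw [EuclideanSpace.norm_eq]
    congr 1
  have hgoal2 : Real.sqrt (∑ x : Γ, ‖f x‖ ^ 2) = ‖fv‖ := (EuclideanSpace.norm_eq fv).symm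
  rw [hgoal1, hgoal2]
  by_cases hf0 : fv = 0
  · rw [hf0, map_zero, norm_zero]
    positivity
  have hfv0 : opL fv = 0 := hf
  have hTinv : ∀ v ∈ (LinearMap.ker opL : Submodule ℂ (EuclideanSpace ℂ Γ)),
      opT A v ∈ LinearMap.ker opL := fun v hv =>
    LinearMap.mem_ker.mpr (opL_opT A v (LinearMap.mem_ker.mp hv))
  obtain ⟨lam, ⟨w, hwp, hwne, hweq⟩, hray⟩ :=
    spectral_aux (opT A) (opT_symm A) (LinearMap.ker opL) hTinv
      ⟨fv, LinearMap.mem_ker.mpr hfv0, hf0⟩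
  have hw2 : (0 : ℝ) < ‖w‖ ^ 2 := pow_pos (norm_pos_iff.mpr hwne) 2
  have hlamw : RCLike.re (inner ℂ (opT A w) w : ℂ) = lam * ‖w‖ ^ 2 := by
    rw [hweq, inner_smul_left, inner_self_eq_norm_sq_to_K]
    simp [← Complex.ofReal_pow]
  have hlam0 : 0 ≤ lam := by
    have h1 := re_inner_opT A w
    nlinarith [sq_nonneg ‖opS A w‖]
  have hmain1 : ‖opS A fv‖ ^ 2 ≤ lam * ‖fv‖ ^ 2 := by
    have h := hray fv (LinearMap.mem_ker.mpr hfv0)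
    rwa [re_inner_opT] at h
  -- the eigenspace inside the sum-zero subspace
  set E' : Submodule ℂ (EuclideanSpace ℂ Γ) :=
    (LinearMap.ker opL) ⊓ Module.End.eigenspace (opT A) (lam : ℂ) with hE'
  have hE'mem : ∀ v : EuclideanSpace ℂ Γ,
      v ∈ E' ↔ (opL v = 0 ∧ opT A v = (lam : ℂ) • v) := by
    intro v
    rw [hE', Submodule.mem_inf, LinearMap.mem_ker, Module.End.mem_eigenspace_iff]
  have hwE' : w ∈ E' := (hE'mem w).mpr ⟨LinearMap.mem_ker.mp hwp, hweq⟩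
  have hR'inv : ∀ g : Γ, ∀ v ∈ E', opR g v ∈ E' := by
    intro g v hv
    rw [hE'mem] at hv ⊢
    refine ⟨opL_opR g v hv.1, ?_⟩
    rw [opT_opR, hv.2, map_smul]
  -- the representation of Γ on E' and the dimension bound
  have hcard : k ≤ Module.finrank ℂ E' := by
    set ρ0 : Γ → (E' →ₗ[ℂ] E') := fun g => (opR g).restrict (hR'inv g) with hρ0
    have hρ0coe : ∀ (g : Γ) (x : E'), ((ρ0 g x : E') : EuclideanSpace ℂ Γ) = opR g ↑x :=
      fun g x => LinearMap.restrict_coe_apply _ _ _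
    have hinj : Function.Injective ((↑) : E' → EuclideanSpace ℂ Γ) := Subtype.coe_injective
    set ρE : Γ →* (E' →ₗ[ℂ] E') :=
      { toFun := ρ0
        map_one' := by
          apply LinearMap.ext
          intro x
          apply hinj
          rw [hρ0coe, Module.End.one_apply]
          ext y
          show (x : EuclideanSpace ℂ Γ) (y * 1) = (x : EuclideanSpace ℂ Γ) y
          rw [mul_one]
        map_mul' := by
          intro g h
          apply LinearMap.ext
          intro x
          apply hinj
          rw [hρ0coe, Module.End.mul_apply, hρ0coe, hρ0coe]
          ext y
          show (x : EuclideanSpace ℂ Γ) (y * (g * h))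
            = (x : EuclideanSpace ℂ Γ) (y * g * h)
          rw [mul_assoc] } with hρE
    set bE := Module.finBasis ℂ ↥E' with hbE
    set mE := LinearMap.toMatrixAlgEquiv bE with hmE
    set ρ : Γ →* Matrix.GeneralLinearGroup (Fin (Module.finrank ℂ ↥E')) ℂ :=
      (Units.map mE.toRingEquiv.toRingHom.toMonoidHom).comp ρE.toHomUnits with hρ
    have hnontriv : ∃ g, ρ g ≠ 1 := by
      by_contra hcon
      push_neg at hcon
      have hE'triv : ∀ g : Γ, ρ0 g = 1 := by
        intro g
        have h4 : (Units.map mE.toRingEquiv.toRingHom.toMonoidHom) (ρE.toHomUnits g) = 1 :=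
          hcon g
        have h5 : ρE.toHomUnits g = 1 :=
          Units.map_injective (fun a b hab => mE.toRingEquiv.injective hab)
            (h4.trans (map_one _).symm)
        have h6 : ρE g = 1 := by
          have := congrArg Units.val h5
          simpa using this
        exact h6
      apply hwne
      have hconst : ∀ g : Γ, w g = w 1 := by
        intro g
        have h1 := congrArg
          (fun (φ : E' →ₗ[ℂ] E') => ((φ ⟨w, hwE'⟩ : E') : EuclideanSpace ℂ Γ)) (hE'triv g)
        rw [hρ0coe] at h1
        have h3 : w (1 * g) = w 1 := by simpa [opR_apply] using congrArg (fun v : EuclideanSpace ℂ Γ => v 1) h1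
        have h4 : w (1 * g) = w g := congrArg (fun z : Γ => w z) (one_mul g)
        exact h4.symm.trans h3
      have hsum := LinearMap.mem_ker.mp hwp
      rw [opL_apply] at hsum
      have hzero : (Fintype.card Γ : ℂ) * w 1 = 0 := by
        rw [← hsum, Finset.sum_congr rfl fun x _ => hconst x]
        simp [Finset.card_univ, mul_comm]
      have hw1 : w 1 = 0 :=
        (mul_eq_zero.mp hzero).resolve_left (Nat.cast_ne_zero.mpr Fintype.card_ne_zero)
      ext x
      show w x = 0
      rw [hconst x, hw1]
    exact hrep _ ρ hnontriv
  -- trace bound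
  set d := Module.finrank ℂ E' with hd
  have htrace : lam * d ≤ (Fintype.card Γ : ℝ) * A.card := by
    set bE2 := stdOrthonormalBasis ℂ ↥E' with hbE2
    set wv : Fin d → EuclideanSpace ℂ Γ := fun j => ↑(bE2 j) with hwv0
    have hwv : Orthonormal ℂ wv := by
      rw [orthonormal_iff_ite]
      intro i j
      have h := orthonormal_iff_ite.mp bE2.orthonormal i j
      rwa [Submodule.coe_inner] at h
    have hwvinj : Function.Injective wv := hwv.linearIndependent.injective
    obtain ⟨u, b, hsub, hb⟩ := hwv.toSubtypeRange.exists_orthonormalBasis_extension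
    have htr := trace_onb b (opT A)
    rw [trace_opT] at htr
    have htr' : (Fintype.card Γ : ℝ) * A.card
        = ∑ x ∈ u, RCLike.re (inner ℂ x (opT A x) : ℂ) := by
      have h := congrArg RCLike.re htr
      simp only [map_sum, hb] at h
      rw [← Finset.sum_coe_sort u (fun x => RCLike.re (inner ℂ x (opT A x) : ℂ))]
      rw [← h]
      simp
    rw [htr']
    have himg : Finset.image wv Finset.univ ⊆ u := by
      intro x hx
      rcases Finset.mem_image.mp hx with ⟨j, _, rfl⟩
      exact hsub (Set.mem_range_self j)
    have h2 : ∑ x ∈ Finset.image wv Finset.univ, RCLike.re (inner ℂ x (opT A x) : ℂ)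
        = d * lam := by
      rw [Finset.sum_image (fun a _ b _ h => hwvinj h)]
      have hterm : ∀ j : Fin d, RCLike.re (inner ℂ (wv j) (opT A (wv j)) : ℂ) = lam := by
        intro j
        have hj : opT A (wv j) = (lam : ℂ) • wv j := ((hE'mem _).mp (bE2 j).2).2
        rw [hj, inner_smul_right, inner_self_eq_norm_sq_to_K, hwv.1 j]
        simp
      rw [Finset.sum_congr rfl fun j _ => hterm j]
      simp [Finset.card_univ]
    calc lam * d = ∑ x ∈ Finset.image wv Finset.univ, RCLike.re (inner ℂ x (opT A x) : ℂ) := by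
          rw [h2]; ring
      _ ≤ ∑ x ∈ u, RCLike.re (inner ℂ x (opT A x) : ℂ) := by
          refine Finset.sum_le_sum_of_subset_of_nonneg himg fun x _ _ => ?_
          rw [re_inner_opT']
          positivity
  -- combine
  have hkd : (k : ℝ) ≤ d := by exact_mod_cast hcard
  have hlamle : lam ≤ (A.card : ℝ) * (Fintype.card Γ) / k := by
    rw [le_div_iff₀ (by exact_mod_cast hk0 : (0 : ℝ) < k)]
    calc lam * k ≤ lam * d := mul_le_mul_of_nonneg_left hkd hlam0
      _ ≤ (Fintype.card Γ : ℝ) * A.card := htrace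
      _ = (A.card : ℝ) * (Fintype.card Γ) := mul_comm _ _
  have h2 : ‖opS A fv‖ ^ 2 ≤ ((A.card : ℝ) * (Fintype.card Γ) / k) * ‖fv‖ ^ 2 :=
    le_trans hmain1 (mul_le_mul_of_nonneg_right hlamle (sq_nonneg _))
  calc ‖opS A fv‖ = Real.sqrt (‖opS A fv‖ ^ 2) := (Real.sqrt_sq (norm_nonneg _)).symm
    _ ≤ Real.sqrt (((A.card : ℝ) * (Fintype.card Γ) / k) * ‖fv‖ ^ 2) := Real.sqrt_le_sqrt h2
    _ = Real.sqrt ((A.card : ℝ) * (Fintype.card Γ) / k) * ‖fv‖ := by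
        rw [Real.sqrt_mul (by positivity), Real.sqrt_sq (norm_nonneg _)]
end

section
/- Let v₁, …, v_n be unit vectors in ℂ^m (with the standard Hermitian inner product ⟨·,·⟩). Then ∑_{i=1}^n ∑_{j=1}^n |⟨v_i, v_j⟩|² ≥ n²/m. -/
private lemma norm_sq_cast (z : ℂ) : ((‖z‖ : ℂ))^2 = z * (starRingEnd ℂ) z := by
  rw [← Complex.ofReal_pow, Complex.sq_norm, Complex.mul_conj]

/-- Lemma 4.4 (Gowers, Quasirandom Groups): for unit vectors `v₁, …, vₙ` in `ℂᵐ`,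
`∑_{i,j} |⟨vᵢ, vⱼ⟩|² ≥ n²/m`. -/
theorem sum_sq_inner_ge (m n : ℕ) (v : Fin n → EuclideanSpace ℂ (Fin m))
    (hv : ∀ i, ‖v i‖ = 1) :
    (n : ℝ) ^ 2 / (m : ℝ) ≤ ∑ i : Fin n, ∑ j : Fin n, ‖(inner ℂ (v i) (v j) : ℂ)‖ ^ 2 := by
  rcases Nat.eq_zero_or_pos m with hm | hm
  · rcases Nat.eq_zero_or_pos n with hn | hn
    · subst hn hm; simp
    · exfalso
      have h1 := hv ⟨0, hn⟩
      subst hm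
      have h0 : v ⟨0, hn⟩ = 0 := Subsingleton.elim _ _
      rw [h0, norm_zero] at h1
      norm_num at h1
  · set C : Fin m → Fin m → ℂ := fun k l => ∑ i, (starRingEnd ℂ) (v i k) * v i l with hC
    have key : ∑ i, ∑ j, ‖(inner ℂ (v i) (v j) : ℂ)‖ ^ 2 = ∑ k, ∑ l, ‖C k l‖ ^ 2 := by
      have hc : ((∑ i, ∑ j, ‖(inner ℂ (v i) (v j) : ℂ)‖ ^ 2 : ℝ) : ℂ)
          = ((∑ k, ∑ l, ‖C k l‖ ^ 2 : ℝ) : ℂ) := by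
        push_cast
        simp only [norm_sq_cast, hC, PiLp.inner_apply, RCLike.inner_apply', map_sum, map_mul,
          Complex.conj_conj, Finset.sum_mul_sum]
        calc ∑ i : Fin n, ∑ j : Fin n, ∑ k : Fin m, ∑ l : Fin m,
              (starRingEnd ℂ) (v i k) * v j k * (v i l * (starRingEnd ℂ) (v j l))
            = ∑ i : Fin n, ∑ k : Fin m, ∑ j : Fin n, ∑ l : Fin m,
              (starRingEnd ℂ) (v i k) * v j k * (v i l * (starRingEnd ℂ) (v j l)) :=
              Finset.sum_congr rfl fun i _ => Finset.sum_comm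
          _ = ∑ k : Fin m, ∑ i : Fin n, ∑ j : Fin n, ∑ l : Fin m,
              (starRingEnd ℂ) (v i k) * v j k * (v i l * (starRingEnd ℂ) (v j l)) :=
              Finset.sum_comm
          _ = ∑ k : Fin m, ∑ i : Fin n, ∑ l : Fin m, ∑ j : Fin n,
              (starRingEnd ℂ) (v i k) * v j k * (v i l * (starRingEnd ℂ) (v j l)) :=
              Finset.sum_congr rfl fun k _ => Finset.sum_congr rfl fun i _ => Finset.sum_comm
          _ = ∑ k : Fin m, ∑ l : Fin m, ∑ i : Fin n, ∑ j : Fin n,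
              (starRingEnd ℂ) (v i k) * v j k * (v i l * (starRingEnd ℂ) (v j l)) :=
              Finset.sum_congr rfl fun k _ => Finset.sum_comm
          _ = ∑ k : Fin m, ∑ l : Fin m, ∑ i : Fin n, ∑ j : Fin n,
              (starRingEnd ℂ) (v i k) * v i l * (v j k * (starRingEnd ℂ) (v j l)) := by
              refine Finset.sum_congr rfl fun k _ => Finset.sum_congr rfl fun l _ =>
                Finset.sum_congr rfl fun i _ => Finset.sum_congr rfl fun j _ => by ring
      exact_mod_cast hc
    have trace : ∑ k, (C k k).re = (n : ℝ) := by
      have h2 : ∑ k, C k k = ∑ i, (inner ℂ (v i) (v i) : ℂ) := by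
        rw [hC, Finset.sum_comm]
        exact Finset.sum_congr rfl fun i _ => by simp only [PiLp.inner_apply, RCLike.inner_apply']
      calc ∑ k, (C k k).re = (∑ k, C k k).re := (Complex.re_sum _ _).symm
        _ = (∑ i, (inner ℂ (v i) (v i) : ℂ)).re := by rw [h2]
        _ = ∑ i, ((inner ℂ (v i) (v i) : ℂ)).re := Complex.re_sum _ _
        _ = ∑ i : Fin n, (1 : ℝ) := Finset.sum_congr rfl fun i _ => by
            rw [inner_self_eq_norm_sq_to_K, hv i]; norm_num
        _ = n := by simp
    have cs : (n : ℝ) ^ 2 ≤ m * ∑ k, (C k k).re ^ 2 := by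
      have := sq_sum_le_card_mul_sum_sq (s := Finset.univ) (f := fun k => (C k k).re)
      simpa [trace] using this
    have step2 : ∑ k, (C k k).re ^ 2 ≤ ∑ k, ∑ l, ‖C k l‖ ^ 2 := by
      refine Finset.sum_le_sum fun k _ => ?_
      calc (C k k).re ^ 2 ≤ ‖C k k‖ ^ 2 := by
            rw [← sq_abs ((C k k).re)]
            gcongr
            exact Complex.abs_re_le_norm _
        _ ≤ ∑ l, ‖C k l‖ ^ 2 :=
            Finset.single_le_sum (f := fun l => ‖C k l‖ ^ 2) (fun l _ => by positivity)
              (Finset.mem_univ k)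
    rw [key, div_le_iff₀ (by positivity)]
    calc (n:ℝ)^2 ≤ m * ∑ k, (C k k).re ^ 2 := cs
      _ ≤ m * ∑ k, ∑ l, ‖C k l‖ ^ 2 := by
          exact mul_le_mul_of_nonneg_left step2 (by positivity)
      _ = (∑ k, ∑ l, ‖C k l‖ ^ 2) * m := mul_comm _ _
end

section
/- Let G be a finite group of order n and let ρ : G → U(m) be a nontrivial irreducible unitary representation of G on ℂ^m. Then there exist unit vectors v, w ∈ ℂ^m such that the function f : G → ℂ defined by f(g) = ⟨ρ(g)v, w⟩ satisfies: |f(g)| ≤ 1 for every g ∈ G, ∑_{g∈G} f(g) = 0, and ∑_{h∈G} |∑_{g∈G} f(g)·conj(f(gh))|² ≥ n³/m⁴. In particular, if every function from G to the closed unit disc with average zero is c-quasirandom, then every nontrivial representation of G has dimension at least c^{-1/4}. -/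
set_option linter.unusedSectionVars false

open scoped ComplexConjugate ComplexInnerProductSpace
open Module

variable {G : Type} [Group G] [Fintype G]

section Core
variable {V : Type} [NormedAddCommGroup V] [InnerProductSpace ℂ V] [FiniteDimensional ℂ V]
variable (π : G →* (V ≃ₗᵢ[ℂ] V))

lemma pi_mul_apply (g h : G) (x : V) : π g (π h x) = π (g * h) x := by
  rw [map_mul]; rfl

lemma pi_inv_apply (g : G) (x : V) : π g (π g⁻¹ x) = x := by
  rw [pi_mul_apply, mul_inv_cancel, map_one]; rfl

lemma pi_inner_left (g : G) (x y : V) : ⟪π g x, y⟫ = ⟪x, π g⁻¹ y⟫ := by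
  conv_lhs => rw [← pi_inv_apply π g y]
  rw [LinearIsometryEquiv.inner_map_map]

lemma schur_lemma
    (hirr : ∀ S : Submodule ℂ V, (∀ (g : G) (x : V), x ∈ S → π g x ∈ S) → S = ⊥ ∨ S = ⊤)
    [Nontrivial V]
    (T : V →ₗ[ℂ] V) (hT : ∀ (g : G) (x : V), π g (T x) = T (π g x)) :
    ∃ c : ℂ, ∀ x : V, T x = c • x := by
  obtain ⟨c, hc⟩ := Module.End.exists_eigenvalue (T : Module.End ℂ V)
  refine ⟨c, fun x => ?_⟩
  have hinv : ∀ (g : G) (y : V), y ∈ Module.End.eigenspace (T : Module.End ℂ V) c →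
      π g y ∈ Module.End.eigenspace (T : Module.End ℂ V) c := by
    intro g y hy
    rw [Module.End.mem_eigenspace_iff] at hy ⊢
    calc T (π g y) = π g (T y) := (hT g y).symm
      _ = c • π g y := by rw [hy, map_smul]
  rcases hirr _ hinv with h | h
  · exact absurd h hc
  · have hx : x ∈ Module.End.eigenspace (T : Module.End ℂ V) c := h ▸ Submodule.mem_top
    exact Module.End.mem_eigenspace_iff.mp hx

end Core

section Core2
variable {V : Type} [NormedAddCommGroup V] [InnerProductSpace ℂ V] [FiniteDimensional ℂ V]
variable (π : G →* (V ≃ₗᵢ[ℂ] V))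

lemma nontrivial_of_pi_ne_one (hnt : ∃ g : G, π g ≠ 1) : Nontrivial V := by
  by_contra h
  rw [not_nontrivial_iff_subsingleton] at h
  obtain ⟨g, hg⟩ := hnt
  exact hg (by ext x; exact Subsingleton.elim _ _)

lemma schur_orthogonality
    (hirr : ∀ S : Submodule ℂ V, (∀ (g : G) (x : V), x ∈ S → π g x ∈ S) → S = ⊥ ∨ S = ⊤)
    [Nontrivial V] (x y z u : V) :
    ∑ g : G, ⟪x, π g y⟫ * ⟪z, π g⁻¹ u⟫
      = ((Fintype.card G : ℂ) / (finrank ℂ V : ℂ)) * (⟪z, y⟫ * ⟪x, u⟫) := by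
  set T : V →ₗ[ℂ] V :=
    { toFun := fun a => ∑ g : G, ⟪z, π g⁻¹ a⟫ • (π g y)
      map_add' := by
        intro a b
        simp [inner_add_right, add_smul, Finset.sum_add_distrib]
      map_smul' := by
        intro r a
        simp [inner_smul_right, smul_smul, Finset.smul_sum] } with hTdef
  have hTapp : ∀ a : V, T a = ∑ g : G, ⟪z, π g⁻¹ a⟫ • (π g y) := fun a => rfl
  have hT : ∀ (h : G) (a : V), π h (T a) = T (π h a) := by
    intro h a
    rw [hTapp, hTapp, map_sum]
    refine Fintype.sum_equiv (Equiv.mulLeft h) _ _ (fun g => ?_)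
    rw [map_smul, pi_mul_apply]
    congr 2
    simp [mul_inv_rev, mul_assoc]
  obtain ⟨c, hc⟩ := schur_lemma π hirr T hT
  set m := finrank ℂ V with hm
  have hm1 : 1 ≤ m := Module.finrank_pos
  have hmC : (m : ℂ) ≠ 0 := by
    exact Nat.cast_ne_zero.mpr (by omega)
  set b := stdOrthonormalBasis ℂ V with hb
  have hbnorm : ∀ i, ⟪b i, b i⟫ = 1 := by
    intro i
    rw [inner_self_eq_norm_sq_to_K, b.orthonormal.1 i]
    norm_num
  have hA : ∑ i, ⟪b i, T (b i)⟫ = (m : ℂ) * c := by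
    have : ∀ i, ⟪b i, T (b i)⟫ = c := by
      intro i
      rw [hc, inner_smul_right, hbnorm, mul_one]
    simp [this, Finset.sum_const, mul_comm, hm]
  have hB : ∑ i, ⟪b i, T (b i)⟫ = (Fintype.card G : ℂ) * ⟪z, y⟫ := by
    have : ∀ i, ⟪b i, T (b i)⟫ = ∑ g : G, ⟪π g z, b i⟫ * ⟪b i, π g y⟫ := by
      intro i
      rw [hTapp, inner_sum]
      refine Finset.sum_congr rfl (fun g _ => ?_)
      rw [inner_smul_right, pi_inner_left, mul_comm]
    rw [Finset.sum_congr rfl (fun i _ => this i), Finset.sum_comm]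
    have : ∀ g : G, ∑ i, ⟪π g z, b i⟫ * ⟪b i, π g y⟫ = ⟪z, y⟫ := by
      intro g
      rw [b.sum_inner_mul_inner, LinearIsometryEquiv.inner_map_map]
    simp [this]
  have hcval : c = (Fintype.card G : ℂ) * ⟪z, y⟫ / (m : ℂ) := by
    field_simp
    rw [mul_comm c, ← hA, hB]
  calc ∑ g : G, ⟪x, π g y⟫ * ⟪z, π g⁻¹ u⟫ = ⟪x, T u⟫ := by
        rw [hTapp, inner_sum]
        exact Finset.sum_congr rfl fun g _ => by rw [inner_smul_right, mul_comm]
    _ = c * ⟪x, u⟫ := by rw [hc, inner_smul_right]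
    _ = _ := by rw [hcval]; field_simp

end Core2

section Core3
variable {V : Type} [NormedAddCommGroup V] [InnerProductSpace ℂ V] [FiniteDimensional ℂ V]
variable (π : G →* (V ≃ₗᵢ[ℂ] V))

lemma sum_pi_eq_zero
    (hnt : ∃ g : G, π g ≠ 1)
    (hirr : ∀ S : Submodule ℂ V, (∀ (g : G) (x : V), x ∈ S → π g x ∈ S) → S = ⊥ ∨ S = ⊤)
    (a : V) : ∑ g : G, π g a = 0 := by
  haveI : Nontrivial V := nontrivial_of_pi_ne_one π hnt
  set T : V →ₗ[ℂ] V :=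
    { toFun := fun a => ∑ g : G, π g a
      map_add' := by intro a b; simp [Finset.sum_add_distrib]
      map_smul' := by intro r a; simp [Finset.smul_sum] } with hTdef
  have hTapp : ∀ a : V, T a = ∑ g : G, π g a := fun a => rfl
  have hfix : ∀ (h : G) (a : V), π h (T a) = T a := by
    intro h a
    rw [hTapp, map_sum]
    refine Fintype.sum_equiv (Equiv.mulLeft h) _ _ (fun g => ?_)
    rw [pi_mul_apply, Equiv.coe_mulLeft]
  have hT : ∀ (h : G) (a : V), π h (T a) = T (π h a) := by
    intro h a
    rw [hfix, hTapp]
    refine Fintype.sum_equiv (Equiv.mulRight h⁻¹) _ _ (fun g => ?_)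
    have he : ((Equiv.mulRight h⁻¹) g) * h = g := by simp
    rw [pi_mul_apply, he]
  obtain ⟨c, hc⟩ := schur_lemma π hirr T hT
  rcases eq_or_ne c 0 with h0 | h0
  · rw [← hTapp, hc, h0, zero_smul]
  · exfalso
    obtain ⟨g, hg⟩ := hnt
    refine hg (LinearIsometryEquiv.ext fun a => ?_)
    have := hfix g a
    rw [hc, map_smul] at this
    have : π g a = a := smul_right_injective V h0 this
    simpa using this

lemma core_exists
    (hnt : ∃ g : G, π g ≠ 1)
    (hirr : ∀ S : Submodule ℂ V, (∀ (g : G) (x : V), x ∈ S → π g x ∈ S) → S = ⊥ ∨ S = ⊤) :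
    ∃ v w : V, ‖v‖ = 1 ∧ ‖w‖ = 1 ∧
      (∀ g : G, ‖⟪w, π g v⟫‖ ≤ 1) ∧
      ((∑ g : G, ⟪w, π g v⟫) = 0) ∧
      ((Fintype.card G : ℝ) ^ 3 / (finrank ℂ V : ℝ) ^ 4 ≤
        ∑ h : G, ‖∑ g : G, ⟪w, π g v⟫ * (starRingEnd ℂ) ⟪w, π (g * h) v⟫‖ ^ 2) := by
  haveI : Nontrivial V := nontrivial_of_pi_ne_one π hnt
  set m := finrank ℂ V with hm
  have hm1 : 1 ≤ m := Module.finrank_pos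
  set b := stdOrthonormalBasis ℂ V with hb
  set v : V := b ⟨0, hm1⟩ with hv
  have hvnorm : ‖v‖ = 1 := b.orthonormal.1 _
  have hvinner : ⟪v, v⟫ = 1 := by
    rw [inner_self_eq_norm_sq_to_K, hvnorm]; norm_num
  set N := Fintype.card G with hN
  have hN1 : 1 ≤ N := Fintype.card_pos
  have hmR : (0:ℝ) < (m:ℝ) := by exact_mod_cast hm1
  have hNR : (0:ℝ) < (N:ℝ) := by exact_mod_cast hN1
  refine ⟨v, v, hvnorm, hvnorm, ?_, ?_, ?_⟩
  · intro g
    calc ‖⟪v, π g v⟫‖ ≤ ‖v‖ * ‖π g v‖ := norm_inner_le_norm v (π g v)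
      _ = 1 := by rw [hvnorm, (π g).norm_map, hvnorm, one_mul]
  · rw [← inner_sum, sum_pi_eq_zero π hnt hirr, inner_zero_right]
  · -- the convolution identity
    have hconv : ∀ h : G, ∑ g : G, ⟪v, π g v⟫ * (starRingEnd ℂ) ⟪v, π (g * h) v⟫
        = ((N : ℂ) / (m : ℂ)) * ⟪π h v, v⟫ := by
      intro h
      have : ∀ g : G, ⟪v, π g v⟫ * (starRingEnd ℂ) ⟪v, π (g * h) v⟫
          = ⟪v, π g v⟫ * ⟪π h v, π g⁻¹ v⟫ := by
        intro g
        rw [inner_conj_symm, ← pi_mul_apply, pi_inner_left]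
      rw [Finset.sum_congr rfl (fun g _ => this g), schur_orthogonality π hirr, hvinner, mul_one]
    have hsq : ∀ h : G, ‖∑ g : G, ⟪v, π g v⟫ * (starRingEnd ℂ) ⟪v, π (g * h) v⟫‖ ^ 2
        = ((N:ℝ)/(m:ℝ))^2 * ‖⟪v, π h v⟫‖^2 := by
      intro h
      rw [hconv, norm_mul, mul_pow]
      congr 2
      · rw [norm_div, Complex.norm_natCast, Complex.norm_natCast]
      · rw [← inner_conj_symm, RCLike.norm_conj]
    have hparseval : ∑ h : G, ‖⟪v, π h v⟫‖ ^ 2 = (N:ℝ)/(m:ℝ) := by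
      have hcx : (∑ h : G, ((‖⟪v, π h v⟫‖:ℝ) :ℂ) ^ 2) = ((N:ℂ)/(m:ℂ)) := by
        calc (∑ h : G, ((‖⟪v, π h v⟫‖:ℝ):ℂ) ^ 2)
            = ∑ h : G, ⟪v, π h v⟫ * ⟪v, π h⁻¹ v⟫ := by
              refine Finset.sum_congr rfl (fun h _ => ?_)
              rw [← pi_inner_left, ← inner_conj_symm (π h v) v, Complex.mul_conj']
          _ = ((N:ℂ)/(m:ℂ)) * (⟪v, v⟫ * ⟪v, v⟫) := schur_orthogonality π hirr v v v v
          _ = (N:ℂ)/(m:ℂ) := by rw [hvinner, mul_one, mul_one]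
      apply Complex.ofReal_injective
      push_cast
      exact hcx
    have htotal : ∑ h : G, ‖∑ g : G, ⟪v, π g v⟫ * (starRingEnd ℂ) ⟪v, π (g * h) v⟫‖ ^ 2
        = (N:ℝ)^3 / (m:ℝ)^3 := by
      rw [Finset.sum_congr rfl (fun h _ => hsq h), ← Finset.mul_sum, hparseval]
      field_simp
    rw [htotal]
    have hmono : (m:ℝ)^3 ≤ (m:ℝ)^4 :=
      pow_le_pow_right₀ (by exact_mod_cast hm1) (by norm_num)
    exact div_le_div_of_nonneg_left (by positivity) (by positivity) hmono

end Core3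

section Bridge
variable {k : ℕ}

lemma unitary_dot (U : Matrix (Fin k) (Fin k) ℂ) (hU : star U * U = 1) (x y : Fin k → ℂ) :
    ∑ i, (starRingEnd ℂ) (U.mulVec x i) * (U.mulVec y i)
      = ∑ i, (starRingEnd ℂ) (x i) * (y i) := by
  have h1 : ∑ i, (starRingEnd ℂ) (U.mulVec x i) * (U.mulVec y i)
      = dotProduct (star (U.mulVec x)) (U.mulVec y) := rfl
  have h2 : ∑ i, (starRingEnd ℂ) (x i) * (y i) = dotProduct (star x) y := rfl
  rw [h1, h2, Matrix.star_mulVec, Matrix.dotProduct_mulVec, Matrix.vecMul_vecMul]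
  have : U.conjTranspose * U = 1 := hU
  rw [this, Matrix.vecMul_one]

lemma sum_conj_mul_self (z : Fin k → ℂ) :
    ∑ i, (starRingEnd ℂ) (z i) * (z i) = ((∑ i, ‖z i‖ ^ 2 : ℝ) : ℂ) := by
  push_cast
  refine Finset.sum_congr rfl (fun i _ => ?_)
  rw [mul_comm, Complex.mul_conj']

/-- single unitary matrix as isometry -/
noncomputable def matIsoFun (ρ : G →* Matrix.unitaryGroup (Fin k) ℂ) (g : G) :
    EuclideanSpace ℂ (Fin k) ≃ₗᵢ[ℂ] EuclideanSpace ℂ (Fin k) where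
  toFun := fun x => WithLp.toLp 2 ((ρ g : Matrix (Fin k) (Fin k) ℂ).mulVec x)
  map_add' := fun x y => by simp [Matrix.mulVec_add]
  map_smul' := fun c x => by simp [Matrix.mulVec_smul]
  invFun := fun x => WithLp.toLp 2 ((ρ g⁻¹ : Matrix (Fin k) (Fin k) ℂ).mulVec x)
  left_inv := fun x => by
    show WithLp.toLp 2 ((ρ g⁻¹ : Matrix (Fin k) (Fin k) ℂ).mulVec ((ρ g : Matrix (Fin k) (Fin k) ℂ).mulVec x)) = x
    rw [Matrix.mulVec_mulVec]
    have h1 : (ρ g⁻¹ : Matrix (Fin k) (Fin k) ℂ) * (ρ g : Matrix (Fin k) (Fin k) ℂ) = 1 := by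
      rw [← Matrix.UnitaryGroup.mul_val, ← map_mul, inv_mul_cancel, map_one,
        Matrix.UnitaryGroup.one_val]
    rw [h1, Matrix.one_mulVec, WithLp.toLp_ofLp]
  right_inv := fun x => by
    show WithLp.toLp 2 ((ρ g : Matrix (Fin k) (Fin k) ℂ).mulVec ((ρ g⁻¹ : Matrix (Fin k) (Fin k) ℂ).mulVec x)) = x
    rw [Matrix.mulVec_mulVec]
    have h1 : (ρ g : Matrix (Fin k) (Fin k) ℂ) * (ρ g⁻¹ : Matrix (Fin k) (Fin k) ℂ) = 1 := by
      rw [← Matrix.UnitaryGroup.mul_val, ← map_mul, mul_inv_cancel, map_one,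
        Matrix.UnitaryGroup.one_val]
    rw [h1, Matrix.one_mulVec, WithLp.toLp_ofLp]
  norm_map' := fun x => by
    rw [EuclideanSpace.norm_eq, EuclideanSpace.norm_eq]
    congr 1
    have h := unitary_dot (ρ g : Matrix (Fin k) (Fin k) ℂ)
      (Matrix.UnitaryGroup.star_mul_self (ρ g)) x x
    rw [sum_conj_mul_self, sum_conj_mul_self] at h
    exact_mod_cast h

/-- The isometric action of a unitary matrix group representation on Euclidean space. -/
noncomputable def matIso (ρ : G →* Matrix.unitaryGroup (Fin k) ℂ) :
    G →* (EuclideanSpace ℂ (Fin k) ≃ₗᵢ[ℂ] EuclideanSpace ℂ (Fin k)) :=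
  MonoidHom.mk' (matIsoFun ρ) (fun g h => by
    apply LinearIsometryEquiv.ext
    intro x
    show WithLp.toLp 2 ((ρ (g*h) : Matrix (Fin k) (Fin k) ℂ).mulVec x)
        = WithLp.toLp 2 ((ρ g : Matrix (Fin k) (Fin k) ℂ).mulVec ((ρ h : Matrix (Fin k) (Fin k) ℂ).mulVec x))
    rw [Matrix.mulVec_mulVec, ← Matrix.UnitaryGroup.mul_val, ← map_mul])

lemma matIso_apply (ρ : G →* Matrix.unitaryGroup (Fin k) ℂ) (g : G) (x : EuclideanSpace ℂ (Fin k)) :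
    matIso ρ g x = (ρ g : Matrix (Fin k) (Fin k) ℂ).mulVec x := rfl

lemma matIso_ne_one (ρ : G →* Matrix.unitaryGroup (Fin k) ℂ) (g : G) (hg : ρ g ≠ 1) :
    matIso ρ g ≠ 1 := by
  intro h
  apply hg
  have hv : ∀ x : Fin k → ℂ, (ρ g : Matrix (Fin k) (Fin k) ℂ).mulVec x = x := by
    intro x
    have := congrArg (fun (e : EuclideanSpace ℂ (Fin k) ≃ₗᵢ[ℂ] EuclideanSpace ℂ (Fin k)) => (e (WithLp.toLp 2 x)).ofLp) h
    simpa [matIso_apply] using this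
  have hm : (ρ g : Matrix (Fin k) (Fin k) ℂ) = 1 := by
    apply Matrix.toLin'.injective
    apply LinearMap.ext
    intro x
    simp [Matrix.toLin'_apply, hv x, Matrix.one_mulVec]
  exact Subtype.coe_injective (by simpa using hm)

lemma matIso_inner (ρ : G →* Matrix.unitaryGroup (Fin k) ℂ) (g : G)
    (v w : EuclideanSpace ℂ (Fin k)) :
    ⟪w, matIso ρ g v⟫ = ∑ i, (starRingEnd ℂ) (w i) * (ρ g : Matrix (Fin k) (Fin k) ℂ).mulVec v i := by
  rw [PiLp.inner_apply]
  exact Finset.sum_congr rfl (fun i _ => RCLike.inner_apply' _ _)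

end Bridge

section Part1

set_option maxHeartbeats 1000000 in
lemma part_one (m : ℕ) (ρ : G →* Matrix.unitaryGroup (Fin m) ℂ)
    (hnt : ∃ g : G, ρ g ≠ 1)
    (hirr : ∀ S : Submodule ℂ (Fin m → ℂ),
      (∀ (g : G) (x : Fin m → ℂ), x ∈ S →
        (ρ g : Matrix (Fin m) (Fin m) ℂ).mulVec x ∈ S) → S = ⊥ ∨ S = ⊤) :
    ∃ v w : Fin m → ℂ,
      (∑ i : Fin m, ‖v i‖ ^ 2 = 1) ∧ (∑ i : Fin m, ‖w i‖ ^ 2 = 1) ∧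
      (∀ g : G,
        ‖∑ i : Fin m, (starRingEnd ℂ) (w i) * (ρ g : Matrix (Fin m) (Fin m) ℂ).mulVec v i‖ ≤ 1) ∧
      ((∑ g : G, ∑ i : Fin m,
          (starRingEnd ℂ) (w i) * (ρ g : Matrix (Fin m) (Fin m) ℂ).mulVec v i) = 0) ∧
      ((Fintype.card G : ℝ) ^ 3 / (m : ℝ) ^ 4 ≤
        ∑ h : G, ‖∑ g : G,
          (∑ i : Fin m, (starRingEnd ℂ) (w i) * (ρ g : Matrix (Fin m) (Fin m) ℂ).mulVec v i) *
            (starRingEnd ℂ) (∑ i : Fin m,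
              (starRingEnd ℂ) (w i) * (ρ (g * h) : Matrix (Fin m) (Fin m) ℂ).mulVec v i)‖ ^ 2) := by
  set π := matIso ρ with hπ
  have hnt' : ∃ g : G, π g ≠ 1 := by
    obtain ⟨g, hg⟩ := hnt
    exact ⟨g, matIso_ne_one ρ g hg⟩
  have hirr' : ∀ S : Submodule ℂ (EuclideanSpace ℂ (Fin m)),
      (∀ (g : G) (x : EuclideanSpace ℂ (Fin m)), x ∈ S → π g x ∈ S) → S = ⊥ ∨ S = ⊤ := by
    intro S hS
    rcases hirr (S.map (WithLp.linearEquiv 2 ℂ (Fin m → ℂ)).toLinearMap) (fun g x hx => by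
      obtain ⟨y, hy, rfl⟩ := Submodule.mem_map.mp hx
      exact Submodule.mem_map.mpr ⟨π g y, hS g y hy, rfl⟩) with h | h
    · left
      apply Submodule.map_injective_of_injective (WithLp.linearEquiv 2 ℂ (Fin m → ℂ)).injective
      rw [h, Submodule.map_bot]
    · right
      apply Submodule.map_injective_of_injective (WithLp.linearEquiv 2 ℂ (Fin m → ℂ)).injective
      rw [h, Submodule.map_top, LinearEquiv.range]
  obtain ⟨v, w, hv, hw, hb, hz, hineq⟩ := core_exists π hnt' hirr'
  have hnormv : ∑ i : Fin m, ‖v i‖ ^ 2 = 1 := by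
    rw [EuclideanSpace.norm_eq] at hv
    nlinarith [Real.sq_sqrt (by positivity : (0:ℝ) ≤ ∑ i, ‖v i‖^2)]
  have hnormw : ∑ i : Fin m, ‖w i‖ ^ 2 = 1 := by
    rw [EuclideanSpace.norm_eq] at hw
    nlinarith [Real.sq_sqrt (by positivity : (0:ℝ) ≤ ∑ i, ‖w i‖^2)]
  have hf : ∀ g : G, ⟪w, π g v⟫
      = ∑ i : Fin m, (starRingEnd ℂ) (w i) * (ρ g : Matrix (Fin m) (Fin m) ℂ).mulVec v i :=
    fun g => matIso_inner ρ g v w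
  refine ⟨v, w, hnormv, hnormw, ?_, ?_, ?_⟩
  · intro g; rw [← hf g]; exact hb g
  · rw [← Finset.sum_congr rfl (fun g _ => hf g)]; exact hz
  · have heq : ∀ h : G, (∑ g : G,
        (∑ i : Fin m, (starRingEnd ℂ) (w i) * (ρ g : Matrix (Fin m) (Fin m) ℂ).mulVec v i) *
          (starRingEnd ℂ) (∑ i : Fin m,
            (starRingEnd ℂ) (w i) * (ρ (g * h) : Matrix (Fin m) (Fin m) ℂ).mulVec v i))
        = ∑ g : G, ⟪w, π g v⟫ * (starRingEnd ℂ) ⟪w, π (g * h) v⟫ := by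
      intro h
      exact Finset.sum_congr rfl (fun g _ => by rw [hf g, hf (g*h)])
    calc (Fintype.card G : ℝ) ^ 3 / (m : ℝ) ^ 4
        = (Fintype.card G : ℝ) ^ 3 / (finrank ℂ (EuclideanSpace ℂ (Fin m)) : ℝ) ^ 4 := by
          rw [finrank_euclideanSpace_fin]
      _ ≤ ∑ h : G, ‖∑ g : G, ⟪w, π g v⟫ * (starRingEnd ℂ) ⟪w, π (g * h) v⟫‖ ^ 2 := hineq
      _ = _ := by
          refine Finset.sum_congr rfl (fun h _ => ?_)
          rw [heq h]

end Part1

section Weyl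
open Matrix
open scoped ComplexOrder
open scoped MatrixOrder
variable {d : ℕ}

lemma sum_mulVec {ι : Type*} (s : Finset ι) (M : ι → Matrix (Fin d) (Fin d) ℂ) (x : Fin d → ℂ) :
    (∑ i ∈ s, M i).mulVec x = ∑ i ∈ s, (M i).mulVec x := by
  ext j
  simp [Matrix.mulVec, dotProduct, Finset.sum_apply, Matrix.sum_apply, Finset.sum_mul]
  rw [Finset.sum_comm]

lemma dot_sum {ι : Type*} (s : Finset ι) (v : Fin d → ℂ) (w : ι → (Fin d → ℂ)) :
    dotProduct v (∑ i ∈ s, w i) = ∑ i ∈ s, dotProduct v (w i) := by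
  simp [dotProduct, Finset.mul_sum, Finset.sum_apply]
  rw [Finset.sum_comm]

lemma weyl_unitarization (ρ' : G →* Matrix.GeneralLinearGroup (Fin d) ℂ) :
    ∃ ρ2 : G →* Matrix.unitaryGroup (Fin d) ℂ, ∀ g : G, ρ2 g = 1 → ρ' g = 1 := by
  classical
  set A : G → Matrix (Fin d) (Fin d) ℂ := fun g => (ρ' g : Matrix (Fin d) (Fin d) ℂ) with hA
  have hAmul : ∀ g h : G, A g * A h = A (g * h) := by
    intro g h
    rw [hA]
    show (ρ' g).val * (ρ' h).val = (ρ' (g*h)).val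
    rw [← Units.val_mul, ← _root_.map_mul]
  have hA1 : A 1 = 1 := by rw [hA]; simp
  set P : Matrix (Fin d) (Fin d) ℂ := ∑ g : G, (A g)ᴴ * (A g) with hP
  have hterm : ∀ g : G, ((A g)ᴴ * (A g)).PosSemidef :=
    fun g => Matrix.posSemidef_conjTranspose_mul_self (A g)
  have hPsd : P.PosSemidef := by
    rw [hP]
    exact Matrix.posSemidef_sum _ (fun g _ => hterm g)
  have hPD : P.PosDef := by
    refine Matrix.posDef_iff_dotProduct_mulVec.mpr ⟨hPsd.1, fun x hx => ?_⟩
    rw [hP, _root_.sum_mulVec, dot_sum]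
    have h1 : 0 < dotProduct (star x) (((A 1)ᴴ * (A 1)).mulVec x) := by
      rw [hA1]
      simpa using dotProduct_star_self_pos_iff.mpr hx
    exact lt_of_lt_of_le h1 (Finset.single_le_sum (fun g _ => (hterm g).dotProduct_mulVec_nonneg x) (Finset.mem_univ 1))
  set Q := CFC.sqrt P with hQ
  have hQQ : Q * Q = P := CFC.sqrt_mul_sqrt_self P (Matrix.nonneg_iff_posSemidef.mpr hPsd)
  have hQH : Qᴴ = Q := (Matrix.nonneg_iff_posSemidef.mp (CFC.sqrt_nonneg P)).1
  have hQdet : IsUnit Q.det := by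
    have hdP : P.det ≠ 0 := ne_of_gt hPD.det_pos
    have : Q.det * Q.det = P.det := by rw [← Matrix.det_mul, hQQ]
    refine isUnit_iff_ne_zero.mpr (fun h0 => hdP ?_)
    rw [← this, h0, mul_zero]
  have hQiQ : Q⁻¹ * Q = 1 := Matrix.nonsing_inv_mul Q hQdet
  have hQQi : Q * Q⁻¹ = 1 := Matrix.mul_nonsing_inv Q hQdet
  have hQinvH : (Q⁻¹)ᴴ = Q⁻¹ := by rw [Matrix.conjTranspose_nonsing_inv, hQH]
  have hInvar : ∀ g : G, (A g)ᴴ * P * (A g) = P := by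
    intro g
    rw [hP, Finset.mul_sum, Finset.sum_mul]
    refine Fintype.sum_equiv (Equiv.mulRight g) _ _ (fun h => ?_)
    rw [Equiv.coe_mulRight, ← hAmul, Matrix.conjTranspose_mul]
    noncomm_ring
  have hMem : ∀ g : G, Q * (A g) * Q⁻¹ ∈ Matrix.unitaryGroup (Fin d) ℂ := by
    intro g
    rw [Matrix.mem_unitaryGroup_iff']
    have hstar : star (Q * (A g) * Q⁻¹) = Q⁻¹ * (A g)ᴴ * Q := by
      rw [Matrix.star_eq_conjTranspose, Matrix.conjTranspose_mul, Matrix.conjTranspose_mul,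
        hQinvH, hQH, Matrix.mul_assoc]
    rw [hstar]
    calc Q⁻¹ * (A g)ᴴ * Q * (Q * (A g) * Q⁻¹)
        = Q⁻¹ * ((A g)ᴴ * (Q * Q) * (A g)) * Q⁻¹ := by
          simp only [Matrix.mul_assoc]
      _ = Q⁻¹ * P * Q⁻¹ := by rw [hQQ, hInvar]
      _ = 1 := by rw [← hQQ, ← Matrix.mul_assoc, hQiQ, Matrix.one_mul, hQQi]
  refine ⟨MonoidHom.mk' (fun g => ⟨Q * (A g) * Q⁻¹, hMem g⟩) (fun g h => ?_), fun g hg => ?_⟩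
  · apply Subtype.ext
    show Q * (A (g * h)) * Q⁻¹ = (Q * (A g) * Q⁻¹) * (Q * (A h) * Q⁻¹)
    rw [← hAmul]
    calc Q * ((A g) * (A h)) * Q⁻¹
        = Q * (A g) * ((Q⁻¹ * Q) * ((A h) * Q⁻¹)) := by rw [hQiQ]; simp [Matrix.mul_assoc]
      _ = (Q * (A g) * Q⁻¹) * (Q * (A h) * Q⁻¹) := by simp [Matrix.mul_assoc]
  · have hm : Q * (A g) * Q⁻¹ = 1 := congrArg Subtype.val hg
    have : A g = 1 := by
      have h2 : Q⁻¹ * (Q * (A g) * Q⁻¹) * Q = Q⁻¹ * 1 * Q := by rw [hm]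
      rw [Matrix.mul_one, hQiQ] at h2
      calc A g = (Q⁻¹ * Q) * (A g) * (Q⁻¹ * Q) := by rw [hQiQ]; simp
        _ = Q⁻¹ * (Q * (A g) * Q⁻¹) * Q := by simp [Matrix.mul_assoc]
        _ = 1 := by rw [hm, Matrix.mul_one, hQiQ]
    exact Units.ext this

end Weyl

section Restrict
variable {V : Type} [NormedAddCommGroup V] [InnerProductSpace ℂ V] [FiniteDimensional ℂ V]
variable (π : G →* (V ≃ₗᵢ[ℂ] V)) (W : Submodule ℂ V)

lemma pi_inv_apply' (g : G) (x : V) : π g⁻¹ (π g x) = x := by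
  rw [pi_mul_apply, inv_mul_cancel, map_one]; rfl

/-- Restriction of an isometric action to an invariant subspace. -/
noncomputable def resIso (hW : ∀ (g : G) (x : V), x ∈ W → π g x ∈ W) :
    G →* (↥W ≃ₗᵢ[ℂ] ↥W) :=
  MonoidHom.mk' (fun g =>
    { toFun := fun x => ⟨π g x, hW g x x.2⟩
      map_add' := fun x y => by
        apply Subtype.ext
        simp
      map_smul' := fun c x => by
        apply Subtype.ext
        simp
      invFun := fun x => ⟨π g⁻¹ x, hW g⁻¹ x x.2⟩
      left_inv := fun x => by
        apply Subtype.ext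
        exact pi_inv_apply' π g x
      right_inv := fun x => by
        apply Subtype.ext
        exact pi_inv_apply π g x
      norm_map' := fun x => by
        rw [Submodule.coe_norm, Submodule.coe_norm]
        exact (π g).norm_map x })
    (fun g h => by
      apply LinearIsometryEquiv.ext
      intro x
      apply Subtype.ext
      exact (pi_mul_apply π g h x).symm)

lemma resIso_apply (hW : ∀ (g : G) (x : V), x ∈ W → π g x ∈ W) (g : G) (x : ↥W) :
    ((resIso π W hW g x : ↥W) : V) = π g (x : V) := rfl

end Restrict

section MinimalSubspace
variable {V : Type} [NormedAddCommGroup V] [InnerProductSpace ℂ V] [FiniteDimensional ℂ V]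

lemma part_two_aux (π : G →* (V ≃ₗᵢ[ℂ] V)) (hnt : ∃ g : G, π g ≠ 1) :
    ∃ M : ℕ, 1 ≤ M ∧ M ≤ finrank ℂ V ∧ ∃ f : G → ℂ,
      (∀ g : G, ‖f g‖ ≤ 1) ∧ ((∑ g : G, f g) = 0) ∧
      ((Fintype.card G : ℝ) ^ 3 / (M : ℝ) ^ 4 ≤
        ∑ h : G, ‖∑ g : G, f g * (starRingEnd ℂ) (f (g * h))‖ ^ 2) := by
  classical
  set Pk : ℕ → Prop := fun k => ∃ S : Submodule ℂ V,
    (∀ (g : G) (x : V), x ∈ S → π g x ∈ S) ∧ (∃ g : G, ∃ x ∈ S, π g x ≠ x) ∧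
      finrank ℂ ↥S = k with hPk
  have hex : ∃ k, Pk k := by
    obtain ⟨g, hg⟩ := hnt
    refine ⟨finrank ℂ (⊤ : Submodule ℂ V), ⊤, fun _ x _ => Submodule.mem_top, ⟨g, ?_⟩, rfl⟩
    by_contra h
    push_neg at h
    exact hg (LinearIsometryEquiv.ext fun x => h x Submodule.mem_top)
  obtain ⟨W, hWinv, hWnt, hWrank⟩ := Nat.find_spec hex
  set πW := resIso π W hWinv with hπW
  have hntW : ∃ g : G, πW g ≠ 1 := by
    obtain ⟨g, x, hxW, hne⟩ := hWnt
    refine ⟨g, fun h1 => hne ?_⟩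
    have := congrArg (fun (e : ↥W ≃ₗᵢ[ℂ] ↥W) => ((e ⟨x, hxW⟩ : ↥W) : V)) h1
    simpa [hπW, resIso_apply] using this
  have hirrW : ∀ S' : Submodule ℂ ↥W,
      (∀ (g : G) (x : ↥W), x ∈ S' → πW g x ∈ S') → S' = ⊥ ∨ S' = ⊤ := by
    intro S' hS'
    set U := S'.map W.subtype with hU
    have hUinv : ∀ (g : G) (x : V), x ∈ U → π g x ∈ U := by
      intro g x hx
      obtain ⟨y, hy, rfl⟩ := Submodule.mem_map.mp hx
      exact Submodule.mem_map.mpr ⟨πW g y, hS' g y hy, rfl⟩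
    have hUle : U ≤ W := Submodule.map_subtype_le W S'
    by_cases hUbot : U = ⊥
    · left
      apply Submodule.map_injective_of_injective W.injective_subtype
      rw [Submodule.map_bot]
      exact hUbot
    by_cases hUtop : U = W
    · right
      apply Submodule.map_injective_of_injective W.injective_subtype
      rw [← hU, hUtop, Submodule.map_subtype_top]
    exfalso
    have hUlt : U < W := lt_of_le_of_ne hUle hUtop
    have hUrank : finrank ℂ ↥U < Nat.find hex := by
      rw [← hWrank]
      exact Submodule.finrank_lt_finrank_of_lt hUlt
    have hUtriv : ∀ (g : G) (x : V), x ∈ U → π g x = x := by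
      by_contra hcon
      push_neg at hcon
      obtain ⟨g, x, hx, hne⟩ := hcon
      exact Nat.find_min hex hUrank ⟨U, hUinv, ⟨g, x, hx, hne⟩, rfl⟩
    set U' := Uᗮ ⊓ W with hU'
    have hU'inv : ∀ (g : G) (x : V), x ∈ U' → π g x ∈ U' := by
      intro g x hx
      obtain ⟨hx1, hx2⟩ := Submodule.mem_inf.mp hx
      refine Submodule.mem_inf.mpr ⟨?_, hWinv g x hx2⟩
      rw [Submodule.mem_orthogonal]
      intro u hu
      have h1 : π g⁻¹ u ∈ U := hUinv g⁻¹ u hu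
      have h2 : ⟪π g⁻¹ u, x⟫ = 0 := (Submodule.mem_orthogonal _ _).mp hx1 _ h1
      rw [pi_inner_left] at h2
      simpa using h2
    have hU'ne : U' ≠ W := by
      intro hEq
      apply hUbot
      have hUle' : U ≤ Uᗮ := le_trans hUle (by rw [← hEq]; exact inf_le_left)
      exact le_bot_iff.mp ((Submodule.orthogonal_disjoint U) le_rfl hUle')
    have hU'rank : finrank ℂ ↥U' < Nat.find hex := by
      rw [← hWrank]
      exact Submodule.finrank_lt_finrank_of_lt (lt_of_le_of_ne inf_le_right hU'ne)
    have hU'triv : ∀ (g : G) (x : V), x ∈ U' → π g x = x := by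
      by_contra hcon
      push_neg at hcon
      obtain ⟨g, x, hx, hne⟩ := hcon
      exact Nat.find_min hex hU'rank ⟨U', hU'inv, ⟨g, x, hx, hne⟩, rfl⟩
    obtain ⟨g, x, hxW, hne⟩ := hWnt
    apply hne
    set p : V := (U.orthogonalProjection x : V) with hp
    have hpU : p ∈ U := (U.orthogonalProjection x).2
    have hq : x - p ∈ Uᗮ := Submodule.sub_starProjection_mem_orthogonal (K := U) x
    have hqW : x - p ∈ W := Submodule.sub_mem W hxW (hUle hpU)
    calc π g x = π g (p + (x - p)) := by rw [add_sub_cancel]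
      _ = π g p + π g (x - p) := map_add _ _ _
      _ = p + (x - p) := by
          rw [hUtriv g p hpU, hU'triv g (x - p) (Submodule.mem_inf.mpr ⟨hq, hqW⟩)]
      _ = x := by rw [add_sub_cancel]
  obtain ⟨v, w, hv, hw, hb, hz, hineq⟩ := core_exists πW hntW hirrW
  have hrankW : finrank ℂ ↥W = Nat.find hex := hWrank
  have hM1 : 1 ≤ Nat.find hex := by
    obtain ⟨g, x, hxW, hne⟩ := hWnt
    have hx0 : x ≠ 0 := by
      intro h0
      exact hne (by rw [h0, map_zero])
    have : Nontrivial ↥W := ⟨⟨⟨x, hxW⟩, 0, by simp [hx0]⟩⟩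
    rw [← hrankW]
    exact Module.finrank_pos
  have hMd : Nat.find hex ≤ finrank ℂ V := by
    rw [← hrankW]
    exact Submodule.finrank_le W
  refine ⟨Nat.find hex, hM1, hMd, fun g => ⟪w, πW g v⟫, hb, hz, ?_⟩
  rw [← hrankW]
  simpa using hineq

end MinimalSubspace

lemma rpow_bound {c : ℝ} {M d : ℕ} (hM1 : 1 ≤ M) (hMd : M ≤ d)
    (hc : 1 / (M:ℝ)^4 ≤ c) : c ^ (-(1:ℝ)/4) ≤ (d:ℝ) := by
  have hMR : (1:ℝ) ≤ (M:ℝ) := by exact_mod_cast hM1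
  have hMpos : (0:ℝ) < (M:ℝ) := by linarith
  have hx : (0:ℝ) < 1/(M:ℝ)^4 := by positivity
  have h1 : c ^ (-(1:ℝ)/4) ≤ (1/(M:ℝ)^4) ^ (-(1:ℝ)/4) :=
    Real.rpow_le_rpow_of_nonpos hx hc (by norm_num)
  have h2 : (1/(M:ℝ)^4 : ℝ) = (M:ℝ) ^ (-(4:ℝ)) := by
    rw [Real.rpow_neg hMpos.le, show ((4:ℝ)) = ((4:ℕ):ℝ) by norm_num,
      Real.rpow_natCast (M:ℝ) 4, one_div]
  have h3 : ((M:ℝ) ^ (-(4:ℝ))) ^ (-(1:ℝ)/4) = (M:ℝ) := by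
    rw [← Real.rpow_mul hMpos.le]
    norm_num
  have h4 : (M:ℝ) ≤ (d:ℝ) := by exact_mod_cast hMd
  calc c ^ (-(1:ℝ)/4) ≤ (1/(M:ℝ)^4) ^ (-(1:ℝ)/4) := h1
    _ = (M:ℝ) := by rw [h2, h3]
    _ ≤ (d:ℝ) := h4

/-- Part of the proof of Theorem 4.5 (Gowers, Quasirandom Groups). -/
theorem matrix_coefficient_not_quasirandom'
    (G : Type) [Group G] [Fintype G] (m : ℕ)
    (ρ : G →* Matrix.unitaryGroup (Fin m) ℂ)
    (hnt : ∃ g : G, ρ g ≠ 1)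
    (hirr : ∀ S : Submodule ℂ (Fin m → ℂ),
      (∀ (g : G) (x : Fin m → ℂ), x ∈ S →
        (ρ g : Matrix (Fin m) (Fin m) ℂ).mulVec x ∈ S) → S = ⊥ ∨ S = ⊤) :
    (∃ v w : Fin m → ℂ,
      (∑ i : Fin m, ‖v i‖ ^ 2 = 1) ∧ (∑ i : Fin m, ‖w i‖ ^ 2 = 1) ∧
      (∀ g : G,
        ‖∑ i : Fin m, (starRingEnd ℂ) (w i) * (ρ g : Matrix (Fin m) (Fin m) ℂ).mulVec v i‖ ≤ 1) ∧
      ((∑ g : G, ∑ i : Fin m,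
          (starRingEnd ℂ) (w i) * (ρ g : Matrix (Fin m) (Fin m) ℂ).mulVec v i) = 0) ∧
      ((Fintype.card G : ℝ) ^ 3 / (m : ℝ) ^ 4 ≤
        ∑ h : G, ‖∑ g : G,
          (∑ i : Fin m, (starRingEnd ℂ) (w i) * (ρ g : Matrix (Fin m) (Fin m) ℂ).mulVec v i) *
            (starRingEnd ℂ) (∑ i : Fin m,
              (starRingEnd ℂ) (w i) * (ρ (g * h) : Matrix (Fin m) (Fin m) ℂ).mulVec v i)‖ ^ 2))
    ∧
    (∀ c : ℝ,
      (∀ f : G → ℂ, (∀ g : G, ‖f g‖ ≤ 1) → (∑ g : G, f g) = 0 →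
        ∑ h : G, ‖∑ g : G, f g * (starRingEnd ℂ) (f (g * h))‖ ^ 2
          ≤ c * (Fintype.card G : ℝ) ^ 3) →
      ∀ (d : ℕ) (ρ' : G →* Matrix.GeneralLinearGroup (Fin d) ℂ),
        (∃ g, ρ' g ≠ 1) → c ^ (-(1 : ℝ) / 4) ≤ (d : ℝ)) := by
  constructor
  · exact part_one m ρ hnt hirr
  · intro c hq d ρ' hnt'
    obtain ⟨g0, hg0⟩ := hnt'
    rcases Nat.eq_zero_or_pos d with hd0 | hdpos
    · exfalso
      apply hg0
      subst hd0
      haveI : Subsingleton (Matrix (Fin 0) (Fin 0) ℂ) := by infer_instance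
      exact Units.ext (Subsingleton.elim _ _)
    obtain ⟨ρ2, hρ2⟩ := weyl_unitarization ρ'
    have hnt2 : ∃ g : G, ρ2 g ≠ 1 := ⟨g0, fun h => hg0 (hρ2 g0 h)⟩
    set π := matIso ρ2 with hπ
    have hntπ : ∃ g : G, π g ≠ 1 := by
      obtain ⟨g, hg⟩ := hnt2
      exact ⟨g, matIso_ne_one ρ2 g hg⟩
    obtain ⟨M, hM1, hMd, f, hb, hz, hineq⟩ := part_two_aux π hntπ
    rw [finrank_euclideanSpace_fin] at hMd
    have hN1 : 1 ≤ Fintype.card G := Fintype.card_pos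
    have hN3 : (0:ℝ) < (Fintype.card G : ℝ)^3 := by positivity
    have hchain : (Fintype.card G : ℝ)^3 / (M:ℝ)^4 ≤ c * (Fintype.card G : ℝ)^3 :=
      le_trans hineq (hq f hb hz)
    have hc : 1 / (M:ℝ)^4 ≤ c := by
      have hM4 : (0:ℝ) < (M:ℝ)^4 := by
        have : (0:ℝ) < (M:ℝ) := by exact_mod_cast hM1
        positivity
      have heq : 1/(M:ℝ)^4
          = ((Fintype.card G:ℝ)^3/(M:ℝ)^4)/(Fintype.card G:ℝ)^3 := by
        field_simp
      rw [heq, div_le_iff₀ hN3]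
      exact hchain
    exact rpow_bound hM1 hMd hc


/-- Part of the proof of Theorem 4.5 (Gowers, Quasirandom Groups): given a
nontrivial irreducible unitary representation `ρ : G → U(m)` of a finite group
`G` of order `n`, there are unit vectors `v, w ∈ ℂᵐ` such that the matrix
coefficient `f(g) = ⟨ρ(g)v, w⟩` takes values in the closed unit disc, sums to
zero, and satisfies `∑_h |∑_g f(g) conj(f(gh))|² ≥ n³/m⁴`. In particular, if
every average-zero function into the closed unit disc is `c`-quasirandom, then
every nontrivial representation of `G` has dimension at least `c^{-1/4}`. -/
theorem matrix_coefficient_not_quasirandom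
    (G : Type) [Group G] [Fintype G] (m : ℕ)
    (ρ : G →* Matrix.unitaryGroup (Fin m) ℂ)
    (hnt : ∃ g : G, ρ g ≠ 1)
    (hirr : ∀ S : Submodule ℂ (Fin m → ℂ),
      (∀ (g : G) (x : Fin m → ℂ), x ∈ S →
        (ρ g : Matrix (Fin m) (Fin m) ℂ).mulVec x ∈ S) → S = ⊥ ∨ S = ⊤) :
    (∃ v w : Fin m → ℂ,
      (∑ i : Fin m, ‖v i‖ ^ 2 = 1) ∧ (∑ i : Fin m, ‖w i‖ ^ 2 = 1) ∧
      (∀ g : G,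
        ‖∑ i : Fin m, (starRingEnd ℂ) (w i) * (ρ g : Matrix (Fin m) (Fin m) ℂ).mulVec v i‖ ≤ 1) ∧
      ((∑ g : G, ∑ i : Fin m,
          (starRingEnd ℂ) (w i) * (ρ g : Matrix (Fin m) (Fin m) ℂ).mulVec v i) = 0) ∧
      ((Fintype.card G : ℝ) ^ 3 / (m : ℝ) ^ 4 ≤
        ∑ h : G, ‖∑ g : G,
          (∑ i : Fin m, (starRingEnd ℂ) (w i) * (ρ g : Matrix (Fin m) (Fin m) ℂ).mulVec v i) *
            (starRingEnd ℂ) (∑ i : Fin m,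
              (starRingEnd ℂ) (w i) * (ρ (g * h) : Matrix (Fin m) (Fin m) ℂ).mulVec v i)‖ ^ 2))
    ∧
    (∀ c : ℝ,
      (∀ f : G → ℂ, (∀ g : G, ‖f g‖ ≤ 1) → (∑ g : G, f g) = 0 →
        ∑ h : G, ‖∑ g : G, f g * (starRingEnd ℂ) (f (g * h))‖ ^ 2
          ≤ c * (Fintype.card G : ℝ) ^ 3) →
      ∀ (d : ℕ) (ρ' : G →* Matrix.GeneralLinearGroup (Fin d) ℂ),
        (∃ g, ρ' g ≠ 1) → c ^ (-(1 : ℝ) / 4) ≤ (d : ℝ)) := by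
  exact matrix_coefficient_not_quasirandom' G m ρ hnt hirr
end

section
/- There is an absolute constant c > 0 (one may take c = 1/2000) with the following property: if G is a finite group of order n that has a nontrivial complex representation of dimension k, then G has a product-free subset of size at least c^k·n. -/
open Polynomial Real MeasureTheory Metric ENNReal Matrix
section


lemma exists_eigen {k m : ℕ} (hm : 0 < m) (f : Module.End ℂ (Fin k → ℂ))
    (hf : f ^ m = 1) (hf1 : f ≠ 1) :
    ∃ ζ : ℂ, ζ ≠ 1 ∧ ζ ^ m = 1 ∧ ∃ w : Fin k → ℂ, w ≠ 0 ∧ f w = ζ • w := by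
  have : Nontrivial (Module.End ℂ (Fin k → ℂ)) := ⟨⟨f, 1, hf1⟩⟩
  have hint : IsIntegral ℂ f := Algebra.IsIntegral.isIntegral f
  set p := minpoly ℂ f with hp
  have hdvd : p ∣ X ^ m - 1 := by
    apply minpoly.dvd
    simp [_root_.map_pow, hf, sub_self]
  have hsep : (X ^ m - (1 : ℂ[X])).Separable := by
    have := Polynomial.separable_X_pow_sub_C (F := ℂ) 1 (by exact_mod_cast hm.ne') one_ne_zero
    simpa using this
  have hpsep : p.Separable := hsep.of_dvd hdvd
  have hmonic : p.Monic := minpoly.monic hint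
  have hdeg : 0 < p.natDegree := minpoly.natDegree_pos hint
  have hsplits : p.Splits := IsAlgClosed.splits p
  have hroot : ∃ ζ ∈ p.roots, ζ ≠ 1 := by
    by_contra h
    push_neg at h
    have hprod := hsplits.eq_prod_roots_of_monic hmonic
    have hrep : p.roots = Multiset.replicate p.roots.card 1 :=
      Multiset.eq_replicate.2 ⟨rfl, fun b hb => h b hb⟩
    have hcard : p.roots.card = p.natDegree := Polynomial.splits_iff_card_roots.mp hsplits
    rw [hrep, hcard] at hprod
    simp only [Multiset.map_replicate, Multiset.prod_replicate] at hprod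
    have hn1 : p.natDegree = 1 := by
      rcases Nat.lt_or_ge p.natDegree 2 with h2 | h2
      · omega
      · exfalso
        have hdd : (X - C (1:ℂ)) * (X - C 1) ∣ p := by
          rw [hprod, ← pow_two]
          exact pow_dvd_pow _ h2
        exact (Polynomial.not_isUnit_X_sub_C (1:ℂ)) (hpsep.squarefree _ hdd)
    have hpeq : p = X - C 1 := by rw [hprod, hn1, pow_one]
    have : aeval f p = 0 := by rw [hp]; exact minpoly.aeval ℂ f
    rw [hpeq] at this
    simp only [_root_.map_sub, aeval_X, aeval_C] at this
    apply hf1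
    have : f = algebraMap ℂ _ 1 := by rwa [sub_eq_zero] at this
    simpa using this
  obtain ⟨ζ, hζmem, hζ1⟩ := hroot
  have hroot' : p.IsRoot ζ := by
    have := Polynomial.isRoot_of_mem_roots hζmem
    exact this
  have heig : f.HasEigenvalue ζ := Module.End.hasEigenvalue_iff_isRoot.2 hroot'
  obtain ⟨w, hw⟩ := heig.exists_hasEigenvector
  refine ⟨ζ, hζ1, ?_, w, hw.2, hw.apply_eq_smul⟩
  -- ζ ^ m = 1
  have hfm : (f ^ m) w = w := by rw [hf]; rfl
  have hpow : (f ^ m) w = ζ ^ m • w := hw.pow_apply m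
  have : ζ ^ m • w = w := by rw [← hpow, hfm]
  have hw0 := hw.2
  by_contra hne
  apply hw0
  have : (ζ ^ m - 1) • w = 0 := by rw [sub_smul, this, one_smul, sub_self]
  have := smul_eq_zero.mp this
  rcases this with h | h
  · exact absurd (by linear_combination h) hne
  · exact h


lemma exists_pow_re_le {m : ℕ} (hm : 0 < m) {ζ : ℂ} (h1 : ζ ^ m = 1) (hne : ζ ≠ 1) :
    ∃ j : ℕ, ((ζ ^ j).re ≤ -(1/2) ∧ ‖ζ ^ j‖ = 1) := by
  have habs : ‖ζ‖ = 1 := by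
    have h : ‖ζ‖ ^ m = 1 := by rw [← norm_pow, h1, norm_one]
    rcases (pow_eq_one_iff_cases.mp h) with h' | h' | h'
    · omega
    · exact h'
    · exfalso; have := norm_nonneg ζ; linarith [h'.1]
  have hfin : IsOfFinOrder ζ := isOfFinOrder_iff_pow_eq_one.2 ⟨m, hm, h1⟩
  set d := orderOf ζ with hd
  have hd0 : d ≠ 0 := hfin.orderOf_pos.ne'
  have hd1 : d ≠ 1 := fun h => hne (orderOf_eq_one_iff.mp h)
  have hd2 : 2 ≤ d := by omega
  have : NeZero d := ⟨hd0⟩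
  have hprim : IsPrimitiveRoot ζ d := IsPrimitiveRoot.orderOf ζ
  set a : ℕ := d / 2 with ha
  set θ : ℝ := 2 * π * a / d with hθ
  set η : ℂ := Complex.exp ((θ : ℝ) * Complex.I) with hη
  have hηd : η ^ d = 1 := by
    rw [hη, ← Complex.exp_nat_mul]
    have : (d : ℂ) * ((θ : ℝ) * Complex.I) = (a : ℤ) * (2 * (π:ℂ) * Complex.I) := by
      have hdne : (d : ℂ) ≠ 0 := Nat.cast_ne_zero.mpr hd0
      push_cast [hθ]
      field_simp
    rw [this, Complex.exp_int_mul_two_pi_mul_I]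
  obtain ⟨i, _, hi⟩ := hprim.eq_pow_of_pow_eq_one hηd
  refine ⟨i, ?_, by rw [norm_pow, habs, one_pow]⟩
  rw [hi, hη, Complex.exp_ofReal_mul_I_re]
  rcases Nat.even_or_odd d with he | ho
  · obtain ⟨e, he⟩ := he
    have h2a : 2 * a = d := by omega
    have : θ = π := by
      rw [hθ]
      have hdne : (d : ℝ) ≠ 0 := Nat.cast_ne_zero.mpr hd0
      have h2a' : (2 : ℝ) * a = d := by exact_mod_cast h2a
      field_simp
      linear_combination h2a'
    rw [this, Real.cos_pi]; norm_num
  · obtain ⟨e, ho⟩ := ho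
    have h2a : 2 * a = d - 1 := by omega
    have hθeq : θ = π - π / d := by
      rw [hθ]
      have hdne : (d : ℝ) ≠ 0 := Nat.cast_ne_zero.mpr hd0
      have h2a' : (2 : ℝ) * a = (d : ℝ) - 1 := by
        have h2a'' : 2 * a + 1 = d := by omega
        have : ((2 * a + 1 : ℕ) : ℝ) = (d : ℝ) := by rw [h2a'']
        push_cast at this
        linarith
      field_simp
      linear_combination h2a'
    rw [hθeq, Real.cos_pi_sub]
    have hcos : (1:ℝ)/2 ≤ Real.cos (π / d) := by
      rw [← Real.cos_pi_div_three]
      apply Real.cos_le_cos_of_nonneg_of_le_pi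
      · positivity
      · linarith [Real.pi_pos]
      · have : (3:ℝ) ≤ d := by exact_mod_cast (by omega : 3 ≤ d)
        rw [div_le_div_iff₀ (by positivity) (by norm_num)]
        nlinarith [Real.pi_pos]
    linarith


lemma packing_bound {d : ℕ} (T : Finset (EuclideanSpace ℝ (Fin d)))
    (h1 : ∀ x ∈ T, ‖x‖ ≤ 1)
    (hsep : ∀ x ∈ T, ∀ y ∈ T, x ≠ y → (1/2 : ℝ) < dist x y) :
    T.card ≤ 5 ^ d := by
  classical
  set μ : Measure (EuclideanSpace ℝ (Fin d)) := volume with hμ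
  have hfr : Module.finrank ℝ (EuclideanSpace ℝ (Fin d)) = d := finrank_euclideanSpace_fin
  have hdisj : Set.PairwiseDisjoint (T : Set (EuclideanSpace ℝ (Fin d)))
      (fun x => closedBall x (4⁻¹ : ℝ)) := by
    intro x hx y hy hxy
    apply closedBall_disjoint_closedBall
    have := hsep x hx y hy hxy
    linarith
  have hsub : (⋃ x ∈ T, closedBall x (4⁻¹ : ℝ)) ⊆ closedBall 0 (5/4 : ℝ) := by
    intro y hy
    simp only [Set.mem_iUnion] at hy
    obtain ⟨x, hx, hyx⟩ := hy
    rw [mem_closedBall] at *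
    have h1x := h1 x hx
    calc dist y 0 ≤ dist y x + dist x 0 := dist_triangle _ _ _
    _ ≤ 4⁻¹ + 1 := by
        have : dist x 0 = ‖x‖ := by simp
        linarith [this ▸ h1x, hyx]
    _ ≤ 5/4 := by norm_num
  have hmeas : μ (⋃ x ∈ T, closedBall x (4⁻¹ : ℝ)) = ∑ x ∈ T, μ (closedBall x (4⁻¹ : ℝ)) := by
    apply measure_biUnion_finset hdisj
    intro x _
    exact measurableSet_closedBall
  have hball : ∀ x : EuclideanSpace ℝ (Fin d),
      μ (closedBall x (4⁻¹ : ℝ)) = ENNReal.ofReal ((4⁻¹:ℝ) ^ d) * μ (ball 0 1) := by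
    intro x
    rw [hμ, Measure.addHaar_closedBall _ x (by norm_num : (0:ℝ) ≤ 4⁻¹), hfr]
  have hbig : μ (closedBall 0 (5/4 : ℝ)) = ENNReal.ofReal ((5/4:ℝ) ^ d) * μ (ball 0 1) := by
    rw [hμ, Measure.addHaar_closedBall _ _ (by norm_num : (0:ℝ) ≤ 5/4), hfr]
  have hB0 : μ (ball 0 1) ≠ 0 := (measure_ball_pos μ 0 one_pos).ne'
  have hBtop : μ (ball 0 1) ≠ ⊤ := measure_ball_lt_top.ne
  have key : (T.card : ℝ≥0∞) * (ENNReal.ofReal ((4⁻¹:ℝ) ^ d) * μ (ball 0 1))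
      ≤ ENNReal.ofReal ((5/4:ℝ) ^ d) * μ (ball 0 1) := by
    calc (T.card : ℝ≥0∞) * (ENNReal.ofReal ((4⁻¹:ℝ) ^ d) * μ (ball 0 1))
        = ∑ x ∈ T, (ENNReal.ofReal ((4⁻¹:ℝ) ^ d) * μ (ball 0 1)) := by
          rw [Finset.sum_const, nsmul_eq_mul]
    _ = ∑ x ∈ T, μ (closedBall x (4⁻¹ : ℝ)) := by
          apply Finset.sum_congr rfl; intro x _; rw [hball x]
    _ = μ (⋃ x ∈ T, closedBall x (4⁻¹ : ℝ)) := hmeas.symm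
    _ ≤ μ (closedBall 0 (5/4 : ℝ)) := measure_mono hsub
    _ = _ := hbig
  rw [← mul_assoc] at key
  have key2 : (T.card : ℝ≥0∞) * ENNReal.ofReal ((4⁻¹:ℝ) ^ d) ≤ ENNReal.ofReal ((5/4:ℝ) ^ d) :=
    (ENNReal.mul_le_mul_iff_left hB0 hBtop).mp key
  have h54 : ENNReal.ofReal ((5/4:ℝ) ^ d) = ENNReal.ofReal ((5:ℝ) ^ d) * ENNReal.ofReal ((4⁻¹:ℝ) ^ d) := by
    rw [← ENNReal.ofReal_mul (by positivity)]
    congr 1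
    rw [← mul_pow]
    norm_num
  rw [h54] at key2
  have key3 : (T.card : ℝ≥0∞) ≤ ENNReal.ofReal ((5:ℝ) ^ d) :=
    (ENNReal.mul_le_mul_iff_left (by positivity) ENNReal.ofReal_ne_top).mp key2
  have : ((T.card : ℕ) : ℝ≥0∞) ≤ ((5 ^ d : ℕ) : ℝ≥0∞) := by
    convert key3 using 2
    rw [show ((5:ℝ) ^ d) = ((5 ^ d : ℕ) : ℝ) by push_cast; ring, ENNReal.ofReal_natCast]
  exact_mod_cast this

end

set_option maxHeartbeats 1000000

/-- Theorem 4.6 (Gowers, Quasirandom Groups): there is an absolute constant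
`c > 0` such that any finite group of order `n` with a nontrivial complex
representation of dimension `k` has a product-free subset of size at least
`cᵏ n`. -/
theorem product_free_from_low_dim_rep :
    ∃ c : ℝ, 0 < c ∧
      ∀ (G : Type) [Group G] [Fintype G] (k : ℕ)
        (ρ : G →* Matrix.GeneralLinearGroup (Fin k) ℂ),
        (∃ g, ρ g ≠ 1) →
        ∃ Y : Finset G, (∀ x ∈ Y, ∀ y ∈ Y, ∀ z ∈ Y, x * y ≠ z) ∧
          c ^ k * (Fintype.card G : ℝ) ≤ (Y.card : ℝ) := by
  classical
  refine ⟨1/25, by norm_num, ?_⟩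
  intro G _ _ k ρ hρ
  obtain ⟨g₀, hg₀⟩ := hρ
  set n := Fintype.card G with hn
  set M : G → Matrix (Fin k) (Fin k) ℂ := fun g => (ρ g : Matrix (Fin k) (Fin k) ℂ) with hM
  have hMmul : ∀ a b, M (a * b) = M a * M b := by
    intro a b; rw [hM]; simp [_root_.map_mul]
  have hM1 : M 1 = 1 := by rw [hM]; simp
  -- the endomorphism
  set T := Matrix.toLinAlgEquiv' (R := ℂ) (n := Fin k) with hT
  have hfne : T (M g₀) ≠ 1 := by
    intro h
    apply hg₀
    apply Units.ext
    have : M g₀ = 1 := by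
      apply T.injective
      rw [h, _root_.map_one]
    simpa [hM] using this
  have hford : T (M g₀) ^ n = 1 := by
    rw [← _root_.map_pow]
    have : M g₀ ^ n = 1 := by
      have h1 : g₀ ^ n = 1 := pow_card_eq_one
      have : (ρ g₀) ^ n = 1 := by rw [← _root_.map_pow, h1, _root_.map_one]
      calc M g₀ ^ n = ((ρ g₀ ^ n : Matrix.GeneralLinearGroup (Fin k) ℂ) : Matrix (Fin k) (Fin k) ℂ) := by
            rw [hM]; simp [Units.val_pow_eq_pow_val]
      _ = 1 := by rw [this]; rfl
    rw [this, _root_.map_one]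
  have hnpos : 0 < n := Fintype.card_pos
  obtain ⟨ζ, hζ1, hζn, w, hw0, hww⟩ := exists_eigen hnpos (T (M g₀)) hford hfne
  have hMw : M g₀ *ᵥ w = ζ • w := by
    have := hww
    rw [hT, Matrix.toLinAlgEquiv'_apply] at this
    simpa [Matrix.toLin'_apply] using this
  have hMpow : ∀ i : ℕ, M (g₀ ^ i) *ᵥ w = ζ ^ i • w := by
    intro i
    induction i with
    | zero => simp [hM1]
    | succ i ih =>
      rw [pow_succ, pow_succ, hMmul, ← Matrix.mulVec_mulVec, hMw, Matrix.mulVec_smul, ih,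
        smul_smul, mul_comm]
  obtain ⟨j, hre, habs⟩ := exists_pow_re_le hnpos hζn hζ1
  set gg := g₀ ^ j with hgg
  set ξ := ζ ^ j with hξ
  have hMgg : M gg *ᵥ w = ξ • w := hMpow j
  -- the invariant embedding
  set E := EuclideanSpace ℂ (G × Fin k) with hE
  set Φ : (Fin k → ℂ) →ₗ[ℂ] E :=
    (WithLp.linearEquiv 2 ℂ ((G × Fin k) → ℂ)).symm.toLinearMap.comp
      (LinearMap.pi (fun q : G × Fin k => (LinearMap.proj q.2).comp (Matrix.mulVecLin (M q.1)))) with hΦdef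
  have hΦ : ∀ (u : Fin k → ℂ) (q : G × Fin k), Φ u q = (M q.1 *ᵥ u) q.2 := fun u q => rfl
  have hΦ0 : ∀ u : Fin k → ℂ, Φ u = 0 → u = 0 := by
    intro u h
    funext i
    have := congrFun (congrArg (fun (x : E) => (x : (G × Fin k) → ℂ)) h) (1, i)
    simpa [hΦ u (1, i), hM1, Matrix.one_mulVec] using this
  have hinv : ∀ (x : G) (u : Fin k → ℂ), ‖Φ (M x *ᵥ u)‖ = ‖Φ u‖ := by
    intro x u
    rw [EuclideanSpace.norm_eq, EuclideanSpace.norm_eq]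
    congr 1
    apply Fintype.sum_equiv ((Equiv.mulRight x).prodCongr (Equiv.refl (Fin k)))
    intro q
    rw [hΦ, hΦ]
    simp only [Equiv.prodCongr_apply, Equiv.coe_mulRight, Equiv.refl_apply, Prod.map]
    rw [Matrix.mulVec_mulVec, ← hMmul]
  -- normalize the eigenvector
  have hr0 : 0 < ‖Φ w‖ := by
    rcases eq_or_lt_of_le (norm_nonneg (Φ w)) with h | h
    · exfalso; exact hw0 (hΦ0 w (by rwa [eq_comm, norm_eq_zero] at h))
    · exact h
  set v : Fin k → ℂ := ((‖Φ w‖ : ℂ)⁻¹) • w with hv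
  have hMggv : M gg *ᵥ v = ξ • v := by
    rw [hv, Matrix.mulVec_smul, hMgg, smul_comm]
  have hnv : ‖Φ v‖ = 1 := by
    rw [hv, _root_.map_smul, norm_smul, norm_inv, Complex.norm_real,
      Real.norm_of_nonneg (norm_nonneg _), inv_mul_cancel₀ hr0.ne']
  set p : G → E := fun x => Φ (M x *ᵥ v) with hp
  have hp1 : p 1 = Φ v := by rw [hp]; simp only [hM1, Matrix.one_mulVec]
  have hpnorm : ∀ x, ‖p x‖ = 1 := by
    intro x; rw [hp]; simp only; rw [hinv]; exact hnv
  have hdistinv : ∀ a x y : G, ‖p (a * x) - p (a * y)‖ = ‖p x - p y‖ := by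
    intro a x y
    have h1 : p (a * x) - p (a * y) = Φ (M a *ᵥ (M x *ᵥ v - M y *ᵥ v)) := by
      rw [hp]; simp only
      rw [← _root_.map_sub, hMmul, hMmul, ← Matrix.mulVec_mulVec, ← Matrix.mulVec_mulVec,
        ← Matrix.mulVec_sub]
    rw [h1, hinv, _root_.map_sub]
  have hpgg : ∀ x : G, p (x * gg) = ξ • p x := by
    intro x
    rw [hp]; simp only
    rw [hMmul, ← Matrix.mulVec_mulVec, hMggv, Matrix.mulVec_smul, _root_.map_smul]
  have hkey : ∀ z1 z2 z3 : G, ‖p z1 - p 1‖ ≤ 1/2 → ‖p z2 - p 1‖ ≤ 1/2 →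
      ‖p z3 - p 1‖ ≤ 1/2 → z1 * gg * z2 ≠ z3 := by
    intro z1 z2 z3 h1 h2 h3 heq
    have e1 : ‖p (z1 * gg * z2) - p (z1 * gg)‖ ≤ 1/2 := by
      have hh := hdistinv (z1 * gg) z2 1
      rw [mul_one] at hh
      rw [hh]; exact h2
    have e2 : p (z1 * gg) = ξ • p z1 := hpgg z1
    have habsξ : ‖ξ‖ = 1 := by rw [habs]
    have e3 : ‖ξ • p z1 - ξ • p 1‖ ≤ 1/2 := by
      rw [← smul_sub, norm_smul, habsξ, one_mul]; exact h1
    have e4 : ‖p z3 - ξ • p 1‖ ≤ 1 := by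
      have hsplit : p z3 - ξ • p 1
          = (p (z1 * gg * z2) - p (z1 * gg)) + (ξ • p z1 - ξ • p 1) := by
        rw [← heq, e2]; abel
      calc ‖p z3 - ξ • p 1‖ ≤ ‖p (z1 * gg * z2) - p (z1 * gg)‖ + ‖ξ • p z1 - ξ • p 1‖ := by
            rw [hsplit]; exact norm_add_le _ _
      _ ≤ 1 := by linarith
    have e5 : ‖ξ • p 1 - p 1‖ ≤ 3/2 := by
      calc ‖ξ • p 1 - p 1‖ ≤ ‖ξ • p 1 - p z3‖ + ‖p z3 - p 1‖ := norm_sub_le_norm_sub_add_norm_sub _ _ _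
      _ ≤ 3/2 := by rw [norm_sub_rev]; linarith
    have e6 : ‖ξ • p 1 - p 1‖ = ‖ξ - 1‖ := by
      have : ξ • p 1 - p 1 = (ξ - 1) • p 1 := by rw [sub_smul, one_smul]
      rw [this, norm_smul, hpnorm, mul_one]
    have e7 : 3 ≤ ‖ξ - 1‖ ^ 2 := by
      have hsq : ‖ξ - 1‖ ^ 2 = Complex.normSq (ξ - 1) := Complex.sq_norm _
      have hsq2 : Complex.normSq ξ = 1 := by
        have := Complex.sq_norm ξ
        rw [habs] at this; linarith [this]
      rw [hsq]
      simp only [Complex.normSq_apply, Complex.sub_re, Complex.sub_im, Complex.one_re,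
        Complex.one_im, Complex.normSq_apply] at hsq2 ⊢
      nlinarith [hre]
    rw [e6] at e5
    nlinarith [norm_nonneg (ξ - 1)]
  -- the subspace where the orbit lives
  set W : Submodule ℂ E := LinearMap.range Φ with hW
  letI : InnerProductSpace ℝ ↥W := InnerProductSpace.complexToReal
  set d := Module.finrank ℝ ↥W with hd
  have hdle : d ≤ 2 * k := by
    have h1 : Module.finrank ℝ ℂ * Module.finrank ℂ ↥W = Module.finrank ℝ ↥W :=
      Module.finrank_mul_finrank ℝ ℂ ↥W
    have h2 : Module.finrank ℂ ↥W ≤ k := by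
      have hh := LinearMap.finrank_range_le Φ
      rwa [Module.finrank_fin_fun] at hh
    rw [hd, ← h1, Complex.finrank_real_complex]
    omega
  set ψ := (stdOrthonormalBasis ℝ ↥W).repr with hψ
  have hpmem : ∀ x, p x ∈ W := fun x => ⟨M x *ᵥ v, rfl⟩
  set q : G → EuclideanSpace ℝ (Fin d) := fun x => ψ ⟨p x, hpmem x⟩ with hq
  have hqdist : ∀ x y, dist (q x) (q y) = ‖p x - p y‖ := by
    intro x y
    rw [hq]; simp only
    rw [dist_eq_norm, ← _root_.map_sub, LinearIsometryEquiv.norm_map]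
    rfl
  have hqnorm : ∀ x, ‖q x‖ = 1 := by
    intro x
    rw [hq]; simp only [LinearIsometryEquiv.norm_map]
    rw [show ‖(⟨p x, hpmem x⟩ : ↥W)‖ = ‖p x‖ from rfl, hpnorm]
  have hsepbound : ∀ S : Finset G,
      (∀ s ∈ S, ∀ t ∈ S, s ≠ t → (1/2:ℝ) < ‖p s - p t‖) → S.card ≤ 25 ^ k := by
    intro S hS
    have hinj : Set.InjOn q ↑S := by
      intro a ha b hb hab
      by_contra hne
      have h' := hS a ha b hb hne
      rw [← hqdist] at h'
      rw [hab] at h'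
      simp at h'
      linarith
    have hb := packing_bound (S.image q) ?_ ?_
    · rw [Finset.card_image_of_injOn hinj] at hb
      calc S.card ≤ 5 ^ d := hb
      _ ≤ 5 ^ (2 * k) := Nat.pow_le_pow_right (by norm_num) hdle
      _ = 25 ^ k := by rw [pow_mul]; norm_num
    · intro x hx
      obtain ⟨a, _, rfl⟩ := Finset.mem_image.mp hx
      exact le_of_eq (hqnorm a)
    · intro x hx y hy hxy
      obtain ⟨a, ha, rfl⟩ := Finset.mem_image.mp hx
      obtain ⟨b, hb', rfl⟩ := Finset.mem_image.mp hy
      have hab : a ≠ b := fun h => hxy (by rw [h])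
      rw [hqdist]
      exact hS a ha b hb' hab
  -- maximal separated set
  obtain ⟨S, hSmem, hSmax⟩ := Finset.exists_max_image
    ((Finset.univ : Finset (Finset G)).filter
      (fun S => ∀ s ∈ S, ∀ t ∈ S, s ≠ t → (1/2:ℝ) < ‖p s - p t‖)) Finset.card
    ⟨∅, by simp⟩
  have hSsep : ∀ s ∈ S, ∀ t ∈ S, s ≠ t → (1/2:ℝ) < ‖p s - p t‖ :=
    (Finset.mem_filter.mp hSmem).2
  have hcov : ∀ x : G, ∃ s ∈ S, ‖p x - p s‖ ≤ 1/2 := by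
    intro x
    by_contra hcon
    push_neg at hcon
    have hxS : x ∉ S := by
      intro hx
      have := hcon x hx
      simp at this
      linarith
    have hS' : ∀ s ∈ insert x S, ∀ t ∈ insert x S, s ≠ t → (1/2:ℝ) < ‖p s - p t‖ := by
      intro a ha b hb hab
      rcases Finset.mem_insert.mp ha with rfl | ha'
      · rcases Finset.mem_insert.mp hb with rfl | hb'
        · exact absurd rfl hab
        · exact hcon b hb'
      · rcases Finset.mem_insert.mp hb with rfl | hb'
        · rw [norm_sub_rev]; exact hcon a ha'
        · exact hSsep a ha' b hb' hab
    have hmem' : insert x S ∈ (Finset.univ : Finset (Finset G)).filter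
        (fun S => ∀ s ∈ S, ∀ t ∈ S, s ≠ t → (1/2:ℝ) < ‖p s - p t‖) :=
      Finset.mem_filter.mpr ⟨Finset.mem_univ _, hS'⟩
    have := hSmax _ hmem'
    rw [Finset.card_insert_of_notMem hxS] at this
    omega
  -- pigeonhole
  set X : G → Finset G := fun t => Finset.univ.filter (fun x => ‖p x - p t‖ ≤ 1/2) with hX
  have hSne : S.Nonempty := by
    obtain ⟨t, ht, _⟩ := hcov 1
    exact ⟨t, ht⟩
  obtain ⟨s, hsS, hsmax⟩ := Finset.exists_max_image S (fun t => (X t).card) hSne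
  have hcount : n ≤ 25 ^ k * (X s).card := by
    have hunion : (Finset.univ : Finset G) ⊆ S.biUnion X := by
      intro x _
      obtain ⟨t, ht, hxt⟩ := hcov x
      exact Finset.mem_biUnion.mpr ⟨t, ht, Finset.mem_filter.mpr ⟨Finset.mem_univ _, hxt⟩⟩
    calc n = (Finset.univ : Finset G).card := by rw [hn, Finset.card_univ]
    _ ≤ (S.biUnion X).card := Finset.card_le_card hunion
    _ ≤ ∑ t ∈ S, (X t).card := Finset.card_biUnion_le
    _ ≤ ∑ _t ∈ S, (X s).card := Finset.sum_le_sum (fun t ht => hsmax t ht)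
    _ = S.card * (X s).card := by rw [Finset.sum_const, smul_eq_mul]
    _ ≤ 25 ^ k * (X s).card := Nat.mul_le_mul_right _ (hsepbound S hSsep)
  have hZprop : ∀ x ∈ X s, ‖p (s⁻¹ * x) - p 1‖ ≤ 1/2 := by
    intro x hx
    have hxs := (Finset.mem_filter.mp hx).2
    have h0 : p (1 : G) = p (s⁻¹ * s) := by rw [inv_mul_cancel]
    rw [h0, hdistinv]
    exact hxs
  refine ⟨(X s).image (fun x => gg * (s⁻¹ * x)), ?_, ?_⟩
  · intro y1 hy1 y2 hy2 y3 hy3 heq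
    obtain ⟨x1, hx1, rfl⟩ := Finset.mem_image.mp hy1
    obtain ⟨x2, hx2, rfl⟩ := Finset.mem_image.mp hy2
    obtain ⟨x3, hx3, rfl⟩ := Finset.mem_image.mp hy3
    have h' : (s⁻¹ * x1) * gg * (s⁻¹ * x2) = s⁻¹ * x3 := by
      apply mul_left_cancel (a := gg)
      calc gg * ((s⁻¹ * x1) * gg * (s⁻¹ * x2)) = (gg * (s⁻¹ * x1)) * (gg * (s⁻¹ * x2)) := by group
      _ = gg * (s⁻¹ * x3) := heq
    exact hkey _ _ _ (hZprop x1 hx1) (hZprop x2 hx2) (hZprop x3 hx3) h'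
  · have hcardY : ((X s).image (fun x => gg * (s⁻¹ * x))).card = (X s).card := by
      apply Finset.card_image_of_injective
      intro a b hab
      simpa using hab
    rw [hcardY]
    have hcast : (n : ℝ) ≤ 25 ^ k * ((X s).card : ℝ) := by exact_mod_cast hcount
    have h25 : (0:ℝ) < 25 ^ k := by positivity
    rw [div_pow, one_pow, div_mul_eq_mul_div, one_mul, div_le_iff₀ h25]
    rw [hn] at hcast ⊢
    linarith
end

section
/- Let G be a finite simple group of order n that is not cyclic (equivalently, a nonabelian finite simple group). Then every nontrivial complex representation of G has dimension at least √(log n)/2, where log denotes the natural logarithm; equivalently, if G has a nontrivial complex representation of dimension k, then n ≤ 25^{k²}. -/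
open MeasureTheory Metric in
lemma packing_lemma {E : Type*} [NormedAddCommGroup E] [NormedSpace ℝ E]
    [FiniteDimensional ℝ E]
    (s : Finset E) (hb : ∀ x ∈ s, ‖x‖ ≤ 1)
    (hsep : ∀ x ∈ s, ∀ y ∈ s, x ≠ y → (1:ℝ)/2 ≤ ‖x - y‖) :
    (s.card : ℝ) ≤ 5 ^ (Module.finrank ℝ E) := by
  borelize E
  set D := Module.finrank ℝ E with hD
  set μ : Measure E := (Module.Basis.ofVectorSpace ℝ E).addHaar with hμ
  have hdisj : Set.PairwiseDisjoint (s : Set E) (fun x => ball x (1/4)) := by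
    intro x hx y hy hxy
    apply ball_disjoint_ball
    have := hsep x hx y hy hxy
    rw [dist_eq_norm]; linarith
  have hsub : ∀ x ∈ s, ball x (1/4) ⊆ ball (0:E) (5/4) := by
    intro x hx y hy
    have h1 : dist y x < 1/4 := mem_ball.mp hy
    have h2 := hb x hx
    have h3 : dist x 0 ≤ 1 := by rwa [dist_zero_right]
    have : dist y 0 < 5/4 := by
      calc dist y 0 ≤ dist y x + dist x 0 := dist_triangle _ _ _
        _ < 5/4 := by linarith
    exact mem_ball.mpr this
  have hUnion : (⋃ x ∈ s, ball x (1/4)) ⊆ ball (0:E) (5/4) := Set.iUnion₂_subset hsub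
  have hmeas : μ (⋃ x ∈ s, ball x (1/4))
      = (s.card : ENNReal) * (ENNReal.ofReal ((1/4:ℝ) ^ D) * μ (ball 0 1)) := by
    rw [measure_biUnion_finset hdisj (fun x _ => measurableSet_ball)]
    simp_rw [Measure.addHaar_ball_of_pos μ _ (by norm_num : (0:ℝ) < 1/4)]
    rw [Finset.sum_const, nsmul_eq_mul]
  have hle : (s.card : ENNReal) * ENNReal.ofReal ((1/4:ℝ)^D) * μ (ball 0 1)
      ≤ ENNReal.ofReal ((5/4:ℝ)^D) * μ (ball 0 1) := by
    rw [mul_assoc, ← hmeas, ← Measure.addHaar_ball_of_pos μ (0:E) (by norm_num : (0:ℝ) < 5/4)]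
    exact measure_mono hUnion
  have hpos : μ (ball (0:E) 1) ≠ 0 := (measure_ball_pos μ 0 one_pos).ne'
  have htop : μ (ball (0:E) 1) ≠ ⊤ := measure_ball_lt_top.ne
  have hle2 : (s.card : ENNReal) * ENNReal.ofReal ((1/4:ℝ)^D) ≤ ENNReal.ofReal ((5/4:ℝ)^D) :=
    (ENNReal.mul_le_mul_iff_left hpos htop).mp hle
  have hle3 : ((s.card : ℝ) * (1/4:ℝ)^D : ℝ) ≤ ((5/4:ℝ)^D) := by
    rw [← ENNReal.ofReal_le_ofReal_iff (by positivity), ENNReal.ofReal_mul (by positivity)]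
    rwa [ENNReal.ofReal_natCast]
  have h4 : (0:ℝ) < (1/4:ℝ)^D := by positivity
  calc (s.card : ℝ) = (s.card * (1/4:ℝ)^D) / (1/4:ℝ)^D := by field_simp
    _ ≤ ((5/4:ℝ)^D) / ((1/4:ℝ)^D) := by gcongr
    _ = 5 ^ D := by rw [← div_pow]; norm_num

open scoped Matrix.Norms.L2Operator ComplexOrder MatrixOrder in
/-- Theorem 4.7 (Gowers, Quasirandom Groups): every nontrivial complex
representation of a non-cyclic finite simple group of order `n` has dimension
at least `√(log n) / 2`. -/
theorem simple_group_min_rep_dimension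
    (G : Type) [Group G] [Fintype G] [IsSimpleGroup G] (hnc : ¬ IsCyclic G)
    (d : ℕ) (ρ : G →* Matrix.GeneralLinearGroup (Fin d) ℂ)
    (hnt : ∃ g, ρ g ≠ 1) :
    Real.sqrt (Real.log (Fintype.card G)) / 2 ≤ (d : ℝ) := by
  classical
  let ρm : G →* Matrix (Fin d) (Fin d) ℂ := (Units.coeHom _).comp ρ
  -- faithfulness
  have hker : ∀ g : G, ρm g = 1 → g = 1 := by
    intro g hg
    have hKbot : ρ.ker = ⊥ := by
      rcases IsSimpleGroup.eq_bot_or_eq_top_of_normal ρ.ker inferInstance with h | h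
      · exact h
      · exfalso
        obtain ⟨g', hg'⟩ := hnt
        exact hg' (MonoidHom.mem_ker.mp (h ▸ Subgroup.mem_top g'))
    have : g ∈ ρ.ker := MonoidHom.mem_ker.mpr (Units.ext hg)
    rwa [hKbot, Subgroup.mem_bot] at this
  -- averaged positive matrix
  set P : Matrix (Fin d) (Fin d) ℂ := ∑ g : G, star (ρm g) * ρm g with hPdef
  have hPinv : ∀ g : G, star (ρm g) * P * ρm g = P := by
    intro g
    have h1 : star (ρm g) * P * ρm g = ∑ h : G, star (ρm (h * g)) * ρm (h * g) := by
      rw [hPdef, Finset.mul_sum, Finset.sum_mul]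
      exact Finset.sum_congr rfl fun h _ => by
        simp only [map_mul, star_mul, mul_assoc]
    rw [h1]
    exact Fintype.sum_equiv (Equiv.mulRight g) _ _ (fun h => rfl)
  have hP : P.PosDef := by
    have h1 : P = 1 + ∑ g ∈ Finset.univ.erase 1, star (ρm g) * ρm g := by
      rw [hPdef, ← Finset.add_sum_erase _ _ (Finset.mem_univ (1:G))]
      simp
    rw [h1]
    refine Matrix.PosDef.add_posSemidef Matrix.PosDef.one ?_
    refine Finset.sum_induction _ _ (fun a b ha hb => ha.add hb) Matrix.PosSemidef.zero ?_
    intro g _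
    simpa [Matrix.star_eq_conjTranspose] using Matrix.posSemidef_conjTranspose_mul_self (ρm g)
  set S : Matrix (Fin d) (Fin d) ℂ := CFC.sqrt P with hSdef
  have hS2 : S * S = P := CFC.sqrt_mul_sqrt_self P hP.posSemidef.nonneg
  have hSh : star S = S := by
    rw [Matrix.star_eq_conjTranspose]; exact (Matrix.nonneg_iff_posSemidef.mp (CFC.sqrt_nonneg P)).1
  have hSdet : IsUnit S.det := by
    have h1 : S.det * S.det = P.det := by rw [← Matrix.det_mul, hS2]
    have h2 : P.det ≠ 0 := ne_of_gt hP.det_pos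
    refine isUnit_iff_ne_zero.mpr fun h0 => h2 ?_
    rw [← h1, h0, mul_zero]
  have hSS' : S * S⁻¹ = 1 := Matrix.mul_nonsing_inv S hSdet
  have hS'S : S⁻¹ * S = 1 := Matrix.nonsing_inv_mul S hSdet
  have hS'h : star S⁻¹ = S⁻¹ := by
    rw [Matrix.star_eq_conjTranspose, Matrix.conjTranspose_nonsing_inv,
      ← Matrix.star_eq_conjTranspose, hSh]
  -- the unitarized representation
  set π : G → Matrix (Fin d) (Fin d) ℂ := fun g => S * ρm g * S⁻¹ with hπdef
  have hπone : π 1 = 1 := by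
    show S * ρm 1 * S⁻¹ = 1
    rw [map_one, mul_one, hSS']
  have hπmul : ∀ g h : G, π (g * h) = π g * π h := by
    intro g h
    show S * ρm (g * h) * S⁻¹ = (S * ρm g * S⁻¹) * (S * ρm h * S⁻¹)
    rw [map_mul]
    simp only [mul_assoc]
    rw [← mul_assoc S⁻¹ S, hS'S, one_mul]
  have hπu : ∀ g, π g ∈ unitary (Matrix (Fin d) (Fin d) ℂ) := by
    intro g
    rw [Unitary.mem_iff]
    have hstar : star (π g) = S⁻¹ * (star (ρm g) * S) := by
      show star (S * ρm g * S⁻¹) = _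
      simp only [star_mul, hS'h, hSh, mul_assoc]
    have h1 : star (π g) * π g = 1 := by
      rw [hstar]
      show S⁻¹ * (star (ρm g) * S) * (S * ρm g * S⁻¹) = 1
      have e : S⁻¹ * (star (ρm g) * S) * (S * ρm g * S⁻¹)
          = S⁻¹ * (star (ρm g) * (S * S) * ρm g) * S⁻¹ := by
        simp only [mul_assoc]
      rw [e, hS2, hPinv g, ← hS2]
      show S⁻¹ * (S * S) * S⁻¹ = 1
      rw [← mul_assoc S⁻¹ S S, hS'S, one_mul, hSS']
    exact ⟨h1, mul_eq_one_comm.mp h1⟩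
  have hπinj : ∀ g, π g = 1 → g = 1 := by
    intro g hg
    apply hker
    have h1 : ρm g = S⁻¹ * π g * S := by
      show ρm g = S⁻¹ * (S * ρm g * S⁻¹) * S
      simp only [mul_assoc]
      rw [hS'S, mul_one, ← mul_assoc S⁻¹ S, hS'S, one_mul]
    rw [h1, hg, mul_one, hS'S]
  have hπinj2 : Function.Injective π := by
    intro a b hab
    have h1 : π (a * b⁻¹) = 1 := by
      rw [hπmul, hab, ← hπmul, mul_inv_cancel, hπone]
    exact mul_inv_eq_one.mp (hπinj _ h1)
  -- nontriviality facts
  obtain ⟨g₁, hg₁⟩ := exists_ne (1 : G)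
  have hcomm : ¬ (∀ a b : G, a * b = b * a) := by
    intro h
    letI : CommGroup G := { ‹Group G› with mul_comm := h }
    exact hnc IsSimpleGroup.isCyclic
  -- separation
  have hsep : ∀ g : G, g ≠ 1 → (1:ℝ)/2 ≤ ‖π g - 1‖ := by
    by_contra hcon
    push_neg at hcon
    obtain ⟨gw, hgw, hgwlt⟩ := hcon
    obtain ⟨g₀, hg₀mem, hg₀min⟩ := Finset.exists_min_image (Finset.univ.erase 1)
      (fun g => ‖π g - 1‖) ⟨gw, by simp [hgw]⟩
    have hg₀ne : g₀ ≠ 1 := (Finset.mem_erase.mp hg₀mem).1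
    set δ := ‖π g₀ - 1‖ with hδ
    have hδlt : δ < 1/2 := lt_of_le_of_lt (hg₀min gw (by simp [hgw])) hgwlt
    have hδpos : 0 < δ := by
      rw [hδ]
      rw [norm_sub_pos_iff]
      exact fun h => hg₀ne (hπinj _ h)
    have hconjnorm : ∀ h : G, ‖π (h * g₀ * h⁻¹) - 1‖ = δ := by
      intro h
      have e1 : π h * (π g₀ - 1) * π h⁻¹ = π (h * g₀ * h⁻¹) - 1 := by
        rw [mul_sub, sub_mul, mul_one]
        simp only [← hπmul]
        rw [mul_inv_cancel, hπone]
      rw [← e1, CStarRing.norm_mul_mem_unitary _ (hπu h⁻¹),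
        CStarRing.norm_mem_unitary_mul _ (hπu h)]
    have hcommbound : ∀ a b : G,
        ‖π (a * b * a⁻¹ * b⁻¹) - 1‖ ≤ 2 * ‖π a - 1‖ * ‖π b - 1‖ := by
      intro a b
      have h2 : a * b * a⁻¹ * b⁻¹ = a * b * (a⁻¹ * b⁻¹) := by group
      have h3 : b * a * (a⁻¹ * b⁻¹) = 1 := by group
      have e1 : (π a * π b - π b * π a) * (π a⁻¹ * π b⁻¹) = π (a * b * a⁻¹ * b⁻¹) - 1 := by
        rw [sub_mul]
        simp only [← hπmul]
        rw [h3, hπone, ← h2]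
      have e2 : π a * π b - π b * π a = (π a - 1) * (π b - 1) - (π b - 1) * (π a - 1) := by
        noncomm_ring
      have e3 : π a⁻¹ * π b⁻¹ ∈ unitary (Matrix (Fin d) (Fin d) ℂ) :=
        mul_mem (hπu a⁻¹) (hπu b⁻¹)
      calc ‖π (a * b * a⁻¹ * b⁻¹) - 1‖ = ‖π a * π b - π b * π a‖ := by
            rw [← e1, CStarRing.norm_mul_mem_unitary _ e3]
        _ ≤ ‖(π a - 1) * (π b - 1)‖ + ‖(π b - 1) * (π a - 1)‖ := by
            rw [e2]; exact norm_sub_le _ _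
        _ ≤ ‖π a - 1‖ * ‖π b - 1‖ + ‖π b - 1‖ * ‖π a - 1‖ :=
            add_le_add (norm_mul_le _ _) (norm_mul_le _ _)
        _ = 2 * ‖π a - 1‖ * ‖π b - 1‖ := by ring
    have hcommute : ∀ h : G, (h * g₀ * h⁻¹) * g₀ = g₀ * (h * g₀ * h⁻¹) := by
      intro h
      by_contra hne
      set c := h * g₀ * h⁻¹ with hc
      have hz : c * g₀ * c⁻¹ * g₀⁻¹ ≠ 1 := by
        intro h1
        exact hne (commutatorElement_eq_one_iff_commute.mp
          (by rw [commutatorElement_def]; exact h1))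
      have hmem : c * g₀ * c⁻¹ * g₀⁻¹ ∈ Finset.univ.erase 1 := by simp [hz]
      have hge := hg₀min _ hmem
      have hle := hcommbound c g₀
      rw [hconjnorm h] at hle
      nlinarith
    have hN : Subgroup.normalClosure {g₀} = ⊤ := by
      rcases IsSimpleGroup.eq_bot_or_eq_top_of_normal (Subgroup.normalClosure {g₀})
        inferInstance with h | h
      · exfalso
        apply hg₀ne
        have hmem : g₀ ∈ Subgroup.normalClosure {g₀} :=
          Subgroup.subset_normalClosure (Set.mem_singleton _)
        rw [h] at hmem
        exact Subgroup.mem_bot.mp hmem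
      · exact h
    have hcen : Subgroup.normalClosure {g₀} ≤ Subgroup.centralizer {g₀} := by
      show Subgroup.closure (Group.conjugatesOfSet {g₀}) ≤ _
      rw [Subgroup.closure_le]
      intro x hx
      rw [SetLike.mem_coe, Subgroup.mem_centralizer_iff]
      intro y hy
      rw [Set.mem_singleton_iff] at hy; subst hy
      rcases Group.mem_conjugatesOfSet_iff.mp hx with ⟨a, ha, hconj⟩
      rw [Set.mem_singleton_iff] at ha; subst ha
      rcases isConj_iff.mp hconj with ⟨h, rfl⟩
      exact (hcommute h).symm
    have hcenter : g₀ ∈ Subgroup.center G := by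
      rw [Subgroup.mem_center_iff]
      intro y
      have hy : y ∈ Subgroup.centralizer {g₀} := hcen (hN ▸ Subgroup.mem_top y)
      exact (Subgroup.mem_centralizer_iff.mp hy g₀ (Set.mem_singleton _)).symm
    have hcentop : Subgroup.center G = ⊤ := by
      rcases IsSimpleGroup.eq_bot_or_eq_top_of_normal (Subgroup.center G)
        inferInstance with h | h
      · exfalso; apply hg₀ne; rw [h] at hcenter; exact Subgroup.mem_bot.mp hcenter
      · exact h
    apply hcomm
    intro a b
    exact Subgroup.mem_center_iff.mp (hcentop ▸ Subgroup.mem_top b) a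
  -- nontriviality of the matrix algebra
  haveI hMnt : Nontrivial (Matrix (Fin d) (Fin d) ℂ) := by
    rcases subsingleton_or_nontrivial (Matrix (Fin d) (Fin d) ℂ) with h | h
    · exact absurd (hπinj g₁ (Subsingleton.elim _ _)) hg₁
    · exact h
  -- the packing
  set s : Finset (Matrix (Fin d) (Fin d) ℂ) := Finset.univ.image π with hsdef
  have hcard : s.card = Fintype.card G := by
    rw [hsdef, Finset.card_image_of_injective _ hπinj2, Finset.card_univ]
  have hb : ∀ x ∈ s, ‖x‖ ≤ 1 := by
    intro x hx
    rcases Finset.mem_image.mp hx with ⟨g, _, rfl⟩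
    exact le_of_eq (CStarRing.norm_of_mem_unitary (hπu g))
  have hsep2 : ∀ x ∈ s, ∀ y ∈ s, x ≠ y → (1:ℝ)/2 ≤ ‖x - y‖ := by
    intro x hx y hy hxy
    rcases Finset.mem_image.mp hx with ⟨a, _, rfl⟩
    rcases Finset.mem_image.mp hy with ⟨b, _, rfl⟩
    have hab : a * b⁻¹ ≠ 1 := by
      intro h; exact hxy (by rw [mul_inv_eq_one.mp h])
    have e1 : (π (a * b⁻¹) - 1) * π b = π a - π b := by
      rw [sub_mul, one_mul, ← hπmul, inv_mul_cancel_right]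
    rw [← e1, CStarRing.norm_mul_mem_unitary _ (hπu b)]
    exact hsep _ hab
  have hmain := packing_lemma s hb hsep2
  have hfr : Module.finrank ℝ (Matrix (Fin d) (Fin d) ℂ) = 2 * d ^ 2 := by
    rw [Module.finrank_matrix, Complex.finrank_real_complex, Fintype.card_fin]
    ring
  rw [hcard, hfr] at hmain
  -- final arithmetic
  have hcard1 : (1:ℝ) ≤ (Fintype.card G : ℝ) := by
    exact_mod_cast Fintype.card_pos
  have hlog : Real.log (Fintype.card G) ≤ 4 * (d:ℝ) ^ 2 := by
    have h2 : Real.log (Fintype.card G) ≤ Real.log (5 ^ (2 * d ^ 2)) :=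
      Real.log_le_log (by linarith) hmain
    rw [Real.log_pow] at h2
    have h5 : Real.log 5 ≤ 2 := by
      rw [Real.log_le_iff_le_exp (by norm_num)]
      have he := Real.exp_one_gt_d9
      have h22 : Real.exp 2 = Real.exp 1 * Real.exp 1 := by
        rw [← Real.exp_add]; norm_num
      nlinarith
    calc Real.log (Fintype.card G) ≤ (2 * d ^ 2 : ℕ) * Real.log 5 := h2
      _ ≤ (2 * d ^ 2 : ℕ) * 2 := by
          exact mul_le_mul_of_nonneg_left h5 (by positivity)
      _ = 4 * (d:ℝ) ^ 2 := by push_cast; ring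
  have hsq : Real.sqrt (Real.log (Fintype.card G)) ≤ 2 * d := by
    calc Real.sqrt (Real.log (Fintype.card G)) ≤ Real.sqrt (4 * (d:ℝ) ^ 2) :=
        Real.sqrt_le_sqrt hlog
      _ = 2 * d := by
        rw [show (4:ℝ) * (d:ℝ) ^ 2 = (2 * d) ^ 2 by ring, Real.sqrt_sq (by positivity)]
  linarith
end

section
/- Let G be a finite group and let m be such that for every proper normal subgroup H of G (i.e., every normal subgroup H with H ≠ G), the quotient group G/H is nonabelian and has order at least m. Then every nontrivial complex representation of G has dimension at least √(log m)/2, where log denotes the natural logarithm; equivalently, if G has a nontrivial complex representation of dimension k, then m ≤ 25^{k²}. -/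
open scoped Matrix.Norms.L2Operator ComplexOrder ENNReal
open Matrix MeasureTheory Metric

/-! ### Auxiliary lemmas -/

lemma my_packing {E : Type*} [NormedAddCommGroup E] [NormedSpace ℝ E] [FiniteDimensional ℝ E]
    (s : Finset E) (R δ : ℝ) (hδ : 0 < δ) (hR : 0 < R)
    (hRb : ∀ x ∈ s, ‖x‖ ≤ R)
    (hsep : ∀ x ∈ s, ∀ y ∈ s, x ≠ y → δ ≤ ‖x - y‖) :
    (s.card : ℝ) ≤ ((R + δ/2)/(δ/2)) ^ (Module.finrank ℝ E) := by
  borelize E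
  rcases subsingleton_or_nontrivial E with hE | hE
  · have : s.card ≤ 1 := by
      refine Finset.card_le_one.2 fun a ha b hb => Subsingleton.elim a b
    calc (s.card : ℝ) ≤ 1 := by exact_mod_cast this
      _ ≤ _ := one_le_pow₀ (by rw [le_div_iff₀ (by linarith)]; linarith)
  · set μ : Measure E := Measure.addHaar
    have hd2 : (0:ℝ) < δ/2 := by linarith
    have hdisj : (s : Set E).PairwiseDisjoint (fun x => ball x (δ/2)) := by
      intro x hx y hy hxy
      refine Set.disjoint_left.2 fun z hzx hzy => ?_
      have := hsep x hx y hy hxy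
      have h1 : dist x y < δ := by
        calc dist x y ≤ dist x z + dist z y := dist_triangle _ _ _
          _ < δ/2 + δ/2 := by
              rw [dist_comm x z]
              exact add_lt_add (mem_ball.1 hzx) (by simpa [dist_comm] using mem_ball.1 hzy)
          _ = δ := by ring
      rw [dist_eq_norm] at h1
      exact absurd h1 (not_lt.2 this)
    have hsub : (⋃ x ∈ s, ball x (δ/2)) ⊆ ball 0 (R + δ/2) := by
      intro z hz
      simp only [Set.mem_iUnion] at hz
      obtain ⟨x, hx, hzx⟩ := hz
      rw [mem_ball, dist_zero_right] at *
      calc ‖z‖ ≤ ‖z - x‖ + ‖x‖ := by simpa using norm_add_le (z - x) x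
        _ < δ/2 + R := add_lt_add_of_lt_of_le (by rw [← dist_eq_norm]; exact mem_ball.1 hzx)
            (hRb x hx)
        _ = R + δ/2 := by ring
    have hmeas : ∀ x : E, μ (ball x (δ/2))
        = ENNReal.ofReal ((δ/2)^(Module.finrank ℝ E)) * μ (ball 0 1) := by
      intro x; rw [Measure.addHaar_ball μ x hd2.le]
    have key : (s.card : ℝ≥0∞) * (ENNReal.ofReal ((δ/2)^(Module.finrank ℝ E)) * μ (ball 0 1))
        ≤ ENNReal.ofReal ((R + δ/2)^(Module.finrank ℝ E)) * μ (ball 0 1) := by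
      calc (s.card : ℝ≥0∞) * (ENNReal.ofReal ((δ/2)^(Module.finrank ℝ E)) * μ (ball 0 1))
          = ∑ x ∈ s, μ (ball x (δ/2)) := by
            rw [Finset.sum_congr rfl fun x _ => hmeas x]; simp [Finset.sum_const, mul_comm]
        _ = μ (⋃ x ∈ s, ball x (δ/2)) :=
            (measure_biUnion_finset hdisj (fun x _ => measurableSet_ball)).symm
        _ ≤ μ (ball 0 (R + δ/2)) := measure_mono hsub
        _ = _ := Measure.addHaar_ball μ 0 (by linarith)
    have hball0 : μ (ball 0 1) ≠ 0 := (measure_ball_pos μ 0 one_pos).ne'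
    have hballtop : μ (ball 0 1) ≠ ⊤ := measure_ball_lt_top.ne
    have key2 : (s.card : ℝ≥0∞) * ENNReal.ofReal ((δ/2)^(Module.finrank ℝ E))
        ≤ ENNReal.ofReal ((R + δ/2)^(Module.finrank ℝ E)) := by
      rw [← ENNReal.mul_le_mul_iff_left hball0 hballtop, mul_assoc]
      exact key
    have hpow : (0:ℝ) < (δ/2)^(Module.finrank ℝ E) := pow_pos hd2 _
    have := (ENNReal.le_div_iff_mul_le
      (Or.inl (by simp [hpow.ne', ENNReal.ofReal_eq_zero, not_le, hpow]))
      (Or.inl ENNReal.ofReal_ne_top)).2 key2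
    rw [← ENNReal.ofReal_div_of_pos hpow] at this
    have hfin : (s.card : ℝ≥0∞)
        ≤ ENNReal.ofReal (((R + δ/2)^(Module.finrank ℝ E)) / ((δ/2)^(Module.finrank ℝ E))) := this
    have := ENNReal.toReal_le_toReal (by simp) ENNReal.ofReal_ne_top |>.2 hfin
    rw [ENNReal.toReal_natCast, ENNReal.toReal_ofReal (by positivity)] at this
    calc (s.card:ℝ) ≤ ((R + δ/2)^(Module.finrank ℝ E)) / ((δ/2)^(Module.finrank ℝ E)) := this
      _ = ((R + δ/2)/(δ/2)) ^ (Module.finrank ℝ E) := (div_pow _ _ _).symm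

lemma my_eq_one_of_powers_close {R : Type*} [NormedRing R] [NormedAlgebra ℝ R] [CompleteSpace R]
    {C : R} {c : ℝ} (hc : c < 1) {N : ℕ} (hN : 0 < N) (hCN : C ^ N = 1)
    (hbound : ∀ n : ℕ, ‖1 - C ^ n‖ ≤ c) : C = 1 := by
  set S : R := ∑ n ∈ Finset.range N, C ^ n with hS
  set D : R := (N : ℝ)⁻¹ • S with hD
  have hNne : (N : ℝ) ≠ 0 := Nat.cast_ne_zero.2 hN.ne'
  have hone : (1 : R) - D = (N : ℝ)⁻¹ • ∑ n ∈ Finset.range N, ((1 : R) - C ^ n) := by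
    rw [Finset.sum_sub_distrib, smul_sub, Finset.sum_const, Finset.card_range,
      ← Nat.cast_smul_eq_nsmul ℝ, smul_smul, inv_mul_cancel₀ hNne, one_smul]
  have hnorm : ‖(1 : R) - D‖ < 1 := by
    rw [hone]
    calc ‖(N : ℝ)⁻¹ • ∑ n ∈ Finset.range N, ((1:R) - C ^ n)‖
        = |(N:ℝ)⁻¹| * ‖∑ n ∈ Finset.range N, ((1:R) - C ^ n)‖ := by
          rw [norm_smul, Real.norm_eq_abs]
      _ ≤ (N:ℝ)⁻¹ * (N * c) := by
          rw [abs_of_nonneg (by positivity)]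
          refine mul_le_mul_of_nonneg_left ?_ (by positivity)
          calc ‖∑ n ∈ Finset.range N, ((1:R) - C ^ n)‖ ≤ ∑ n ∈ Finset.range N, ‖(1:R) - C ^ n‖ :=
              norm_sum_le _ _
            _ ≤ ∑ n ∈ Finset.range N, c := Finset.sum_le_sum fun n _ => hbound n
            _ = N * c := by rw [Finset.sum_const, Finset.card_range, nsmul_eq_mul]
      _ = c := by field_simp
      _ < 1 := hc
  have hunit : IsUnit D := by
    have := isUnit_one_sub_of_norm_lt_one hnorm
    simpa using this
  have hzero : (C - 1) * D = 0 := by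
    rw [hD, mul_smul_comm, hS, mul_geom_sum, hCN, sub_self, smul_zero]
  obtain ⟨u, hu⟩ := hunit
  have : (C - 1) = 0 := by
    have h1 : (C - 1) * (D * (u⁻¹ : Rˣ)) = 0 := by rw [← mul_assoc, hzero, zero_mul]
    rwa [← hu, Units.mul_inv, mul_one] at h1
  exact sub_eq_zero.1 this

section cstar
variable {R : Type*} [NormedRing R] [StarRing R] [CStarRing R] [NormedAlgebra ℝ R]
  [CompleteSpace R]

omit [NormedAlgebra ℝ R] [CompleteSpace R] in
lemma my_norm_one_sub_of_comm (u : unitary R) (v : unitary R) :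
    ‖(1 : R) - (u * v * u⁻¹ * v⁻¹ : unitary R)‖ = ‖(u : R) * v - (v : R) * u‖ := by
  calc ‖(1 : R) - (u * v * u⁻¹ * v⁻¹ : unitary R)‖
      = ‖((1 : R) - (u * v * u⁻¹ * v⁻¹ : unitary R)) * v * u‖ := by
        rw [CStarRing.norm_mul_coe_unitary, CStarRing.norm_mul_coe_unitary]
    _ = ‖(v : R) * u - (u : R) * v‖ := by
        have h2 : ((u * v * u⁻¹ * v⁻¹) * v * u : unitary R) = u * v := by group
        have h3 : ((1 : R) - (u * v * u⁻¹ * v⁻¹ : unitary R)) * v * u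
            = ((v * u : unitary R) : R) - ((u * v * u⁻¹ * v⁻¹) * v * u : unitary R) := by
          push_cast
          noncomm_ring
        rw [h3, h2]
        push_cast
        noncomm_ring
    _ = ‖(u : R) * v - (v : R) * u‖ := norm_sub_rev _ _

omit [StarRing R] [CStarRing R] [NormedAlgebra ℝ R] [CompleteSpace R] in
lemma my_norm_mul_sub_mul_le (x y : R) :
    ‖x * y - y * x‖ ≤ 2 * (‖1 - x‖ * ‖1 - y‖) := by
  have h : x * y - y * x = (1 - x) * (1 - y) - (1 - y) * (1 - x) := by noncomm_ring
  rw [h]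
  calc ‖(1 - x) * (1 - y) - (1 - y) * (1 - x)‖
      ≤ ‖(1 - x) * (1 - y)‖ + ‖(1 - y) * (1 - x)‖ := norm_sub_le _ _
    _ ≤ ‖1 - x‖ * ‖1 - y‖ + ‖1 - y‖ * ‖1 - x‖ := add_le_add (norm_mul_le _ _) (norm_mul_le _ _)
    _ = 2 * (‖1 - x‖ * ‖1 - y‖) := by ring

omit [NormedAlgebra ℝ R] [CompleteSpace R] in
lemma my_norm_mul_sub_mul_le' (u : unitary R) (y : R) :
    ‖(u : R) * y - y * u‖ ≤ 2 * ‖1 - y‖ := by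
  have h : (u : R) * y - y * u = (u : R) * (y - 1) - (y - 1) * u := by noncomm_ring
  rw [h]
  calc ‖(u : R) * (y - 1) - (y - 1) * (u : R)‖
      ≤ ‖(u : R) * (y - 1)‖ + ‖(y - 1) * (u : R)‖ := norm_sub_le _ _
    _ = ‖y - 1‖ + ‖y - 1‖ := by
        rw [CStarRing.norm_coe_unitary_mul, CStarRing.norm_mul_coe_unitary]
    _ = 2 * ‖1 - y‖ := by rw [norm_sub_rev]; ring

omit [NormedAlgebra ℝ R] [CompleteSpace R] in
lemma my_norm_conj (k u : unitary R) :
    ‖(1 : R) - (k * u * k⁻¹ : unitary R)‖ = ‖(1 : R) - (u : R)‖ := by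
  have hkk : (k : R) * ((k⁻¹ : unitary R) : R) = 1 := by
    rw [← MulMemClass.coe_mul, mul_inv_cancel]
    simp
  have h1 : (1 : R) - (k * u * k⁻¹ : unitary R)
      = (k : R) * (((1 : R) - (u : R)) * ((k⁻¹ : unitary R) : R)) := by
    have h2 : (k : R) * (((1 : R) - (u : R)) * ((k⁻¹ : unitary R) : R))
        = (k : R) * ((k⁻¹ : unitary R) : R)
          - (k : R) * (u : R) * ((k⁻¹ : unitary R) : R) := by noncomm_ring
    rw [h2, hkk]
    push_cast
    noncomm_ring
  rw [h1, CStarRing.norm_coe_unitary_mul, CStarRing.norm_mul_coe_unitary]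

lemma my_commute_of_close (K : Subgroup (unitary R)) (hK : (K : Set (unitary R)).Finite)
    {A B : unitary R} (hA : A ∈ K) (hB : B ∈ K)
    (hA2 : ‖(1 : R) - A‖ < 1/2) (hB2 : ‖(1 : R) - B‖ < 1/2) : A * B = B * A := by
  by_contra hAB
  classical
  set V : Finset (unitary R × unitary R) :=
    ((hK.prod hK).toFinset).filter
      (fun p => ‖(1 : R) - p.1‖ < 1/2 ∧ ‖(1 : R) - p.2‖ < 1/2 ∧ p.1 * p.2 ≠ p.2 * p.1) with hV
  have hmemV : ∀ p : unitary R × unitary R, p ∈ V ↔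
      (p.1 ∈ K ∧ p.2 ∈ K) ∧ ‖(1 : R) - p.1‖ < 1/2 ∧ ‖(1 : R) - p.2‖ < 1/2 ∧
        p.1 * p.2 ≠ p.2 * p.1 := by
    intro p
    rw [hV, Finset.mem_filter, Set.Finite.mem_toFinset, Set.mem_prod]
    tauto
  have hVne : ((A, B) : unitary R × unitary R) ∈ V := (hmemV _).2 ⟨⟨hA, hB⟩, hA2, hB2, hAB⟩
  obtain ⟨p, hpV, hpmin⟩ := V.exists_min_image (fun p => ‖(1 : R) - p.1‖) ⟨_, hVne⟩
  obtain ⟨⟨haK, hbK⟩, ha2, hb2, hab⟩ := (hmemV p).1 hpV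
  set a := p.1
  set b := p.2
  set C : unitary R := a * b * a⁻¹ * b⁻¹ with hC
  have hCK : C ∈ K :=
    K.mul_mem (K.mul_mem (K.mul_mem haK hbK) (K.inv_mem haK)) (K.inv_mem hbK)
  have hCne : C ≠ 1 := by
    intro h
    apply hab
    have h1 : a * b = C * (b * a) := by rw [hC]; group
    rw [h, one_mul] at h1
    exact h1
  have hapos : 0 < ‖(1 : R) - a‖ := by
    rcases eq_or_lt_of_le (norm_nonneg ((1 : R) - a)) with h | h
    · exfalso
      apply hab
      have h0 : (1 : R) - (a : R) = 0 := by rw [← norm_eq_zero]; exact h.symm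
      have ha1 : a = 1 := by
        apply Subtype.coe_injective
        have := sub_eq_zero.1 h0
        simpa using this.symm
      rw [ha1, one_mul, mul_one]
    · exact h
  have hCnorm : ‖(1 : R) - C‖ < ‖(1 : R) - a‖ := by
    calc ‖(1 : R) - C‖ = ‖(a : R) * b - (b : R) * a‖ := my_norm_one_sub_of_comm a b
      _ ≤ 2 * (‖(1 : R) - a‖ * ‖(1 : R) - b‖) := by
          have := my_norm_mul_sub_mul_le (a : R) (b : R)
          convert this using 3
      _ < 2 * (‖(1 : R) - a‖ * (1/2)) := by
          apply mul_lt_mul_of_pos_left _ two_pos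
          exact mul_lt_mul_of_pos_left hb2 hapos
      _ = ‖(1 : R) - a‖ := by ring
  have hC2 : ‖(1 : R) - C‖ < 1/2 := hCnorm.trans ha2
  have hCa : C * a = a * C := by
    by_contra hCa
    have hmem : ((C, a) : unitary R × unitary R) ∈ V := (hmemV _).2 ⟨⟨hCK, haK⟩, hC2, ha2, hCa⟩
    have := hpmin _ hmem
    exact absurd hCnorm (not_lt.2 this)
  have hCb' : a * b * a⁻¹ = C * b := by rw [hC]; group
  have hCn : ∀ n : ℕ, a ^ n * b * (a ^ n)⁻¹ = C ^ n * b := by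
    intro n
    induction n with
    | zero => simp
    | succ n ih =>
      have hac : Commute a C := hCa.symm
      have hcomm : Commute (C ^ n) a := (hac.pow_right n).symm
      calc a ^ (n+1) * b * (a ^ (n+1))⁻¹ = a * (a ^ n * b * (a ^ n)⁻¹) * a⁻¹ := by group
        _ = a * (C ^ n * b) * a⁻¹ := by rw [ih]
        _ = (a * C ^ n) * b * a⁻¹ := by group
        _ = (C ^ n * a) * b * a⁻¹ := by rw [hcomm.eq]
        _ = C ^ n * (a * b * a⁻¹) := by group
        _ = C ^ n * (C * b) := by rw [hCb']
        _ = C ^ (n+1) * b := by rw [pow_succ]; group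
  have hbound : ∀ n : ℕ, ‖(1 : R) - ((C : unitary R) : R) ^ n‖ ≤ 2 * ‖(1 : R) - (b : R)‖ := by
    intro n
    have hcoe : ((C : unitary R) : R) ^ n = ((C ^ n : unitary R) : R) := by
      rw [SubmonoidClass.coe_pow]
    rw [hcoe]
    calc ‖(1 : R) - ((C ^ n : unitary R) : R)‖
        = ‖((1 : R) - ((C ^ n : unitary R) : R)) * b * (a ^ n : unitary R)‖ := by
          rw [CStarRing.norm_mul_coe_unitary, CStarRing.norm_mul_coe_unitary]
      _ = ‖((b * a ^ n : unitary R) : R) - ((C ^ n * b * a ^ n : unitary R) : R)‖ := by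
          congr 1
          push_cast
          noncomm_ring
      _ = ‖((b * a ^ n : unitary R) : R) - ((a ^ n * b : unitary R) : R)‖ := by
          have : (C ^ n * b * a ^ n : unitary R) = a ^ n * b := by
            rw [← hCn n]
            group
          rw [this]
      _ = ‖((a ^ n : unitary R) : R) * b - (b : R) * (a ^ n : unitary R)‖ := by
          rw [norm_sub_rev]
          congr 1
          all_goals (push_cast; noncomm_ring)
      _ ≤ 2 * ‖(1 : R) - (b : R)‖ := my_norm_mul_sub_mul_le' (a ^ n) (b : R)
  haveI : Finite K := hK.to_subtype
  obtain ⟨N, hN, hCN⟩ := isOfFinOrder_iff_pow_eq_one.1 (isOfFinOrder_of_finite (⟨C, hCK⟩ : K))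
  have hCN' : ((C : unitary R) : R) ^ N = 1 := by
    have h1 : C ^ N = 1 := by
      have h2 := congrArg (Subtype.val) hCN
      simpa using h2
    rw [← SubmonoidClass.coe_pow, h1]
    simp
  have hc1 : 2 * ‖(1 : R) - (b : R)‖ < 1 := by linarith
  have := my_eq_one_of_powers_close hc1 hN hCN' hbound
  exact hCne (Subtype.coe_injective (by simpa using this))

end cstar

lemma my_closure_comm {H : Type*} [Group H] (S : Set H)
    (hS : ∀ a ∈ S, ∀ b ∈ S, a * b = b * a) :
    ∀ x ∈ Subgroup.closure S, ∀ y ∈ Subgroup.closure S, x * y = y * x := by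
  have step1 : ∀ a ∈ S, ∀ y ∈ Subgroup.closure S, Commute a y := by
    intro a ha y hy
    induction hy using Subgroup.closure_induction with
    | mem b hb => exact hS a ha b hb
    | one => exact Commute.one_right a
    | mul b c _ _ hb hc => exact hb.mul_right hc
    | inv b _ hb => exact hb.inv_right
  intro x hx y hy
  induction hx using Subgroup.closure_induction with
  | mem b hb => exact step1 b hb y hy
  | one => exact (Commute.one_left y)
  | mul b c _ _ hb hc => exact Commute.mul_left hb hc
  | inv b _ hb => exact Commute.inv_left hb

section setup
variable {G : Type} [Group G] [Fintype G] {d : ℕ}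

namespace MySetup

local notation "Mx" => Matrix (Fin d) (Fin d) ℂ

variable (ρ : G →* Matrix.GeneralLinearGroup (Fin d) ℂ)

noncomputable def P : Mx := ∑ g : G, ((ρ g : Mx))ᴴ * ((ρ g : Mx))

lemma posDef_P : (P ρ).PosDef := by
  classical
  have hsplit : P ρ = ((ρ (1:G) : Mx))ᴴ * ((ρ (1:G) : Mx))
      + ∑ g ∈ Finset.univ.erase (1:G), ((ρ g : Mx))ᴴ * ((ρ g : Mx)) := by
    rw [P, ← Finset.add_sum_erase _ _ (Finset.mem_univ (1:G))]
  have h1 : ((ρ (1:G) : Mx))ᴴ * ((ρ (1:G) : Mx)) = (1 : Mx) := by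
    rw [_root_.map_one]
    simp
  rw [hsplit, h1]
  refine Matrix.PosDef.add_posSemidef Matrix.PosDef.one ?_
  refine Finset.sum_induction _ (fun A => Matrix.PosSemidef A)
    (fun A B hA hB => hA.add hB) Matrix.PosSemidef.zero ?_
  intro g _
  exact Matrix.posSemidef_conjTranspose_mul_self _

open scoped MatrixOrder in
noncomputable def Q : Mx := CFC.sqrt (P ρ)

open scoped MatrixOrder in
lemma Q_herm : (Q ρ)ᴴ = Q ρ := (CFC.sqrt_nonneg (P ρ)).posSemidef.1

open scoped MatrixOrder in
lemma Q_mul_Q : Q ρ * Q ρ = P ρ := CFC.sqrt_mul_sqrt_self (P ρ) (posDef_P ρ).posSemidef.nonneg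

lemma Q_det_ne : (Q ρ).det ≠ 0 := by
  intro h
  have h2 : (P ρ).det = 0 := by rw [← Q_mul_Q ρ, Matrix.det_mul, h, mul_zero]
  exact (posDef_P ρ).det_pos.ne' h2

lemma Q_mul_inv : Q ρ * (Q ρ)⁻¹ = 1 :=
  Matrix.mul_nonsing_inv _ (isUnit_iff_ne_zero.2 (Q_det_ne ρ))

lemma Q_inv_mul : (Q ρ)⁻¹ * Q ρ = 1 :=
  Matrix.nonsing_inv_mul _ (isUnit_iff_ne_zero.2 (Q_det_ne ρ))

lemma Q_inv_herm : ((Q ρ)⁻¹)ᴴ = (Q ρ)⁻¹ := by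
  rw [Matrix.conjTranspose_nonsing_inv, Q_herm]

lemma P_invariant (g : G) : ((ρ g : Mx))ᴴ * P ρ * ((ρ g : Mx)) = P ρ := by
  rw [P, Finset.mul_sum, Finset.sum_mul]
  apply Fintype.sum_equiv (Equiv.mulRight g)
  intro h
  have : (ρ (h * g) : Mx) = (ρ h : Mx) * (ρ g : Mx) := by
    rw [_root_.map_mul]; rfl
  rw [Equiv.coe_mulRight, this, Matrix.conjTranspose_mul]
  noncomm_ring

noncomputable def sig (g : G) : Mx := Q ρ * (ρ g : Mx) * (Q ρ)⁻¹

lemma sig_unitary (g : G) : sig ρ g ∈ unitary Mx := by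
  rw [Unitary.mem_iff]
  have key : star (sig ρ g) * sig ρ g = 1 := by
    have e1 : star (sig ρ g) * sig ρ g
        = (Q ρ)⁻¹ * (((ρ g : Mx))ᴴ * (Q ρ * Q ρ) * (ρ g : Mx)) * (Q ρ)⁻¹ := by
      rw [Matrix.star_eq_conjTranspose, sig, Matrix.conjTranspose_mul, Matrix.conjTranspose_mul,
        Q_inv_herm, Q_herm]
      noncomm_ring
    rw [e1, Q_mul_Q, P_invariant, ← Q_mul_Q]
    calc (Q ρ)⁻¹ * (Q ρ * Q ρ) * (Q ρ)⁻¹ = ((Q ρ)⁻¹ * Q ρ) * (Q ρ * (Q ρ)⁻¹) := by noncomm_ring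
      _ = 1 := by rw [Q_inv_mul, Q_mul_inv, one_mul]
  exact ⟨key, mul_eq_one_comm.1 key⟩

noncomputable def sigma' : G →* unitary Mx where
  toFun g := ⟨sig ρ g, sig_unitary ρ g⟩
  map_one' := by
    apply Subtype.coe_injective
    show sig ρ 1 = 1
    rw [sig, _root_.map_one]
    simpa using Q_mul_inv ρ
  map_mul' g h := by
    apply Subtype.coe_injective
    show sig ρ (g * h) = sig ρ g * sig ρ h
    rw [sig, sig, sig, _root_.map_mul]
    have hc : ((ρ g * ρ h : Matrix.GeneralLinearGroup (Fin d) ℂ) : Mx)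
        = (ρ g : Mx) * (ρ h : Mx) := rfl
    rw [hc]
    calc Q ρ * ((ρ g : Mx) * (ρ h : Mx)) * (Q ρ)⁻¹
        = Q ρ * (ρ g : Mx) * ((Q ρ)⁻¹ * Q ρ) * (ρ h : Mx) * (Q ρ)⁻¹ := by
          rw [Q_inv_mul]; noncomm_ring
      _ = Q ρ * (ρ g : Mx) * (Q ρ)⁻¹ * (Q ρ * (ρ h : Mx) * (Q ρ)⁻¹) := by noncomm_ring

lemma sig_eq_one_iff (g : G) : sigma' ρ g = 1 ↔ ρ g = 1 := by
  constructor
  · intro h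
    have h1 : sig ρ g = 1 := congrArg Subtype.val h
    have h2 : (ρ g : Mx) = 1 := by
      have h3 : (Q ρ)⁻¹ * (sig ρ g) * Q ρ = (ρ g : Mx) := by
        rw [sig]
        calc (Q ρ)⁻¹ * (Q ρ * (ρ g : Mx) * (Q ρ)⁻¹) * Q ρ
            = ((Q ρ)⁻¹ * Q ρ) * (ρ g : Mx) * ((Q ρ)⁻¹ * Q ρ) := by noncomm_ring
          _ = (ρ g : Mx) := by rw [Q_inv_mul]; noncomm_ring
      rw [← h3, h1, mul_one, Q_inv_mul]
    exact Units.ext h2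
  · intro h
    apply Subtype.coe_injective
    show sig ρ g = 1
    rw [sig, h]
    simpa using Q_mul_inv ρ

end MySetup
end setup

/-- Theorem 4.8 (Gowers, Quasirandom Groups): if every quotient of a finite
group `G` by a proper normal subgroup is nonabelian of order at least `m`, then
every nontrivial complex representation of `G` has dimension at least
`√(log m) / 2`. -/
theorem min_rep_dimension_of_no_small_or_abelian_quotient
    (G : Type) [Group G] [Fintype G] (m : ℕ)
    (hquot : ∀ (H : Subgroup G) [H.Normal], H ≠ ⊤ →
      (∃ a b : G ⧸ H, a * b ≠ b * a) ∧ m ≤ Nat.card (G ⧸ H))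
    (d : ℕ) (ρ : G →* Matrix.GeneralLinearGroup (Fin d) ℂ)
    (hnt : ∃ g, ρ g ≠ 1) :
    Real.sqrt (Real.log m) / 2 ≤ (d : ℝ) := by
  classical
  obtain ⟨g₀, hg₀⟩ := hnt
  rcases Nat.eq_zero_or_pos d with hd0 | hdpos
  · exfalso
    apply hg₀
    apply Units.ext
    ext i j
    exact absurd i.2 (by omega)
  -- now d ≥ 1
  haveI hMnt : Nontrivial (Matrix (Fin d) (Fin d) ℂ) := by
    refine nontrivial_of_ne 1 0 fun h => ?_
    have := congrFun (congrFun h ⟨0, hdpos⟩) ⟨0, hdpos⟩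
    simp [Matrix.one_apply] at this
  set σ : G →* unitary (Matrix (Fin d) (Fin d) ℂ) := MySetup.sigma' ρ with hσ
  set K : Subgroup (unitary (Matrix (Fin d) (Fin d) ℂ)) := σ.range with hK
  have hKfin : (K : Set (unitary (Matrix (Fin d) (Fin d) ℂ))).Finite := by
    rw [hK, MonoidHom.coe_range]
    exact Set.finite_range _
  set S : Set (unitary (Matrix (Fin d) (Fin d) ℂ)) :=
    {u | u ∈ K ∧ ‖(1 : Matrix (Fin d) (Fin d) ℂ) - u‖ < 1/2} with hSdef
  set Z : Subgroup (unitary (Matrix (Fin d) (Fin d) ℂ)) := Subgroup.closure S with hZ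
  have hSsubZ : S ⊆ Z := Subgroup.subset_closure
  have hconj : ∀ k ∈ K, ∀ z ∈ Z, k * z * k⁻¹ ∈ Z := by
    intro k hk z hz
    induction hz using Subgroup.closure_induction with
    | mem u hu =>
        apply Subgroup.subset_closure
        exact ⟨K.mul_mem (K.mul_mem hk hu.1) (K.inv_mem hk),
          by rw [my_norm_conj]; exact hu.2⟩
    | one => simpa using Z.one_mem
    | mul a b _ _ iha ihb =>
        have he : k * (a * b) * k⁻¹ = (k * a * k⁻¹) * (k * b * k⁻¹) := by group
        rw [he]; exact Z.mul_mem iha ihb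
    | inv a _ iha =>
        have he : k * a⁻¹ * k⁻¹ = (k * a * k⁻¹)⁻¹ := by group
        rw [he]; exact Z.inv_mem iha
  set T : Subgroup G := Z.comap σ with hT
  haveI hTnorm : T.Normal := by
    constructor
    intro t ht g
    have he : σ (g * t * g⁻¹) = σ g * σ t * (σ g)⁻¹ := by
      rw [_root_.map_mul, _root_.map_mul, _root_.map_inv]
    rw [hT, Subgroup.mem_comap, he]
    exact hconj (σ g) ⟨g, rfl⟩ (σ t) ht
  have hkerT : ρ.ker ≤ T := by
    intro g hg
    have h1 : σ g = 1 := (MySetup.sig_eq_one_iff ρ g).2 (MonoidHom.mem_ker.1 hg)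
    rw [hT, Subgroup.mem_comap, h1]
    exact Z.one_mem
  have hH₀ : ρ.ker ≠ ⊤ := by
    intro h
    exact hg₀ (MonoidHom.mem_ker.1 (h ▸ Subgroup.mem_top g₀))
  have hScomm : ∀ a ∈ S, ∀ b ∈ S, a * b = b * a := fun a ha b hb =>
    my_commute_of_close K hKfin ha.1 hb.1 ha.2 hb.2
  by_cases hTtop : T = ⊤
  · -- quotient by kernel would be abelian: contradiction
    exfalso
    obtain ⟨a, b, hab⟩ := (hquot ρ.ker hH₀).1
    apply hab
    obtain ⟨x, rfl⟩ := QuotientGroup.mk_surjective a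
    obtain ⟨y, rfl⟩ := QuotientGroup.mk_surjective b
    have hmemZ : ∀ g : G, σ g ∈ Z := by
      intro g
      have : g ∈ T := hTtop ▸ Subgroup.mem_top g
      rwa [hT, Subgroup.mem_comap] at this
    have hcomm : σ x * σ y = σ y * σ x :=
      my_closure_comm S hScomm (σ x) (hmemZ x) (σ y) (hmemZ y)
    have h4 : σ (x * y) = σ (y * x) := by rw [_root_.map_mul, _root_.map_mul, hcomm]
    have h5 : σ ((x * y) * (y * x)⁻¹) = 1 := by
      rw [_root_.map_mul, _root_.map_inv, h4, mul_inv_cancel]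
    have h6 : ρ ((x * y) * (y * x)⁻¹) = 1 := (MySetup.sig_eq_one_iff ρ _).1 h5
    show (QuotientGroup.mk x) * (QuotientGroup.mk y : G ⧸ ρ.ker)
        = (QuotientGroup.mk y) * (QuotientGroup.mk x)
    have h7 : ((x * y : G) : G ⧸ ρ.ker) = ((y * x : G) : G ⧸ ρ.ker) := by
      rw [QuotientGroup.eq]
      apply MonoidHom.mem_ker.2
      have h8 : ρ (x * y) = ρ (y * x) := by
        have h9 := h6
        rw [_root_.map_mul, _root_.map_inv] at h9
        exact mul_inv_eq_one.1 h9
      rw [_root_.map_mul, _root_.map_inv, h8, inv_mul_cancel]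
    simpa using h7
  · -- proper quotient: packing bound
    have hm := (hquot T hTtop).2
    haveI : Fintype (G ⧸ T) := Fintype.ofFinite _
    set f : G ⧸ T → Matrix (Fin d) (Fin d) ℂ := fun q => (σ q.out : Matrix (Fin d) (Fin d) ℂ)
      with hf
    have hinj : Function.Injective f := by
      intro q1 q2 h
      have h1 : σ q1.out = σ q2.out := Subtype.coe_injective h
      have h2 : σ (q1.out⁻¹ * q2.out) = 1 := by
        rw [_root_.map_mul, _root_.map_inv, h1, inv_mul_cancel]
      have h3 : q1.out⁻¹ * q2.out ∈ T :=
        hkerT (MonoidHom.mem_ker.2 ((MySetup.sig_eq_one_iff ρ _).1 h2))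
      calc q1 = QuotientGroup.mk q1.out := (QuotientGroup.out_eq' q1).symm
        _ = QuotientGroup.mk q2.out := QuotientGroup.eq.2 h3
        _ = q2 := QuotientGroup.out_eq' q2
    have hsep : ∀ q1 q2 : G ⧸ T, q1 ≠ q2 → 1/2 ≤ ‖f q1 - f q2‖ := by
      intro q1 q2 hne
      by_contra hlt
      rw [not_le] at hlt
      apply hne
      set u : unitary (Matrix (Fin d) (Fin d) ℂ) := (σ q1.out)⁻¹ * σ q2.out with hu
      have hueq : u = σ (q1.out⁻¹ * q2.out) := by rw [_root_.map_mul, _root_.map_inv]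
      have hnorm : ‖(1 : Matrix (Fin d) (Fin d) ℂ) - u‖ = ‖f q1 - f q2‖ := by
        have he : f q1 - f q2
            = ((σ q1.out : Matrix (Fin d) (Fin d) ℂ))
              * ((1 : Matrix (Fin d) (Fin d) ℂ) - u) := by
          have he2 : (σ q1.out) * u = σ q2.out := by rw [hu]; group
          simp only [hf]
          rw [mul_sub, mul_one, ← MulMemClass.coe_mul, he2]
        rw [he, CStarRing.norm_coe_unitary_mul]
      have huS : u ∈ S := ⟨hueq ▸ ⟨_, rfl⟩, by rw [hnorm]; exact hlt⟩
      have huZ : u ∈ Z := hSsubZ huS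
      have h3 : q1.out⁻¹ * q2.out ∈ T := by
        have h4 : σ (q1.out⁻¹ * q2.out) ∈ Z := hueq ▸ huZ
        exact Subgroup.mem_comap.2 h4
      calc q1 = QuotientGroup.mk q1.out := (QuotientGroup.out_eq' q1).symm
        _ = QuotientGroup.mk q2.out := QuotientGroup.eq.2 h3
        _ = q2 := QuotientGroup.out_eq' q2
    set s : Finset (Matrix (Fin d) (Fin d) ℂ) := Finset.univ.image f with hs
    have hcard : (s.card : ℝ) = Nat.card (G ⧸ T) := by
      rw [hs, Finset.card_image_of_injective _ hinj, Finset.card_univ, Nat.card_eq_fintype_card]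
    have hpack := my_packing s 1 (1/2) (by norm_num) one_pos
      (fun x hx => by
        obtain ⟨q, _, rfl⟩ := Finset.mem_image.1 hx
        simp only [hf]
        exact le_of_eq (CStarRing.norm_coe_unitary _))
      (fun x hx y hy hxy => by
        obtain ⟨q1, _, rfl⟩ := Finset.mem_image.1 hx
        obtain ⟨q2, _, rfl⟩ := Finset.mem_image.1 hy
        exact hsep q1 q2 (fun h => hxy (h ▸ rfl)))
    have hfr : Module.finrank ℝ (Matrix (Fin d) (Fin d) ℂ) = d * d * 2 := by
      rw [Module.finrank_matrix]
      simp [Complex.finrank_real_complex]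
    rw [hfr] at hpack
    have hratio : ((1 + (1/2)/2)/((1/2)/2) : ℝ) = 5 := by norm_num
    rw [hratio] at hpack
    have hm5 : (m : ℝ) ≤ 5 ^ (d * d * 2) := by
      calc (m : ℝ) ≤ Nat.card (G ⧸ T) := by exact_mod_cast hm
        _ = s.card := hcard.symm
        _ ≤ 5 ^ (d * d * 2) := hpack
    -- final numeric computation
    have hlog : Real.log m ≤ 4 * (d : ℝ)^2 := by
      rcases Nat.eq_zero_or_pos m with rfl | hm0
      · simpa [Real.log_zero] using by positivity
      · have h1 : Real.log m ≤ Real.log (5 ^ (d * d * 2)) :=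
          Real.log_le_log (by exact_mod_cast hm0) hm5
        rw [Real.log_pow] at h1
        have hlog5 : Real.log 5 ≤ 2 := by
          rw [Real.log_le_iff_le_exp (by norm_num)]
          have h2 : Real.exp 2 = Real.exp 1 ^ 2 := by
            rw [← Real.exp_nat_mul]
            norm_num
          nlinarith [Real.exp_one_gt_d9]
        have hlog5' : 0 ≤ Real.log 5 := Real.log_nonneg (by norm_num)
        calc Real.log m ≤ (d * d * 2 : ℕ) * Real.log 5 := h1
          _ ≤ (d * d * 2 : ℕ) * 2 := by
              apply mul_le_mul_of_nonneg_left hlog5 (by positivity)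
          _ = 4 * (d : ℝ)^2 := by push_cast; ring
    have hsq : Real.sqrt (Real.log m) ≤ 2 * d := by
      have h9 : Real.log m ≤ (2 * (d : ℝ))^2 := by nlinarith
      calc Real.sqrt (Real.log m) ≤ Real.sqrt ((2 * (d : ℝ))^2) := Real.sqrt_le_sqrt h9
        _ = 2 * d := Real.sqrt_sq (by positivity)
    linarith
end
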